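/- arXiv:math/0505612 — 7 statements merged into one kernel-verified Lean document; each statement's English description precedes it below -/
import Mathlib

section
/- Two permutations σ, τ ∈ S_n have the same descent set if and only if they are connected by a chain σ = σ_0, σ_1, ..., σ_k = τ where each σ_{j+1} = s_{i_j} σ_j for some simple transposition s_{i_j} satisfying |σ_j^{-1}(i_j) - σ_j^{-1}(i_j + 1)| > 1. -/
/-- The value of a permutation of `Fin n` at a natural-number position
(0-based); positions outside `[0,n)` are fixed. -/
def pval (n : ℕ) (σ : Equiv.Perm (Fin n)) (i : ℕ) : ℕ :=
  if h : i < n then (σ ⟨i, h⟩ : ℕ) else i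

/-- The simple transposition `s_i` exchanging positions `i` and `i+1` (0-based). -/
def sT (n i : ℕ) (h : i + 1 < n) : Equiv.Perm (Fin n) :=
  Equiv.swap ⟨i, Nat.lt_of_succ_lt h⟩ ⟨i + 1, h⟩

/-- The (0-based) descent set of a permutation: `{i ∈ [0,n-2] : σ(i) > σ(i+1)}`. -/
def Des (n : ℕ) (σ : Equiv.Perm (Fin n)) : Finset ℕ :=
  (Finset.range (n - 1)).filter fun i => pval n σ (i + 1) < pval n σ i

/-- One step of the descent equivalence: `τ = s_i σ` with `|σ⁻¹(i) - σ⁻¹(i+1)| > 1`. -/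
def DStep (n : ℕ) (σ τ : Equiv.Perm (Fin n)) : Prop :=
  ∃ i, ∃ h : i + 1 < n,
    τ = sT n i h * σ ∧ 1 < Nat.dist (pval n σ⁻¹ i) (pval n σ⁻¹ (i + 1))

namespace DesChain

variable {n : ℕ}

lemma pval_of_lt (σ : Equiv.Perm (Fin n)) {i : ℕ} (h : i < n) :
    pval n σ i = (σ ⟨i, h⟩ : ℕ) := dif_pos h

lemma pval_lt (σ : Equiv.Perm (Fin n)) {i : ℕ} (h : i < n) : pval n σ i < n := by
  rw [pval_of_lt σ h]; exact (σ ⟨i, h⟩).isLt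

lemma pval_inj (σ : Equiv.Perm (Fin n)) {a b : ℕ} (ha : a < n) (hb : b < n)
    (h : pval n σ a = pval n σ b) : a = b := by
  rw [pval_of_lt σ ha, pval_of_lt σ hb] at h
  have := σ.injective (Fin.ext h)
  exact congrArg Fin.val this

lemma pval_symm {σ : Equiv.Perm (Fin n)} {a b : ℕ} (ha : a < n)
    (h : pval n σ a = b) : pval n σ⁻¹ b = a := by
  have hb : b < n := h ▸ pval_lt σ ha
  rw [pval_of_lt σ ha] at h
  rw [pval_of_lt σ⁻¹ hb]
  have : σ ⟨a, ha⟩ = ⟨b, hb⟩ := Fin.ext h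
  rw [← this]; simp

lemma pval_inv {σ : Equiv.Perm (Fin n)} {a : ℕ} (ha : a < n) :
    pval n σ⁻¹ (pval n σ a) = a := pval_symm ha rfl

lemma mem_Des {σ : Equiv.Perm (Fin n)} {i : ℕ} :
    i ∈ Des n σ ↔ i + 1 < n ∧ pval n σ (i + 1) < pval n σ i := by
  simp only [Des, Finset.mem_filter, Finset.mem_range]
  constructor <;> rintro ⟨h1, h2⟩ <;> exact ⟨by omega, h2⟩

lemma swap_val_lt_iff {i : ℕ} (h : i + 1 < n) (a b : Fin n)
    (h1 : ¬((a : ℕ) = i ∧ (b : ℕ) = i + 1))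
    (h2 : ¬((a : ℕ) = i + 1 ∧ (b : ℕ) = i)) :
    ((Equiv.swap (⟨i, Nat.lt_of_succ_lt h⟩ : Fin n) ⟨i + 1, h⟩ a : Fin n) : ℕ) <
      ((Equiv.swap (⟨i, Nat.lt_of_succ_lt h⟩ : Fin n) ⟨i + 1, h⟩ b : Fin n) : ℕ) ↔ (a : ℕ) < (b : ℕ) := by
  rcases a with ⟨a, ha⟩; rcases b with ⟨b, hb⟩
  simp only [Equiv.swap_apply_def, Fin.ext_iff] at *
  split_ifs <;> simp_all <;> omega

lemma Des_smul {i : ℕ} (h : i + 1 < n) (σ : Equiv.Perm (Fin n))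
    (hd : 1 < Nat.dist (pval n σ⁻¹ i) (pval n σ⁻¹ (i + 1))) :
    Des n (sT n i h * σ) = Des n σ := by
  have hi : i < n := Nat.lt_of_succ_lt h
  ext j
  simp only [mem_Des]
  refine and_congr_right fun hj => ?_
  have hj1 : j < n := Nat.lt_of_succ_lt hj
  rw [pval_of_lt (sT n i h * σ) hj, pval_of_lt (sT n i h * σ) hj1,
    pval_of_lt σ hj, pval_of_lt σ hj1]
  simp only [sT, Equiv.Perm.mul_apply]
  refine swap_val_lt_iff h _ _ ?_ ?_
  · rintro ⟨e1, e2⟩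
    have p1 : pval n σ⁻¹ i = j + 1 := pval_symm hj (by rw [pval_of_lt σ hj]; exact e1)
    have p2 : pval n σ⁻¹ (i + 1) = j := pval_symm hj1 (by rw [pval_of_lt σ hj1]; exact e2)
    rw [p1, p2] at hd
    simp [Nat.dist] at hd
  · rintro ⟨e1, e2⟩
    have p1 : pval n σ⁻¹ (i + 1) = j + 1 := pval_symm hj (by rw [pval_of_lt σ hj]; exact e1)
    have p2 : pval n σ⁻¹ i = j := pval_symm hj1 (by rw [pval_of_lt σ hj1]; exact e2)
    rw [p1, p2] at hd
    simp [Nat.dist] at hd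

lemma DStep.des_eq {σ τ : Equiv.Perm (Fin n)} (h : DStep n σ τ) :
    Des n σ = Des n τ := by
  obtain ⟨i, hi, rfl, hd⟩ := h
  exact (Des_smul hi σ hd).symm

lemma DStep.symm {σ τ : Equiv.Perm (Fin n)} (h : DStep n σ τ) : DStep n τ σ := by
  obtain ⟨i, hi, rfl, hd⟩ := h
  refine ⟨i, hi, ?_, ?_⟩
  · simp [sT, ← mul_assoc, Equiv.swap_mul_self]
  · have hin : i < n := Nat.lt_of_succ_lt hi
    have e1 : pval n (sT n i hi * σ)⁻¹ i = pval n σ⁻¹ (i + 1) := by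
      rw [pval_of_lt _ hin, pval_of_lt _ hi]
      simp [sT, mul_inv_rev, Equiv.Perm.mul_apply, Equiv.swap_inv, Equiv.swap_apply_left]
    have e2 : pval n (sT n i hi * σ)⁻¹ (i + 1) = pval n σ⁻¹ i := by
      rw [pval_of_lt _ hi, pval_of_lt _ hin]
      simp [sT, mul_inv_rev, Equiv.Perm.mul_apply, Equiv.swap_inv, Equiv.swap_apply_right]
    rw [e1, e2, Nat.dist_comm]
    exact hd

end DesChain

-- appended after part1 content
namespace DesChain

variable {n : ℕ}

def NI (σ : Equiv.Perm (Fin n)) : Finset (Fin n × Fin n) :=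
  Finset.univ.filter fun p => p.1 < p.2 ∧ σ⁻¹ p.1 < σ⁻¹ p.2

def Maximal (σ : Equiv.Perm (Fin n)) : Prop :=
  ∀ i : ℕ, ∀ _ : i + 1 < n, pval n σ⁻¹ (i + 1) ≤ pval n σ⁻¹ i + 1

lemma fin_lt_swap_iff {i : ℕ} (h : i + 1 < n) (a b : Fin n)
    (h1 : ¬(a = (⟨i, Nat.lt_of_succ_lt h⟩ : Fin n) ∧ b = (⟨i + 1, h⟩ : Fin n)))
    (h2 : ¬(a = (⟨i + 1, h⟩ : Fin n) ∧ b = (⟨i, Nat.lt_of_succ_lt h⟩ : Fin n))) :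
    Equiv.swap (⟨i, Nat.lt_of_succ_lt h⟩ : Fin n) ⟨i + 1, h⟩ a <
      Equiv.swap (⟨i, Nat.lt_of_succ_lt h⟩ : Fin n) ⟨i + 1, h⟩ b ↔ a < b := by
  have := swap_val_lt_iff h a b (fun hc => h1 ⟨Fin.ext hc.1, Fin.ext hc.2⟩)
    (fun hc => h2 ⟨Fin.ext hc.1, Fin.ext hc.2⟩)
  rw [Fin.lt_def, Fin.lt_def]
  exact this

lemma NI_card_smul {i : ℕ} (h : i + 1 < n) (σ : Equiv.Perm (Fin n))
    (hup : σ⁻¹ (⟨i, Nat.lt_of_succ_lt h⟩ : Fin n) < σ⁻¹ (⟨i + 1, h⟩ : Fin n)) :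
    (NI (sT n i h * σ)).card < (NI σ).card := by
  set x : Fin n := ⟨i, Nat.lt_of_succ_lt h⟩ with hx
  set y : Fin n := ⟨i + 1, h⟩ with hy
  have hxy : x < y := by simp [hx, hy, Fin.lt_def]
  have hmem : (x, y) ∈ NI σ := by simpa [NI, hxy] using hup
  have hinv : ∀ z : Fin n, (sT n i h * σ)⁻¹ z = σ⁻¹ (Equiv.swap x y z) := by
    intro z
    simp [sT, mul_inv_rev, Equiv.Perm.mul_apply, Equiv.swap_inv]
    rfl
  have hcard : (NI (sT n i h * σ)).card = ((NI σ).erase (x, y)).card := by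
    apply Finset.card_bij' (fun p _ => (Equiv.swap x y p.1, Equiv.swap x y p.2))
      (fun p _ => (Equiv.swap x y p.1, Equiv.swap x y p.2))
    · intro p hp
      simp only [NI, Finset.mem_filter, Finset.mem_univ, true_and, hinv] at hp
      obtain ⟨hlt, hplt⟩ := hp
      have hne1 : ¬(p.1 = x ∧ p.2 = y) := by
        rintro ⟨e1, e2⟩
        rw [e1, e2] at hplt
        rw [Equiv.swap_apply_left, Equiv.swap_apply_right] at hplt
        exact absurd hup (not_lt.2 hplt.le)
      have hne2 : ¬(p.1 = y ∧ p.2 = x) := by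
        rintro ⟨e1, e2⟩
        rw [e1, e2] at hlt
        exact absurd hxy (not_lt.2 hlt.le)
      rw [Finset.mem_erase]
      constructor
      · intro hcontra
        have e1 : Equiv.swap x y p.1 = x := congrArg Prod.fst hcontra
        have e2 : Equiv.swap x y p.2 = y := congrArg Prod.snd hcontra
        have : p.1 = y := by
          have := congrArg (Equiv.swap x y) e1
          simpa [Equiv.swap_apply_self, Equiv.swap_apply_left] using this
        have : p.2 = x := by
          have := congrArg (Equiv.swap x y) e2
          simpa [Equiv.swap_apply_self, Equiv.swap_apply_right] using this
        exact hne2 ⟨‹p.1 = y›, ‹p.2 = x›⟩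
      · simp only [NI, Finset.mem_filter, Finset.mem_univ, true_and]
        refine ⟨?_, ?_⟩
        · exact (fin_lt_swap_iff h p.1 p.2 hne1 hne2).2 hlt
        · simpa [Equiv.swap_apply_self] using hplt
    · intro p hp
      rw [Finset.mem_erase] at hp
      obtain ⟨hne, hp⟩ := hp
      simp only [NI, Finset.mem_filter, Finset.mem_univ, true_and] at hp ⊢
      obtain ⟨hlt, hplt⟩ := hp
      have hne1 : ¬(p.1 = x ∧ p.2 = y) := by
        rintro ⟨e1, e2⟩
        exact hne (by rw [← e1, ← e2])
      have hne2 : ¬(p.1 = y ∧ p.2 = x) := by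
        rintro ⟨e1, e2⟩
        rw [e1, e2] at hlt
        exact absurd hxy (not_lt.2 hlt.le)
      refine ⟨(fin_lt_swap_iff h p.1 p.2 hne1 hne2).2 hlt, ?_⟩
      simp only [hinv, Equiv.swap_apply_self]
      exact hplt
    · intro p _; simp [Equiv.swap_apply_self]
    · intro p _; simp [Equiv.swap_apply_self]
  have : (NI σ).card = ((NI σ).erase (x, y)).card + 1 := by
    rw [Finset.card_erase_of_mem hmem]
    have : 0 < (NI σ).card := Finset.card_pos.2 ⟨_, hmem⟩
    omega
  omega

lemma dstep_of_up {i : ℕ} (h : i + 1 < n) (σ : Equiv.Perm (Fin n))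
    (hup : pval n σ⁻¹ i + 1 < pval n σ⁻¹ (i + 1)) :
    DStep n σ (sT n i h * σ) := by
  refine ⟨i, h, rfl, ?_⟩
  simp [Nat.dist]; omega

lemma reach_aux : ∀ N : ℕ, ∀ σ : Equiv.Perm (Fin n), (NI σ).card < N →
    ∃ σ', Relation.ReflTransGen (DStep n) σ σ' ∧ Maximal σ' := by
  intro N
  induction N with
  | zero => intro σ hσ; omega
  | succ N ih =>
    intro σ hσ
    by_cases hmax : Maximal σ
    · exact ⟨σ, Relation.ReflTransGen.refl, hmax⟩
    · simp only [Maximal, not_forall, not_le] at hmax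
      obtain ⟨i, h, hup⟩ := hmax
      have hup' : σ⁻¹ (⟨i, Nat.lt_of_succ_lt h⟩ : Fin n) < σ⁻¹ (⟨i + 1, h⟩ : Fin n) := by
        rw [Fin.lt_def]
        rw [pval_of_lt σ⁻¹ (Nat.lt_of_succ_lt h), pval_of_lt σ⁻¹ h] at hup
        omega
      have hcard := NI_card_smul h σ hup'
      obtain ⟨σ', hchain, hmax'⟩ := ih (sT n i h * σ) (by omega)
      exact ⟨σ', Relation.ReflTransGen.head (dstep_of_up h σ hup) hchain, hmax'⟩

lemma reach (σ : Equiv.Perm (Fin n)) :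
    ∃ σ', Relation.ReflTransGen (DStep n) σ σ' ∧ Maximal σ' :=
  reach_aux ((NI σ).card + 1) σ (by omega)

end DesChain

namespace DesChain

variable {n : ℕ}

lemma walk {σ : Equiv.Perm (Fin n)} (hm : Maximal σ) :
    ∀ w u c : ℕ, w < n → u < w → pval n σ⁻¹ u ≤ c → c < pval n σ⁻¹ w →
    ∃ v, u < v ∧ v ≤ w ∧ v < n ∧ pval n σ⁻¹ v = c + 1 := by
  intro w
  induction w with
  | zero => intro u c _ hu; omega
  | succ w ih =>
    intro u c hw hu hup hc
    by_cases hle : pval n σ⁻¹ (w + 1) ≤ c + 1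
    · exact ⟨w + 1, hu, le_refl _, hw, by omega⟩
    · have hmw := hm w hw
      have hpw : c < pval n σ⁻¹ w := by omega
      rcases Nat.lt_or_ge u w with huw | huw
      · obtain ⟨v, h1, h2, h3, h4⟩ := ih u c (Nat.lt_of_succ_lt hw) huw hup hpw
        exact ⟨v, h1, by omega, h3, h4⟩
      · have heq : u = w := by omega
        subst heq
        omega

lemma ascent {σ : Equiv.Perm (Fin n)} (hm : Maximal σ) {q : ℕ} (hq : q + 1 < n)
    (ha : pval n σ q < pval n σ (q + 1)) :
    pval n σ (q + 1) = pval n σ q + 1 := by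
  have hqn : q < n := Nat.lt_of_succ_lt hq
  set a := pval n σ q with hadef
  set b := pval n σ (q + 1) with hbdef
  by_contra hne
  have hb2 : a + 2 ≤ b := by omega
  have hbn : b < n := pval_lt σ hq
  have han : a < n := pval_lt σ hqn
  have ha1n : a + 1 < n := by omega
  have hpa : pval n σ⁻¹ a = q := pval_inv hqn
  have hpb : pval n σ⁻¹ b = q + 1 := pval_inv hq
  have hpa1 : pval n σ⁻¹ (a + 1) ≤ q + 1 := by
    have := hm a ha1n
    omega
  have hne1 : pval n σ⁻¹ (a + 1) ≠ q := by
    intro hcontra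
    have := pval_inj σ⁻¹ ha1n han (hcontra.trans hpa.symm)
    omega
  have hne2 : pval n σ⁻¹ (a + 1) ≠ q + 1 := by
    intro hcontra
    have := pval_inj σ⁻¹ ha1n hbn (hcontra.trans hpb.symm)
    omega
  have hlow : pval n σ⁻¹ (a + 1) ≤ q - 1 ∧ 1 ≤ q := by omega
  obtain ⟨v, hv1, hv2, hv3, hv4⟩ := walk hm b (a + 1) (q - 1) hbn (by omega)
    hlow.1 (by omega)
  have : v = a := pval_inj σ⁻¹ hv3 han (by omega)
  omega

lemma anchor {σ : Equiv.Perm (Fin n)} (hm : Maximal σ) {s M : ℕ} (hM : M < n)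
    (H : ∀ w, w < n → (M < w ↔ pval n σ⁻¹ w < s)) :
    s ≤ pval n σ⁻¹ M ∧
    (pval n σ⁻¹ M = n - 1 ∨ pval n σ⁻¹ M ∈ Des n σ) ∧
    ∀ d ∈ Des n σ, ¬(s ≤ d ∧ d < pval n σ⁻¹ M) := by
  set m := pval n σ⁻¹ M with hmdef
  have hmn : m < n := pval_lt σ⁻¹ hM
  have hms : s ≤ m := by
    have := (H M hM).not
    simp only [lt_irrefl, not_false_iff, true_iff] at this
    omega
  have hvm : pval n σ m = M := by
    have := pval_inv (σ := σ⁻¹) hM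
    simpa using this
  refine ⟨hms, ?_, ?_⟩
  · rcases Nat.lt_or_ge m (n - 1) with hlt | hge
    · right
      rw [mem_Des]
      refine ⟨by omega, ?_⟩
      set b := pval n σ (m + 1) with hbdef
      have hbn : b < n := pval_lt σ (by omega)
      have hpb : pval n σ⁻¹ b = m + 1 := pval_inv (by omega)
      have hbM : b ≤ M := by
        by_contra hcontra
        have := (H b hbn).1 (by omega)
        omega
      have : b ≠ M := by
        intro hcontra
        rw [hcontra] at hpb
        omega
      rw [hvm]
      omega
    · left; omega
  · rintro d hd ⟨hsd, hdm⟩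
    rw [mem_Des] at hd
    obtain ⟨hd1, hd2⟩ := hd
    have hdn : d < n := by omega
    set a := pval n σ d with hadef
    have han : a < n := pval_lt σ hdn
    have hpa : pval n σ⁻¹ a = d := pval_inv hdn
    have haM : a ≤ M := by
      by_contra hcontra
      have := (H a han).1 (by omega)
      omega
    have haneM : a ≠ M := by
      intro hcontra
      rw [hcontra] at hpa
      omega
    obtain ⟨v, hv1, hv2, hv3, hv4⟩ := walk hm M a d hM (by omega) (by omega) (by omega)
    have : pval n σ (d + 1) = v := by
      have := pval_symm (σ := σ⁻¹) hv3 hv4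
      simpa using this
    omega

end DesChain

namespace DesChain

variable {n : ℕ}

lemma pval_symm' {σ : Equiv.Perm (Fin n)} {a b : ℕ} (ha : a < n)
    (h : pval n σ⁻¹ a = b) : pval n σ b = a := by
  have := pval_symm (σ := σ⁻¹) ha h
  simpa using this

def sOf (σ : Equiv.Perm (Fin n)) (e : ℕ) : ℕ := ((Des n σ).filter (· < e)).sup (· + 1)

lemma sOf_le (σ : Equiv.Perm (Fin n)) (e : ℕ) : sOf σ e ≤ e := by
  apply Finset.sup_le
  intro d hd
  rw [Finset.mem_filter] at hd
  omega

lemma sOf_gap (σ : Equiv.Perm (Fin n)) (e : ℕ) :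
    ∀ d ∈ Des n σ, ¬(sOf σ e ≤ d ∧ d < e) := by
  rintro d hd ⟨h1, h2⟩
  have : d + 1 ≤ sOf σ e := Finset.le_sup (f := (· + 1)) (by rw [Finset.mem_filter]; exact ⟨hd, h2⟩)
  omega

lemma sOf_prev (σ : Equiv.Perm (Fin n)) (e : ℕ) (h : sOf σ e ≠ 0) :
    sOf σ e - 1 ∈ Des n σ ∧ sOf σ e - 1 < e := by
  have hne : ((Des n σ).filter (· < e)).Nonempty := by
    by_contra hc
    rw [Finset.not_nonempty_iff_eq_empty] at hc
    simp [sOf, hc] at h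
  obtain ⟨d, hd, hsup⟩ := Finset.exists_mem_eq_sup _ hne (· + 1)
  rw [Finset.mem_filter] at hd
  have : sOf σ e = d + 1 := hsup
  constructor
  · rw [this]; simpa using hd.1
  · rw [this]; simpa using hd.2

lemma Tlemma {σ : Equiv.Perm (Fin n)} (hm : Maximal σ) :
    ∀ e, e < n → (e = n - 1 ∨ e ∈ Des n σ) →
    (∀ w, w < n → (n - 1 - e ≤ w ↔ pval n σ⁻¹ w ≤ e)) ∧
    (∀ x, sOf σ e ≤ x → x ≤ e → pval n σ x = (n - 1 - e) + (x - sOf σ e)) := by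
  intro e
  induction e using Nat.strong_induction_on with
  | _ e ih =>
  intro hen hre
  set s := sOf σ e with hsdef
  have hse : s ≤ e := sOf_le σ e
  have hgap : ∀ d ∈ Des n σ, ¬(s ≤ d ∧ d < e) := sOf_gap σ e
  have Hprev : ∀ w, w < n → (n - s ≤ w ↔ pval n σ⁻¹ w < s) := by
    rcases Nat.eq_zero_or_pos s with h0 | hpos
    · intro w hw
      rw [h0]
      constructor <;> intro hc <;> omega
    · have hprev := sOf_prev σ e (by omega)
      set e' := s - 1 with he'def
      have he'D : e' ∈ Des n σ := hprev.1
      have he'n : e' < n := by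
        have := mem_Des.1 he'D
        omega
      obtain ⟨h1, _⟩ := ih e' (by omega) he'n (Or.inr he'D)
      intro w hw
      have := h1 w hw
      omega
  set M := n - 1 - s with hMdef
  have hMn : M < n := by omega
  have H : ∀ w, w < n → (M < w ↔ pval n σ⁻¹ w < s) := by
    intro w hw
    have := Hprev w hw
    omega
  obtain ⟨hsm, hrunend, hnodesc⟩ := anchor hm hMn H
  have hpMn : pval n σ⁻¹ M < n := pval_lt σ⁻¹ hMn
  have hpM : pval n σ⁻¹ M = e := by
    set m := pval n σ⁻¹ M with hmdef
    rcases Nat.lt_trichotomy m e with hlt | heq | hgt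
    · have hmD : m ∈ Des n σ := by
        rcases hrunend with h1 | h2
        · exfalso; omega
        · exact h2
      exact absurd ⟨hsm, hlt⟩ (hgap m hmD)
    · exact heq
    · have heD : e ∈ Des n σ := by
        rcases hre with h1 | h2
        · exfalso; omega
        · exact h2
      exact absurd ⟨hse, hgt⟩ (hnodesc e heD)
  have hval : ∀ k, k ≤ e - s → pval n σ (e - k) = M - k := by
    intro k
    induction k with
    | zero =>
      intro _
      have := pval_symm' hMn hpM
      simpa using this
    | succ k ihk =>
      intro hk
      have hik := ihk (by omega)
      set x := e - (k + 1) with hxdef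
      have hx1 : x + 1 = e - k := by omega
      have hxs : s ≤ x := by omega
      have hx1n : x + 1 < n := by omega
      have hnotdes : x ∉ Des n σ := fun hc => hgap x hc ⟨hxs, by omega⟩
      have hasc : pval n σ x < pval n σ (x + 1) := by
        rcases Nat.lt_trichotomy (pval n σ x) (pval n σ (x + 1)) with h | h | h
        · exact h
        · exact absurd (pval_inj σ (by omega) hx1n h) (by omega)
        · exact absurd (mem_Des.2 ⟨hx1n, h⟩) hnotdes
      have := ascent hm hx1n hasc
      rw [hx1] at this
      omega
  refine ⟨?_, ?_⟩
  · intro w hw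
    constructor
    · intro hwge
      by_cases hws : n - s ≤ w
      · have := (Hprev w hw).1 hws
        omega
      · have hwM : w ≤ M := by omega
        have hkle : M - w ≤ e - s := by omega
        have hv := hval (M - w) hkle
        have hvw : pval n σ (e - (M - w)) = w := by omega
        have := pval_symm (by omega : e - (M - w) < n) hvw
        omega
    · intro hple
      by_cases hps : pval n σ⁻¹ w < s
      · have := (Hprev w hw).2 hps
        omega
      · set x := pval n σ⁻¹ w with hxdef
        have hvx : pval n σ x = w := pval_symm' hw hxdef.symm
        have hv := hval (e - x) (by omega)
        have hex : e - (e - x) = x := by omega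
        rw [hex] at hv
        omega
  · intro x hsx hxe
    have hv := hval (e - x) (by omega)
    have hex : e - (e - x) = x := by omega
    rw [hex] at hv
    omega

end DesChain

namespace DesChain

variable {n : ℕ}

def eOf (D : Finset ℕ) (n q : ℕ) : ℕ :=
  if h : (D.filter (q ≤ ·)).Nonempty then (D.filter (q ≤ ·)).min' h else n - 1

lemma maximal_val {σ : Equiv.Perm (Fin n)} (hm : Maximal σ) (D : Finset ℕ)
    (hD : Des n σ = D) {q : ℕ} (hq : q < n) :
    pval n σ q = (n - 1 - eOf D n q) + (q - (D.filter (· < eOf D n q)).sup (· + 1)) := by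
  subst hD
  set e := eOf (Des n σ) n q with hedef
  have hqe : q ≤ e := by
    rw [hedef, eOf]
    split_ifs with h
    · have := Finset.min'_mem _ h
      rw [Finset.mem_filter] at this
      exact this.2
    · omega
  have hrun : e = n - 1 ∨ e ∈ Des n σ := by
    rw [hedef, eOf]
    split_ifs with h
    · right
      have := Finset.min'_mem _ h
      rw [Finset.mem_filter] at this
      exact this.1
    · left; rfl
  have hen : e < n := by
    rcases hrun with h | h
    · omega
    · have := mem_Des.1 h
      omega
  have hgapq : ∀ d ∈ Des n σ, ¬(q ≤ d ∧ d < e) := by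
    rintro d hd ⟨h1, h2⟩
    have hdF : d ∈ (Des n σ).filter (q ≤ ·) := by
      rw [Finset.mem_filter]; exact ⟨hd, h1⟩
    rw [hedef, eOf] at h2
    split_ifs at h2 with h
    · have := Finset.min'_le _ d hdF
      omega
    · exact h ⟨d, hdF⟩
  have hsq : sOf σ e ≤ q := by
    apply Finset.sup_le
    intro d hd
    rw [Finset.mem_filter] at hd
    by_contra hc
    exact hgapq d hd.1 ⟨by omega, hd.2⟩
  have key := (Tlemma hm e hen hrun).2 q hsq hqe
  rw [key]
  rfl

lemma maximal_unique {σ τ : Equiv.Perm (Fin n)} (hmσ : Maximal σ) (hmτ : Maximal τ)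
    (hd : Des n σ = Des n τ) : σ = τ := by
  apply Equiv.ext
  intro q
  apply Fin.ext
  have h1 := maximal_val hmσ (Des n σ) rfl q.isLt
  have h2 := maximal_val hmτ (Des n σ) hd.symm q.isLt
  have : pval n σ (q : ℕ) = pval n τ (q : ℕ) := h1.trans h2.symm
  rw [pval_of_lt σ q.isLt, pval_of_lt τ q.isLt] at this
  simpa using this

lemma chain_des {σ τ : Equiv.Perm (Fin n)} (h : Relation.ReflTransGen (DStep n) σ τ) :
    Des n σ = Des n τ := by
  induction h with
  | refl => rfl
  | tail _ hstep ihc => exact ihc.trans (DStep.des_eq hstep)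

end DesChain

/-- Two permutations have the same descent set iff they are connected by a chain of
moves `σ ↦ s_i σ` with `|σ⁻¹(i) - σ⁻¹(i+1)| > 1`. -/
theorem des_eq_iff_chain (n : ℕ) (σ τ : Equiv.Perm (Fin n)) :
    Des n σ = Des n τ ↔ Relation.ReflTransGen (DStep n) σ τ := by
  constructor
  · intro hdes
    obtain ⟨σ', hcσ, hmσ⟩ := DesChain.reach σ
    obtain ⟨τ', hcτ, hmτ⟩ := DesChain.reach τ
    have hds : Des n σ = Des n σ' := DesChain.chain_des hcσ
    have hdt : Des n τ = Des n τ' := DesChain.chain_des hcτ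
    have : σ' = τ' := DesChain.maximal_unique hmσ hmτ (by rw [← hds, ← hdt, hdes])
    subst this
    have hsymm : Symmetric (Relation.ReflTransGen (DStep n)) :=
      fun x y h => Std.Symm.symm (self := @Relation.ReflTransGen.stdSymm _ (DStep n) ⟨fun _ _ h => DesChain.DStep.symm h⟩) x y h
    exact hcσ.trans (hsymm hcτ)
  · exact DesChain.chain_des
end

section
/- Let I ⊆ {1,...,n-1} and suppose there exists j ∈ [1,n-1] with j-1 ∈ I, j ∈ I, and j+1 ∉ I. Then there exists σ ∈ S_n with Des(σ) = I, σ(j) = 2 and σ(j+1) = 1. -/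
lemma rank_perm {n : ℕ} {α : Type*} [LinearOrder α] (κ : Fin n → α)
    (hinj : Function.Injective κ) :
    ∃ σ : Equiv.Perm (Fin n), ∀ i k, σ i < σ k ↔ κ i < κ k := by
  classical
  set s : Finset α := Finset.univ.image κ with hs
  have hcard : s.card = n := by
    rw [hs, Finset.card_image_of_injective _ hinj, Finset.card_univ, Fintype.card_fin]
  let oi := s.orderIsoOfFin hcard
  have hmem : ∀ i, κ i ∈ s := fun i => Finset.mem_image_of_mem _ (Finset.mem_univ i)
  let e : Fin n → s := fun i => ⟨κ i, hmem i⟩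
  have heinj : Function.Injective e := by
    intro a b h
    exact hinj (congrArg Subtype.val h)
  have he : Function.Bijective e :=
    (Fintype.bijective_iff_injective_and_card e).2 ⟨heinj, by simp [Fintype.card_coe, hcard]⟩
  refine ⟨(Equiv.ofBijective e he).trans oi.symm.toEquiv, fun i k => ?_⟩
  show oi.symm (e i) < oi.symm (e k) ↔ _
  rw [oi.symm.lt_iff_lt]
  exact Subtype.mk_lt_mk

lemma r_step (I : Finset ℕ) (i : ℕ) :
    (I.filter fun k => i ≤ k).card
      = (I.filter fun k => i + 1 ≤ k).card + (if i ∈ I then 1 else 0) := by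
  classical
  have hsplit : (I.filter fun k => i ≤ k)
      = (I.filter fun k => i + 1 ≤ k) ∪ (I.filter fun k => k = i) := by
    ext x
    simp only [Finset.mem_filter, Finset.mem_union]
    constructor
    · rintro ⟨hx, hle⟩
      rcases Nat.lt_or_ge x (i+1) with h | h
      · exact Or.inr ⟨hx, by omega⟩
      · exact Or.inl ⟨hx, h⟩
    · rintro (⟨hx, h⟩ | ⟨hx, h⟩) <;> exact ⟨hx, by omega⟩
  have hdisj : Disjoint (I.filter fun k => i + 1 ≤ k) (I.filter fun k => k = i) := by
    rw [Finset.disjoint_left]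
    intro a ha hb
    simp only [Finset.mem_filter] at ha hb
    omega
  rw [hsplit, Finset.card_union_of_disjoint hdisj, Finset.filter_eq']
  by_cases h : i ∈ I <;> simp [h]

/-- If `j-1, j ∈ I` and `j+1 ∉ I`, then there is a permutation with descent set `I`
taking the two smallest values at positions `j` and `j+1` (0-based: values `1, 0`). -/
theorem exists_des_with_small_values (n : ℕ) (I : Finset ℕ)
    (hI : I ⊆ Finset.range (n - 1)) (j : ℕ) (hj1 : 1 ≤ j)
    (hjm : j - 1 ∈ I) (hjI : j ∈ I) (hjp : j + 1 ∉ I) :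
    ∃ σ : Equiv.Perm (Fin n),
      Des n σ = I ∧ pval n σ j = 1 ∧ pval n σ (j + 1) = 0 := by
  classical
  have hjn : j < n - 1 := Finset.mem_range.1 (hI hjI)
  have hn2 : 2 ≤ n := by omega
  have hj1n : j + 1 < n := by omega
  have hjltn : j < n := by omega
  set r : ℕ → ℕ := fun i => (I.filter fun k => i ≤ k).card with hr
  set κ : Fin n → ℕ ×ₗ ℕ := fun i =>
    if (i : ℕ) = j + 1 then toLex (0, 0)
    else if (i : ℕ) = j then toLex (0, 1)
    else toLex (r i + 1, (i : ℕ)) with hκ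
  have hlt : ∀ a b : ℕ × ℕ, toLex a < toLex b ↔ a.1 < b.1 ∨ a.1 = b.1 ∧ a.2 < b.2 :=
    fun a b => Prod.Lex.lt_iff
  have ej1 : κ ⟨j + 1, hj1n⟩ = toLex (0, 0) := by simp [hκ]
  have ej : κ ⟨j, hjltn⟩ = toLex (0, 1) := by simp [hκ]
  have enorm : ∀ k : Fin n, (k : ℕ) ≠ j + 1 → (k : ℕ) ≠ j →
      κ k = toLex (r k + 1, (k : ℕ)) := by
    intro k h1 h2
    simp [hκ, h1, h2]
  have hdec : ∀ i : Fin n, (i : ℕ) =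
      if (ofLex (κ i)).1 = 0 then (if (ofLex (κ i)).2 = 0 then j + 1 else j)
      else (ofLex (κ i)).2 := by
    intro i
    by_cases h1 : (i : ℕ) = j + 1
    · rw [show i = ⟨j + 1, hj1n⟩ from Fin.ext h1, ej1]
      simp
    · by_cases h2 : (i : ℕ) = j
      · rw [show i = ⟨j, hjltn⟩ from Fin.ext h2, ej]
        simp
      · rw [enorm i h1 h2]
        simp
  have hκinj : Function.Injective κ := by
    intro a b h
    apply Fin.ext
    rw [hdec a, hdec b, h]
  obtain ⟨σ, hσ⟩ := rank_perm κ hκinj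
  have hmin : ∀ k : Fin n, k ≠ ⟨j + 1, hj1n⟩ → κ ⟨j + 1, hj1n⟩ < κ k := by
    intro k hk
    have hk' : (k : ℕ) ≠ j + 1 := fun h => hk (Fin.ext h)
    rw [ej1]
    by_cases h2 : (k : ℕ) = j
    · rw [show k = ⟨j, hjltn⟩ from Fin.ext h2, ej, hlt]
      right; exact ⟨rfl, Nat.zero_lt_one⟩
    · rw [enorm k hk' h2, hlt]
      left; exact Nat.succ_pos _
  have hsec : ∀ k : Fin n, k ≠ ⟨j + 1, hj1n⟩ → k ≠ ⟨j, hjltn⟩ → κ ⟨j, hjltn⟩ < κ k := by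
    intro k hk1 hk2
    have hk1' : (k : ℕ) ≠ j + 1 := fun h => hk1 (Fin.ext h)
    have hk2' : (k : ℕ) ≠ j := fun h => hk2 (Fin.ext h)
    rw [ej, enorm k hk1' hk2', hlt]
    left; exact Nat.succ_pos _
  have hkey : ∀ i : ℕ, (h : i + 1 < n) →
      (κ ⟨i + 1, h⟩ < κ ⟨i, by omega⟩ ↔ i ∈ I) := by
    intro i h
    by_cases h1 : i = j
    · have e1 : (⟨i + 1, h⟩ : Fin n) = ⟨j + 1, hj1n⟩ := Fin.ext (by simpa using by omega)
      have e2 : (⟨i, by omega⟩ : Fin n) = ⟨j, hjltn⟩ := Fin.ext (by simpa using h1)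
      rw [e1, e2]
      constructor
      · intro _; rw [h1]; exact hjI
      · intro _; exact hmin ⟨j, hjltn⟩ (Fin.ne_of_val_ne (show j ≠ j + 1 by omega))
    · by_cases h2 : i = j + 1
      · have e1 : (⟨i, by omega⟩ : Fin n) = ⟨j + 1, hj1n⟩ := Fin.ext (by simpa using h2)
        rw [e1]
        constructor
        · intro hc
          exact absurd (hmin ⟨i + 1, h⟩ (Fin.ne_of_val_ne (show i + 1 ≠ j + 1 by omega)))
            (not_lt.2 hc.le)
        · intro hc; rw [h2] at hc; exact absurd hc hjp
      · by_cases h3 : i + 1 = j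
        · have e1 : (⟨i + 1, h⟩ : Fin n) = ⟨j, hjltn⟩ := Fin.ext (by simpa using h3)
          rw [e1]
          constructor
          · intro _
            have hij : i = j - 1 := by omega
            rw [hij]; exact hjm
          · intro _
            exact hsec ⟨i, by omega⟩ (Fin.ne_of_val_ne (show i ≠ j + 1 by omega))
              (Fin.ne_of_val_ne (show i ≠ j by omega))
        · have e1 : κ ⟨i, by omega⟩ = toLex (r i + 1, i) :=
            enorm ⟨i, by omega⟩ (show i ≠ j + 1 by omega) (show i ≠ j by omega)
          have e2 : κ ⟨i + 1, h⟩ = toLex (r (i + 1) + 1, i + 1) :=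
            enorm ⟨i + 1, h⟩ (show i + 1 ≠ j + 1 by omega) (show i + 1 ≠ j by omega)
          rw [e1, e2, hlt]
          have hstep := r_step I i
          by_cases hiI : i ∈ I
          · simp only [hiI, if_true] at hstep
            constructor
            · intro _; exact hiI
            · intro _; left; simp only [hr] at *; omega
          · simp only [hiI, if_false] at hstep
            constructor
            · rintro (hl | ⟨heq, hl⟩)
              · exfalso; simp only [hr] at *; omega
              · simp only at heq hl; omega
            · intro hc; exact absurd hc hiI
  have hv0 : (σ ⟨j + 1, hj1n⟩ : ℕ) = 0 := by
    have hle : ∀ k : Fin n, σ ⟨j + 1, hj1n⟩ ≤ σ k := by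
      intro k
      by_cases hk : k = ⟨j + 1, hj1n⟩
      · rw [hk]
      · exact le_of_lt ((hσ _ _).2 (hmin k hk))
    have h0 := hle (σ.symm ⟨0, by omega⟩)
    rw [Equiv.apply_symm_apply] at h0
    have h0' : (σ ⟨j + 1, hj1n⟩ : ℕ) ≤ ((⟨0, by omega⟩ : Fin n) : ℕ) := Fin.le_def.1 h0
    simpa using h0'
  have hv1 : (σ ⟨j, hjltn⟩ : ℕ) = 1 := by
    have hgt : (0 : ℕ) < (σ ⟨j, hjltn⟩ : ℕ) := by
      have h0 : σ ⟨j + 1, hj1n⟩ < σ ⟨j, hjltn⟩ :=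
        (hσ _ _).2 (hmin ⟨j, hjltn⟩ (Fin.ne_of_val_ne (show j ≠ j + 1 by omega)))
      have h0' := Fin.lt_def.1 h0
      omega
    have hle : (σ ⟨j, hjltn⟩ : ℕ) ≤ 1 := by
      set k := σ.symm ⟨1, by omega⟩ with hk
      have hσk : σ k = ⟨1, by omega⟩ := Equiv.apply_symm_apply _ _
      by_cases hk1 : k = ⟨j, hjltn⟩
      · rw [hk1] at hσk; rw [hσk]
      · by_cases hk2 : k = ⟨j + 1, hj1n⟩
        · exfalso
          rw [hk2] at hσk
          have h1' : (σ ⟨j + 1, hj1n⟩ : ℕ) = ((⟨1, by omega⟩ : Fin n) : ℕ) :=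
            congrArg Fin.val hσk
          simp at h1'
          omega
        · have hlt2 : σ ⟨j, hjltn⟩ < σ k := (hσ _ _).2 (hsec k hk2 hk1)
          rw [hσk] at hlt2
          have h2' : (σ ⟨j, hjltn⟩ : ℕ) < ((⟨1, by omega⟩ : Fin n) : ℕ) := Fin.lt_def.1 hlt2
          simp at h2'
          omega
    omega
  refine ⟨σ, ?_, ?_, ?_⟩
  · ext i
    simp only [Des, Finset.mem_filter, Finset.mem_range]
    constructor
    · rintro ⟨h1, h2⟩
      have hin : i + 1 < n := by omega
      rw [pval, pval, dif_pos hin, dif_pos (by omega : i < n)] at h2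
      exact (hkey i hin).1 ((hσ _ _).1 (Fin.lt_def.2 h2))
    · intro hiI
      have h1 : i < n - 1 := Finset.mem_range.1 (hI hiI)
      have hin : i + 1 < n := by omega
      refine ⟨h1, ?_⟩
      rw [pval, pval, dif_pos hin, dif_pos (by omega : i < n)]
      exact Fin.lt_def.1 ((hσ _ _).2 ((hkey i hin).2 hiI))
  · rw [pval, dif_pos hjltn]; exact hv1
  · rw [pval, dif_pos hj1n]; exact hv0
end

section
/- (Atkinson's lemma) For compositions c, d of n and σ ∈ S_n, let D(c,d,σ) = {(u,v) ∈ S_n × S_n : Des-composition of u is c, Des-composition of v is d, uv = σ}. Suppose s_i is a simple transposition with |σ^{-1}(i) - σ^{-1}(i+1)| > 1. Then the map ψ_i sending (u,v) to (s_i u, v) if |u^{-1}(i) - u^{-1}(i+1)| > 1 and to (u, u^{-1} s_i u v) otherwise, is a bijection from D(c,d,σ) onto D(c,d,s_i σ). -/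
/-- The set `D(C,D,σ)` of pairs `(u,v)` with prescribed descent sets and `uv = σ`. -/
def DTriple (n : ℕ) (C D : Finset ℕ) (σ : Equiv.Perm (Fin n)) :
    Set (Equiv.Perm (Fin n) × Equiv.Perm (Fin n)) :=
  {p | Des n p.1 = C ∧ Des n p.2 = D ∧ p.1 * p.2 = σ}

/-- Atkinson's involution `ψ_i`. -/
noncomputable def psiD (n i : ℕ) (h : i + 1 < n)
    (p : Equiv.Perm (Fin n) × Equiv.Perm (Fin n)) :
    Equiv.Perm (Fin n) × Equiv.Perm (Fin n) :=
  if 1 < Nat.dist (pval n p.1⁻¹ i) (pval n p.1⁻¹ (i + 1)) then (sT n i h * p.1, p.2)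
  else (p.1, p.1⁻¹ * sT n i h * p.1 * p.2)

lemma pval_lt (n : ℕ) (w : Equiv.Perm (Fin n)) (j : ℕ) (hj : j < n) :
    pval n w j = w ⟨j, hj⟩ := by simp [pval, hj]

lemma swap_val_lt {n : ℕ} (a b x y : Fin n) (hab : (a : ℕ) + 1 = b)
    (h1 : ¬(x = a ∧ y = b)) (h2 : ¬(x = b ∧ y = a)) :
    ((Equiv.swap a b x : Fin n) : ℕ) < (Equiv.swap a b y : Fin n) ↔ (x : ℕ) < y := by
  simp only [Equiv.swap_apply_def]
  split_ifs <;> simp only [Fin.ext_iff, not_and] at * <;> omega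

lemma des_swap_mul {n : ℕ} (a b : Fin n) (hab : (a : ℕ) + 1 = b)
    (w : Equiv.Perm (Fin n)) (hw : 1 < Nat.dist (w⁻¹ a : Fin n) (w⁻¹ b : Fin n)) :
    Des n (Equiv.swap a b * w) = Des n w := by
  ext j
  simp only [Des, Finset.mem_filter, Finset.mem_range, and_congr_right_iff]
  intro hj
  have hj1 : j < n := by omega
  have hj2 : j + 1 < n := by omega
  rw [pval_lt n _ j hj1, pval_lt n _ (j + 1) hj2, pval_lt n _ j hj1, pval_lt n _ (j + 1) hj2]
  simp only [Equiv.Perm.mul_apply]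
  apply swap_val_lt a b _ _ hab
  · rintro ⟨h1, h2⟩
    have e1 : w⁻¹ a = ⟨j + 1, hj2⟩ := by rw [← h1]; simp
    have e2 : w⁻¹ b = ⟨j, hj1⟩ := by rw [← h2]; simp
    rw [e1, e2] at hw
    simp only [Nat.dist] at hw
    omega
  · rintro ⟨h1, h2⟩
    have e1 : w⁻¹ b = ⟨j + 1, hj2⟩ := by rw [← h1]; simp
    have e2 : w⁻¹ a = ⟨j, hj1⟩ := by rw [← h2]; simp
    rw [e1, e2] at hw
    simp only [Nat.dist] at hw
    omega

lemma pval_sT_mul_inv (n i : ℕ) (h : i + 1 < n) (u : Equiv.Perm (Fin n)) :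
    pval n (sT n i h * u)⁻¹ i = pval n u⁻¹ (i + 1) ∧
    pval n (sT n i h * u)⁻¹ (i + 1) = pval n u⁻¹ i := by
  constructor <;>
  · rw [pval_lt _ _ _ (by omega), pval_lt _ _ _ (by omega)]
    simp [sT, mul_inv_rev, Equiv.Perm.mul_apply, Equiv.swap_inv,
      Equiv.swap_apply_left, Equiv.swap_apply_right]

lemma psi_invol (n i : ℕ) (h : i + 1 < n)
    (p : Equiv.Perm (Fin n) × Equiv.Perm (Fin n)) : psiD n i h (psiD n i h p) = p := by
  obtain ⟨u, v⟩ := p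
  by_cases hc : 1 < Nat.dist (pval n u⁻¹ i) (pval n u⁻¹ (i + 1))
  · have e1 : psiD n i h (u, v) = (sT n i h * u, v) := by rw [psiD, if_pos hc]
    rw [e1]
    have hc2 : 1 < Nat.dist (pval n ((sT n i h * u, v).1)⁻¹ i)
        (pval n ((sT n i h * u, v).1)⁻¹ (i + 1)) := by
      rw [(pval_sT_mul_inv n i h u).1, (pval_sT_mul_inv n i h u).2, Nat.dist_comm]
      exact hc
    rw [psiD, if_pos hc2]
    simp [sT, ← mul_assoc, Equiv.swap_mul_self]
  · have e1 : psiD n i h (u, v) = (u, u⁻¹ * sT n i h * u * v) := by rw [psiD, if_neg hc]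
    rw [e1, psiD, if_neg hc]
    refine Prod.ext rfl ?_
    simp only
    rw [show u⁻¹ * sT n i h * u * (u⁻¹ * sT n i h * u * v) =
      u⁻¹ * (sT n i h * sT n i h) * u * v by group]
    simp [sT, Equiv.swap_mul_self]

lemma psi_mapsTo (n : ℕ) (C D : Finset ℕ) (σ : Equiv.Perm (Fin n)) (i : ℕ)
    (h : i + 1 < n) (hd : 1 < Nat.dist (pval n σ⁻¹ i) (pval n σ⁻¹ (i + 1))) :
    Set.MapsTo (psiD n i h) (DTriple n C D σ) (DTriple n C D (sT n i h * σ)) := by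
  rintro ⟨u, v⟩ ⟨hu, hv, huv⟩
  set a : Fin n := ⟨i, Nat.lt_of_succ_lt h⟩ with ha
  set b : Fin n := ⟨i + 1, h⟩ with hb
  rw [psiD]
  by_cases hc : 1 < Nat.dist (pval n u⁻¹ i) (pval n u⁻¹ (i + 1))
  · rw [if_pos hc]
    refine ⟨?_, hv, by simp only; rw [mul_assoc, huv]⟩
    rw [← hu]
    apply des_swap_mul a b rfl u
    rwa [pval_lt _ _ _ (Nat.lt_of_succ_lt h), pval_lt _ _ _ h] at hc
  · rw [if_neg hc]
    have hab : u⁻¹ a ≠ u⁻¹ b := by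
      simp [Fin.ext_iff, ha, hb]
    have hne : ((u⁻¹ a : Fin n) : ℕ) ≠ ((u⁻¹ b : Fin n) : ℕ) := fun e => hab (Fin.ext e)
    have hcv : ¬ 1 < Nat.dist ((u⁻¹ a : Fin n) : ℕ) ((u⁻¹ b : Fin n) : ℕ) := by
      rwa [pval_lt _ _ _ (Nat.lt_of_succ_lt h), pval_lt _ _ _ h] at hc
    have hc' : Nat.dist (u⁻¹ a : Fin n) (u⁻¹ b : Fin n) = 1 := by
      simp only [Nat.dist] at hcv ⊢
      omega
    have ht : u⁻¹ * sT n i h * u = Equiv.swap (u⁻¹ a) (u⁻¹ b) := by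
      rw [sT, ← ha, ← hb, Equiv.swap_apply_apply]
      group
    have hdv : 1 < Nat.dist (v⁻¹ (u⁻¹ a) : Fin n) (v⁻¹ (u⁻¹ b) : Fin n) := by
      have e1 : v⁻¹ (u⁻¹ a) = σ⁻¹ a := by rw [← huv]; simp
      have e2 : v⁻¹ (u⁻¹ b) = σ⁻¹ b := by rw [← huv]; simp
      rw [e1, e2]
      rwa [pval_lt _ _ _ (Nat.lt_of_succ_lt h), pval_lt _ _ _ h] at hd
    have hdes : Des n (u⁻¹ * sT n i h * u * v) = Des n v := by
      rw [ht]
      rcases Nat.lt_or_ge (u⁻¹ a : Fin n) (u⁻¹ b : Fin n) with hlt | hge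
      · have : ((u⁻¹ a : Fin n) : ℕ) + 1 = ((u⁻¹ b : Fin n) : ℕ) := by
          simp only [Nat.dist] at hc'; omega
        exact des_swap_mul _ _ this v hdv
      · have : ((u⁻¹ b : Fin n) : ℕ) + 1 = ((u⁻¹ a : Fin n) : ℕ) := by
          simp only [Nat.dist] at hc'; omega
        rw [Equiv.swap_comm]
        exact des_swap_mul _ _ this v (by rwa [Nat.dist_comm] at hdv)
    refine ⟨hu, by rw [← hv]; exact hdes, ?_⟩
    simp only
    rw [← huv]
    group

/-- Atkinson's lemma: if `|σ⁻¹(i) - σ⁻¹(i+1)| > 1`, then `ψ_i` is a bijection from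
`D(C,D,σ)` onto `D(C,D,s_i σ)`. -/
theorem atkinson_bijOn (n : ℕ) (C D : Finset ℕ) (σ : Equiv.Perm (Fin n)) (i : ℕ)
    (h : i + 1 < n) (hd : 1 < Nat.dist (pval n σ⁻¹ i) (pval n σ⁻¹ (i + 1))) :
    Set.BijOn (psiD n i h) (DTriple n C D σ) (DTriple n C D (sT n i h * σ)) := by
  have h1 := psi_mapsTo n C D σ i h hd
  have hd' : 1 < Nat.dist (pval n (sT n i h * σ)⁻¹ i) (pval n (sT n i h * σ)⁻¹ (i + 1)) := by
    rw [(pval_sT_mul_inv n i h σ).1, (pval_sT_mul_inv n i h σ).2, Nat.dist_comm]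
    exact hd
  have h2 := psi_mapsTo n C D (sT n i h * σ) i h hd'
  rw [show sT n i h * (sT n i h * σ) = σ by
    rw [← mul_assoc, sT, Equiv.swap_mul_self, one_mul]] at h2
  refine ⟨h1, ?_, ?_⟩
  · intro p hp q hq hpq
    have := congrArg (psiD n i h) hpq
    rwa [psi_invol, psi_invol] at this
  · intro q hq
    exact ⟨psiD n i h q, h2 hq, psi_invol n i h q⟩
end

section
/- The span of the elements d_c = Σ_{D(σ)=c} σ, over all compositions c of n, is a subalgebra of the group algebra of S_n (the descent algebra): for compositions c, d of n, the product d_c d_d is an integer linear combination of the elements d_e, with coefficient of d_e equal to |{(u,v) : D(u)=c, D(v)=d, uv=σ}| for any fixed σ with D(σ)=e. -/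
/-- The descent-algebra basis element `d_C = Σ_{Des σ = C} σ` in the group algebra. -/
noncomputable def dElt (n : ℕ) (C : Finset ℕ) : MonoidAlgebra ℤ (Equiv.Perm (Fin n)) :=
  ∑ σ ∈ Finset.univ.filter (fun σ : Equiv.Perm (Fin n) => Des n σ = C),
    MonoidAlgebra.of ℤ (Equiv.Perm (Fin n)) σ

namespace SolomonAux

open Finset

/-! ### The block-index function of a set of cut positions -/

/-- `beta C i` = number of elements of `C` below `i` (the block index of position `i`
for the set composition cut after each position in `C`). -/
def beta (C : Finset ℕ) (i : ℕ) : ℕ := ((Finset.range i).filter (· ∈ C)).card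

lemma beta_mono (C : Finset ℕ) : Monotone (beta C) := fun a b h =>
  Finset.card_le_card (Finset.filter_subset_filter _ (by simpa using Finset.range_subset_range.2 h))

lemma beta_le (C : Finset ℕ) (i : ℕ) : beta C i ≤ i :=
  le_trans (Finset.card_le_card (Finset.filter_subset _ _)) (by simp)

lemma beta_succ (C : Finset ℕ) (i : ℕ) :
    beta C (i + 1) = if i ∈ C then beta C i + 1 else beta C i := by
  unfold beta
  rw [Finset.range_add_one, Finset.filter_insert]
  split
  · rw [Finset.card_insert_of_notMem (by simp)]
  · rfl

lemma not_mem_of_beta_eq {C : Finset ℕ} {p q i : ℕ} (hpq : beta C p = beta C q)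
    (h1 : p ≤ i) (h2 : i < q) (hiC : i ∈ C) : False := by
  have h3 : beta C (i + 1) ≤ beta C q := beta_mono C h2
  have h4 : beta C p ≤ beta C i := beta_mono C h1
  rw [beta_succ, if_pos hiC] at h3
  omega

/-! ### Membership in `Des` -/

lemma mem_Des_iff {n : ℕ} {σ : Equiv.Perm (Fin n)} {i : ℕ} (hi : i + 1 < n) :
    i ∈ Des n σ ↔ (σ ⟨i + 1, hi⟩ : ℕ) < (σ ⟨i, Nat.lt_of_succ_lt hi⟩ : ℕ) := by
  unfold Des pval
  rw [Finset.mem_filter, dif_pos hi, dif_pos (Nat.lt_of_succ_lt hi)]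
  constructor
  · rintro ⟨-, h⟩; exact h
  · intro h; exact ⟨Finset.mem_range.2 (by omega), h⟩

lemma mem_Des_succ_lt {n : ℕ} {σ : Equiv.Perm (Fin n)} {i : ℕ} (h : i ∈ Des n σ) :
    i + 1 < n := by
  have := (Finset.mem_filter.1 h).1
  rw [Finset.mem_range] at this
  omega

/-! ### Permutations with descent set inside `C` are increasing on `beta C`-blocks -/

lemma adj_lt {n : ℕ} {C : Finset ℕ} {x : Equiv.Perm (Fin n)} (hx : Des n x ⊆ C)
    {i : ℕ} (hi : i + 1 < n) (hiC : i ∉ C) :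
    (x ⟨i, Nat.lt_of_succ_lt hi⟩ : ℕ) < x ⟨i + 1, hi⟩ := by
  by_contra h
  have hne : (x ⟨i, Nat.lt_of_succ_lt hi⟩ : ℕ) ≠ x ⟨i + 1, hi⟩ := by
    intro e
    have := x.injective (Fin.ext e)
    simp [Fin.ext_iff] at this
  have hlt : (x ⟨i + 1, hi⟩ : ℕ) < x ⟨i, Nat.lt_of_succ_lt hi⟩ := by omega
  exact hiC (hx ((mem_Des_iff hi).2 hlt))

lemma block_incr {n : ℕ} {C : Finset ℕ} {x : Equiv.Perm (Fin n)} (hx : Des n x ⊆ C) :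
    ∀ q (hq : q < n) p (hp : p < q), beta C p = beta C q →
      (x ⟨p, lt_trans hp hq⟩ : ℕ) < x ⟨q, hq⟩ := by
  intro q
  induction q with
  | zero => omega
  | succ q ih =>
    intro hq p hp hb
    have hq' : q < n := by omega
    have hbq : beta C q = beta C (q + 1) := by
      have h1 : beta C p ≤ beta C q := beta_mono C (by omega)
      have h2 : beta C q ≤ beta C (q + 1) := beta_mono C (by omega)
      omega
    have hqC : q ∉ C := by
      intro hqC
      rw [beta_succ, if_pos hqC] at hbq
      omega
    rcases eq_or_lt_of_le (Nat.lt_succ_iff.1 hp) with rfl | hlt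
    · exact adj_lt hx hq hqC
    · have h1 := ih hq' p hlt (by omega)
      have h2 := adj_lt hx hq hqC
      omega

lemma des_subset_of_block_incr {n : ℕ} {C : Finset ℕ} {x : Equiv.Perm (Fin n)}
    (h : ∀ q (hq : q < n) p (hp : p < q), beta C p = beta C q →
      (x ⟨p, lt_trans hp hq⟩ : ℕ) < x ⟨q, hq⟩) :
    Des n x ⊆ C := by
  intro i hi
  have hi1 := mem_Des_succ_lt hi
  by_contra hiC
  have hb : beta C i = beta C (i + 1) := by rw [beta_succ, if_neg hiC]
  have h1 := h (i + 1) hi1 i (Nat.lt_succ_self i) hb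
  have h2 := (mem_Des_iff hi1).1 hi
  omega

/-- The positions of a permutation with `Des ⊆ C` are ordered lexicographically by
(block of the position, value). -/
lemma lex_iff {n : ℕ} {C : Finset ℕ} {x : Equiv.Perm (Fin n)} (hx : Des n x ⊆ C)
    (p q : Fin n) (hne : p ≠ q) :
    p < q ↔ (beta C p < beta C q ∨ (beta C p = beta C q ∧ x p < x q)) := by
  have key : ∀ a b : Fin n, a < b → beta C a = beta C b → x a < x b := by
    intro a b hab hbeta
    have := block_incr hx b b.isLt a (Fin.lt_def.1 hab) hbeta
    simp only [Fin.eta] at this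
    exact Fin.lt_def.2 this
  constructor
  · intro hpq
    have h1 : beta C p ≤ beta C q := beta_mono C (Fin.le_def.1 hpq.le)
    rcases eq_or_lt_of_le h1 with he | hl
    · exact Or.inr ⟨he, key p q hpq he⟩
    · exact Or.inl hl
  · intro h
    rcases lt_trichotomy p q with h' | h' | h'
    · exact h'
    · exact absurd h' hne
    · exfalso
      have h1 : beta C q ≤ beta C p := beta_mono C (Fin.le_def.1 h'.le)
      rcases h with hl | ⟨he, hv⟩
      · omega
      · exact absurd (key q p h' he.symm) (lt_asymm hv)

lemma lex_iff' {n : ℕ} {C : Finset ℕ} {x : Equiv.Perm (Fin n)} (hx : Des n x ⊆ C)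
    (v v' : Fin n) (hne : v ≠ v') :
    x⁻¹ v < x⁻¹ v' ↔ (beta C (x⁻¹ v) < beta C (x⁻¹ v') ∨
      (beta C (x⁻¹ v) = beta C (x⁻¹ v') ∧ v < v')) := by
  have h := lex_iff hx (x⁻¹ v) (x⁻¹ v') (fun e => hne (by simpa using congrArg x e))
  simpa using h

/-! ### A strictly monotone permutation is the identity -/

lemma strictMono_eq_one {n : ℕ} (σ : Equiv.Perm (Fin n)) (h : StrictMono ⇑σ) : σ = 1 := by
  haveI : WellFoundedLT (Fin n) := Finite.to_wellFoundedLT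
  have h2 : ⇑σ = (id : Fin n → Fin n) :=
    (StrictMono.range_inj h strictMono_id).1
      (by rw [Set.range_eq_univ.2 σ.surjective, Set.range_id])
  exact Equiv.ext fun i => congrFun h2 i

/-! ### Monotone functions with equal fiber cardinalities are equal -/

lemma mono_card_le {n : ℕ} {g : Fin n → ℕ} (hg : Monotone g) (p : Fin n) (k : ℕ) :
    g p ≤ k ↔ (p : ℕ) < (univ.filter fun i => g i ≤ k).card := by
  constructor
  · intro h
    have hsub : Finset.Iic p ⊆ univ.filter fun i => g i ≤ k := fun i hi =>
      mem_filter.2 ⟨mem_univ _, le_trans (hg (mem_Iic.1 hi)) h⟩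
    have := Finset.card_le_card hsub
    rw [Fin.card_Iic] at this
    omega
  · intro h
    by_contra hgp
    push_neg at hgp
    have hsub : (univ.filter fun i => g i ≤ k) ⊆ Finset.Iio p := by
      intro i hi
      rw [mem_filter] at hi
      rw [mem_Iio]
      by_contra hip
      push_neg at hip
      exact absurd (le_trans (hg hip) hi.2) (by omega)
    have := Finset.card_le_card hsub
    rw [Fin.card_Iio] at this
    omega

lemma cum_eq {n : ℕ} {g h : Fin n → ℕ}
    (hf : ∀ k, (univ.filter fun i => g i = k).card = (univ.filter fun i => h i = k).card)
    (k : ℕ) :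
    (univ.filter fun i => g i ≤ k).card = (univ.filter fun i => h i ≤ k).card := by
  have key : ∀ g : Fin n → ℕ, (univ.filter fun i => g i ≤ k).card =
      ∑ j ∈ range (k + 1), (univ.filter fun i => g i = j).card := by
    intro g
    rw [Finset.card_eq_sum_card_fiberwise
      (f := g) (t := range (k + 1)) (fun x hx => mem_range.2 (by
        have := (mem_filter.1 hx).2; omega))]
    apply Finset.sum_congr rfl
    intro j hj
    congr 1
    rw [filter_filter]
    apply filter_congr
    intro i _
    rw [mem_range] at hj
    constructor
    · rintro ⟨-, h2⟩; exact h2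
    · intro h2; exact ⟨by omega, h2⟩
  rw [key g, key h]
  exact Finset.sum_congr rfl fun j _ => hf j

lemma mono_fiber_eq {n : ℕ} {g h : Fin n → ℕ} (hg : Monotone g) (hh : Monotone h)
    (hf : ∀ k, (univ.filter fun i => g i = k).card = (univ.filter fun i => h i = k).card) :
    g = h := by
  funext p
  have H : ∀ k, (g p ≤ k ↔ h p ≤ k) := fun k => by
    rw [mono_card_le hg, mono_card_le hh, cum_eq hf]
  exact le_antisymm ((H (h p)).2 le_rfl) ((H (g p)).1 le_rfl)

/-! ### The two sides of the main bijection -/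

open scoped Classical in
/-- Permutations `x` with `Des x ⊆ C` and `Des (x⁻¹ w) ⊆ D`. -/
noncomputable def TSet (n : ℕ) (C D : Finset ℕ) (w : Equiv.Perm (Fin n)) :
    Finset (Equiv.Perm (Fin n)) :=
  univ.filter fun x => Des n x ⊆ C ∧ Des n (x⁻¹ * w) ⊆ D

open scoped Classical in
/-- "Colorings" of positions: functions with the fiber sizes of `beta C`, weakly
increasing outside `D`, strictly where `E` has a descent. -/
noncomputable def goodPsi (n : ℕ) (C D E : Finset ℕ) : Finset (Fin n → Fin n) :=
  univ.filter fun ψ =>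
    (∀ k : ℕ, (univ.filter fun i => (ψ i : ℕ) = k).card =
        (univ.filter fun i : Fin n => beta C i = k).card) ∧
    (∀ i : ℕ, ∀ hi : i + 1 < n, i ∉ D →
      ψ ⟨i, Nat.lt_of_succ_lt hi⟩ ≤ ψ ⟨i + 1, hi⟩ ∧
        (i ∈ E → ψ ⟨i, Nat.lt_of_succ_lt hi⟩ < ψ ⟨i + 1, hi⟩))

lemma fiber_comp {n : ℕ} (e : Equiv.Perm (Fin n)) (f : Fin n → ℕ) (k : ℕ) :
    (univ.filter fun i => f (e i) = k).card = (univ.filter fun i => f i = k).card := by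
  apply Finset.card_bij' (i := fun a _ => e a) (j := fun b _ => e⁻¹ b)
  · intro a ha
    rw [mem_filter] at ha ⊢
    exact ⟨mem_univ _, ha.2⟩
  · intro b hb
    rw [mem_filter] at hb ⊢
    refine ⟨mem_univ _, ?_⟩
    simpa using hb.2
  · intro a _; simp
  · intro b _; simp

lemma card_TSet (n : ℕ) (C D : Finset ℕ) (w : Equiv.Perm (Fin n)) :
    (TSet n C D w).card = (goodPsi n C D (Des n w)).card := by
  classical
  apply Finset.card_bij
    (i := fun x _ => fun i : Fin n =>
      (⟨beta C ((x⁻¹ * w) i), lt_of_le_of_lt (beta_le C _) (Fin.is_lt _)⟩ : Fin n))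
  -- maps to
  · intro x hx
    rw [TSet, mem_filter] at hx
    obtain ⟨-, hx1, hx2⟩ := hx
    rw [goodPsi, mem_filter]
    refine ⟨mem_univ _, ?_, ?_⟩
    · intro k
      simpa using fiber_comp (x⁻¹ * w) (fun j : Fin n => beta C (j : ℕ)) k
    · intro i hi hiD
      set p := (x⁻¹ * w) ⟨i, Nat.lt_of_succ_lt hi⟩ with hp
      set q := (x⁻¹ * w) ⟨i + 1, hi⟩ with hq
      have hpq : p ≠ q := by
        intro e
        have := (x⁻¹ * w).injective e
        simp [Fin.ext_iff] at this
      have hplt : p < q := by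
        have hnd : i ∉ Des n (x⁻¹ * w) := fun hmem => hiD (hx2 hmem)
        rw [mem_Des_iff hi] at hnd
        push_neg at hnd
        have hne' : (p : ℕ) ≠ q := fun e => hpq (Fin.ext e)
        rw [Fin.lt_def]
        rw [← hp, ← hq] at hnd
        omega
      have hlex := (lex_iff hx1 p q hpq).1 hplt
      have hxp : x p = w ⟨i, Nat.lt_of_succ_lt hi⟩ := by
        rw [hp]; simp [Equiv.Perm.mul_apply]
      have hxq : x q = w ⟨i + 1, hi⟩ := by
        rw [hq]; simp [Equiv.Perm.mul_apply]
      constructor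
      · rw [Fin.le_def]
        simp only []
        rcases hlex with h | ⟨he, -⟩
        · exact le_of_lt h
        · exact le_of_eq he
      · intro hiE
        rw [Fin.lt_def]
        simp only []
        rcases hlex with h | ⟨he, hv⟩
        · exact h
        · exfalso
          rw [mem_Des_iff hi] at hiE
          rw [hxp, hxq, Fin.lt_def] at hv
          omega
  -- injective
  · intro x1 hx1 x2 hx2 he
    rw [TSet, mem_filter] at hx1 hx2
    have hbeq : ∀ v : Fin n, beta C ((x1⁻¹ v : Fin n) : ℕ) = beta C ((x2⁻¹ v : Fin n) : ℕ) := by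
      intro v
      have h0 := congrFun he (w⁻¹ v)
      rw [Fin.mk.injEq] at h0
      simpa [Equiv.Perm.mul_apply] using h0
    have hsm : StrictMono ⇑(x1⁻¹ * x2) := by
      intro p q hpq
      have hne : x2 p ≠ x2 q := fun e => (ne_of_lt hpq) (x2.injective e)
      have h1 : x2⁻¹ (x2 p) < x2⁻¹ (x2 q) := by simpa using hpq
      have h2 := (lex_iff' hx2.2.1 (x2 p) (x2 q) hne).1 h1
      have h3 := (lex_iff' hx1.2.1 (x2 p) (x2 q) hne).2 (by
        rw [hbeq (x2 p), hbeq (x2 q)]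
        exact h2)
      simpa [Equiv.Perm.mul_apply] using h3
    have h1 : x1⁻¹ * x2 = 1 := strictMono_eq_one _ hsm
    exact inv_mul_eq_one.1 h1
  -- surjective
  · intro ψ hψ
    rw [goodPsi, mem_filter] at hψ
    obtain ⟨-, hfib, hmon⟩ := hψ
    set key : Fin n → ℕ ×ₗ ℕ := fun v => toLex ((ψ (w⁻¹ v) : ℕ), (v : ℕ)) with hkey
    have hkeyinj : Function.Injective key := by
      intro v v' e
      simp only [hkey] at e
      have h2 : ((ψ (w⁻¹ v) : ℕ), (v : ℕ)) = ((ψ (w⁻¹ v') : ℕ), (v' : ℕ)) := e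
      exact Fin.ext (congrArg Prod.snd h2)
    set x := Tuple.sort key with hxdef
    have hmono : Monotone (key ∘ ⇑x) := Tuple.monotone_sort key
    have hsm : StrictMono (key ∘ ⇑x) := hmono.strictMono_of_injective (hkeyinj.comp x.injective)
    have hφmono : Monotone (fun p : Fin n => (ψ (w⁻¹ (x p)) : ℕ)) := by
      intro p q hpq
      have h0 := hmono hpq
      simp only [hkey, Function.comp] at h0
      rw [Prod.Lex.le_iff] at h0
      rcases h0 with h | ⟨h, -⟩
      · exact le_of_lt h
      · exact le_of_eq h
    have hβ : (fun p : Fin n => (ψ (w⁻¹ (x p)) : ℕ)) = fun p : Fin n => beta C (p : ℕ) := by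
      apply mono_fiber_eq hφmono (fun p q h => beta_mono C (Fin.le_def.1 h))
      intro k
      have h1 := fiber_comp (w⁻¹ * x) (fun j : Fin n => (ψ j : ℕ)) k
      have h2 : (univ.filter fun i : Fin n => (ψ (w⁻¹ (x i)) : ℕ) = k).card
          = (univ.filter fun i : Fin n => (ψ ((w⁻¹ * x) i) : ℕ) = k).card := by
        congr 1
      rw [h2, h1]
      exact hfib k
    have hdx : Des n x ⊆ C := by
      apply des_subset_of_block_incr
      intro q hq p hp hb
      have hlt : (⟨p, lt_trans hp hq⟩ : Fin n) < ⟨q, hq⟩ := by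
        rw [Fin.lt_def]; exact hp
      have h0 := hsm hlt
      simp only [hkey, Function.comp] at h0
      rw [Prod.Lex.lt_iff] at h0
      rcases h0 with h | ⟨-, h2⟩
      · exfalso
        have e1 := congrFun hβ ⟨p, lt_trans hp hq⟩
        have e2 := congrFun hβ ⟨q, hq⟩
        simp only [] at e1 e2 h
        rw [e1, e2] at h
        simp only [ofLex_toLex, Fin.val_mk] at h
        omega
      · exact h2
    have hdy : Des n (x⁻¹ * w) ⊆ D := by
      intro i hi
      by_contra hiD
      have hi1 := mem_Des_succ_lt hi
      obtain ⟨hle, hstr⟩ := hmon i hi1 hiD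
      rw [mem_Des_iff hi1] at hi
      set p := (x⁻¹ * w) ⟨i + 1, hi1⟩ with hp
      set q := (x⁻¹ * w) ⟨i, Nat.lt_of_succ_lt hi1⟩ with hq
      have hplt : p < q := Fin.lt_def.2 hi
      have h0 := hsm hplt
      simp only [hkey, Function.comp] at h0
      rw [Prod.Lex.lt_iff] at h0
      have hxp : x p = w ⟨i + 1, hi1⟩ := by rw [hp]; simp [Equiv.Perm.mul_apply]
      have hxq : x q = w ⟨i, Nat.lt_of_succ_lt hi1⟩ := by
        rw [hq]; simp [Equiv.Perm.mul_apply]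
      rw [hxp, hxq] at h0
      simp only [Equiv.Perm.inv_def, Equiv.symm_apply_apply, ofLex_toLex] at h0
      rcases h0 with h | ⟨hel, hv⟩
      · rw [Fin.le_def] at hle
        omega
      · have hw : i ∈ Des n w := by
          rw [mem_Des_iff hi1]
          exact hv
        have := hstr hw
        rw [Fin.lt_def] at this
        omega
    refine ⟨x, ?_, ?_⟩
    · rw [TSet, mem_filter]
      exact ⟨mem_univ _, hdx, hdy⟩
    · funext i
      apply Fin.ext
      show beta C (((x⁻¹ * w) i : Fin n) : ℕ) = (ψ i : ℕ)
      have h0 := congrFun hβ ((x⁻¹ * w) i)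
      rw [← h0]
      congr 1
      simp [Equiv.Perm.mul_apply]

/-! ### Counting factorizations -/

open scoped Classical in
noncomputable def fCnt (n : ℕ) (C D : Finset ℕ) (σ : Equiv.Perm (Fin n)) : ℕ :=
  (univ.filter fun p : Equiv.Perm (Fin n) × Equiv.Perm (Fin n) =>
    Des n p.1 = C ∧ Des n p.2 = D ∧ p.1 * p.2 = σ).card

open scoped Classical in
noncomputable def gCnt (n : ℕ) (C D : Finset ℕ) (σ : Equiv.Perm (Fin n)) : ℕ :=
  (univ.filter fun p : Equiv.Perm (Fin n) × Equiv.Perm (Fin n) =>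
    Des n p.1 ⊆ C ∧ Des n p.2 ⊆ D ∧ p.1 * p.2 = σ).card

lemma gCnt_eq_card_TSet (n : ℕ) (C D : Finset ℕ) (w : Equiv.Perm (Fin n)) :
    gCnt n C D w = (TSet n C D w).card := by
  classical
  apply Finset.card_bij' (i := fun p _ => p.1) (j := fun x _ => (x, x⁻¹ * w))
  · intro p hp
    rw [mem_filter] at hp
    obtain ⟨-, h1, h2, h3⟩ := hp
    rw [TSet, mem_filter]
    refine ⟨mem_univ _, h1, ?_⟩
    have : p.1⁻¹ * w = p.2 := by rw [← h3]; group
    rwa [this]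
  · intro x hx
    rw [TSet, mem_filter] at hx
    obtain ⟨-, h1, h2⟩ := hx
    rw [mem_filter]
    exact ⟨mem_univ _, h1, h2, by group⟩
  · intro p hp
    rw [mem_filter] at hp
    obtain ⟨-, h1, h2, h3⟩ := hp
    have hpe : p.1⁻¹ * w = p.2 := by rw [← h3]; group
    rw [hpe]
  · intro x _; rfl

lemma gdep (n : ℕ) (C D : Finset ℕ) (σ τ : Equiv.Perm (Fin n))
    (h : Des n σ = Des n τ) : gCnt n C D σ = gCnt n C D τ := by
  rw [gCnt_eq_card_TSet, gCnt_eq_card_TSet, card_TSet, card_TSet, h]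

lemma partition (n : ℕ) (C D : Finset ℕ) (σ : Equiv.Perm (Fin n)) :
    gCnt n C D σ = ∑ q ∈ C.powerset ×ˢ D.powerset, fCnt n q.1 q.2 σ := by
  classical
  rw [gCnt, Finset.card_eq_sum_card_fiberwise
    (f := fun p : Equiv.Perm (Fin n) × Equiv.Perm (Fin n) => (Des n p.1, Des n p.2))
    (t := C.powerset ×ˢ D.powerset) (fun p hp => by
      rw [mem_coe, mem_filter] at hp
      rw [mem_coe, mem_product, mem_powerset, mem_powerset]
      exact ⟨hp.2.1, hp.2.2.1⟩)]
  apply Finset.sum_congr rfl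
  intro q hq
  rw [mem_product, mem_powerset, mem_powerset] at hq
  rw [fCnt, filter_filter]
  congr 1
  apply filter_congr
  intro p _
  rw [Prod.ext_iff]
  constructor
  · rintro ⟨⟨-, -, h3⟩, h4, h5⟩
    exact ⟨h4, h5, h3⟩
  · rintro ⟨h4, h5, h3⟩
    exact ⟨⟨h4 ▸ hq.1, h5 ▸ hq.2, h3⟩, h4, h5⟩

lemma fdep (n : ℕ) : ∀ N (C D : Finset ℕ), C.card + D.card = N →
    ∀ σ τ : Equiv.Perm (Fin n), Des n σ = Des n τ → fCnt n C D σ = fCnt n C D τ := by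
  intro N
  induction N using Nat.strong_induction_on with
  | _ N IH =>
    intro C D hN σ τ hst
    have hmem : (C, D) ∈ C.powerset ×ˢ D.powerset := by
      rw [Finset.mem_product, mem_powerset, mem_powerset]
      exact ⟨Finset.Subset.refl _, Finset.Subset.refl _⟩
    have hpartσ := partition n C D σ
    have hpartτ := partition n C D τ
    rw [← Finset.add_sum_erase _ _ hmem] at hpartσ hpartτ
    have hA : gCnt n C D σ = fCnt n C D σ +
        ∑ q ∈ (C.powerset ×ˢ D.powerset).erase (C, D), fCnt n q.1 q.2 σ := hpartσ
    have hB : gCnt n C D τ = fCnt n C D τ +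
        ∑ q ∈ (C.powerset ×ˢ D.powerset).erase (C, D), fCnt n q.1 q.2 τ := hpartτ
    have hrest : ∑ q ∈ (C.powerset ×ˢ D.powerset).erase (C, D), fCnt n q.1 q.2 σ =
        ∑ q ∈ (C.powerset ×ˢ D.powerset).erase (C, D), fCnt n q.1 q.2 τ := by
      apply Finset.sum_congr rfl
      intro q hq
      have hq' := Finset.mem_of_mem_erase hq
      have hne := Finset.ne_of_mem_erase hq
      rw [Finset.mem_product, mem_powerset, mem_powerset] at hq'
      have hc1 := Finset.card_le_card hq'.1
      have hc2 := Finset.card_le_card hq'.2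
      have hlt : q.1.card + q.2.card < N := by
        rcases lt_or_eq_of_le (Nat.add_le_add hc1 hc2) with h | h
        · omega
        · exfalso
          have e1 : q.1 = C := Finset.eq_of_subset_of_card_le hq'.1 (by omega)
          have e2 : q.2 = D := Finset.eq_of_subset_of_card_le hq'.2 (by omega)
          exact hne (Prod.ext e1 e2)
      exact IH _ hlt q.1 q.2 rfl σ τ hst
    have hg := gdep n C D σ τ hst
    omega

lemma lhs_eq (n : ℕ) (C D : Finset ℕ) :
    dElt n C * dElt n D =
      ∑ σ ∈ univ, (fCnt n C D σ) • MonoidAlgebra.of ℤ (Equiv.Perm (Fin n)) σ := by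
  classical
  rw [dElt, dElt, Finset.sum_mul_sum]
  have step1 : ∀ u v : Equiv.Perm (Fin n),
      (MonoidAlgebra.of ℤ (Equiv.Perm (Fin n)) u) * (MonoidAlgebra.of ℤ (Equiv.Perm (Fin n)) v)
        = MonoidAlgebra.of ℤ (Equiv.Perm (Fin n)) (u * v) := fun u v => (map_mul _ u v).symm
  simp_rw [step1]
  rw [← Finset.sum_product']
  rw [← Finset.sum_fiberwise_of_maps_to
    (g := fun p : Equiv.Perm (Fin n) × Equiv.Perm (Fin n) => p.1 * p.2)
    (t := univ) (fun p _ => mem_univ _)]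
  apply Finset.sum_congr rfl
  intro σ _
  have hc : ∀ p ∈ ((univ.filter fun u : Equiv.Perm (Fin n) => Des n u = C) ×ˢ
      (univ.filter fun v : Equiv.Perm (Fin n) => Des n v = D)).filter
        (fun p => p.1 * p.2 = σ),
      MonoidAlgebra.of ℤ (Equiv.Perm (Fin n)) (p.1 * p.2)
        = MonoidAlgebra.of ℤ (Equiv.Perm (Fin n)) σ := fun p hp => by
    rw [(mem_filter.1 hp).2]
  rw [Finset.sum_congr rfl hc, Finset.sum_const]
  congr 1
  rw [fCnt]
  congr 1
  ext p
  simp only [mem_filter, mem_product, mem_univ, true_and]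
  tauto

lemma rhs_eq (n : ℕ) (a : Finset ℕ → ℤ) :
    ∑ E ∈ (range (n - 1)).powerset, a E • dElt n E =
      ∑ σ ∈ univ, a (Des n σ) • MonoidAlgebra.of ℤ (Equiv.Perm (Fin n)) σ := by
  classical
  have h2 : ∀ E ∈ (range (n - 1)).powerset, a E • dElt n E =
      ∑ σ ∈ univ.filter (fun σ : Equiv.Perm (Fin n) => Des n σ = E),
        a (Des n σ) • MonoidAlgebra.of ℤ (Equiv.Perm (Fin n)) σ := by
    intro E _
    rw [dElt, Finset.smul_sum]
    exact Finset.sum_congr rfl fun σ hσ => by rw [(mem_filter.1 hσ).2]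
  rw [Finset.sum_congr rfl h2]
  exact Finset.sum_fiberwise_of_maps_to
    (fun σ _ => mem_powerset.2 (fun i hi => (mem_filter.1 hi).1)) _

end SolomonAux

/-- Solomon's theorem: the span of the `d_C` is a subalgebra of the group algebra,
with structure constants counting factorizations with prescribed descent sets. -/
theorem descent_algebra_structure (n : ℕ) (C D : Finset ℕ) :
    ∃ a : Finset ℕ → ℤ,
      dElt n C * dElt n D = ∑ E ∈ (Finset.range (n - 1)).powerset, a E • dElt n E ∧
      ∀ E ∈ (Finset.range (n - 1)).powerset, ∀ σ : Equiv.Perm (Fin n), Des n σ = E →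
        a E = ((Finset.univ.filter
          fun p : Equiv.Perm (Fin n) × Equiv.Perm (Fin n) =>
            Des n p.1 = C ∧ Des n p.2 = D ∧ p.1 * p.2 = σ).card : ℤ) := by
  classical
  open SolomonAux in
  refine ⟨fun E => if h : ∃ σ : Equiv.Perm (Fin n), Des n σ = E
      then (SolomonAux.fCnt n C D h.choose : ℤ) else 0, ?_, ?_⟩
  · rw [SolomonAux.lhs_eq, SolomonAux.rhs_eq]
    apply Finset.sum_congr rfl
    intro σ _
    have hex : ∃ τ : Equiv.Perm (Fin n), Des n τ = Des n σ := ⟨σ, rfl⟩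
    rw [dif_pos hex]
    have hch : SolomonAux.fCnt n C D hex.choose = SolomonAux.fCnt n C D σ :=
      SolomonAux.fdep n _ C D rfl _ σ hex.choose_spec
    rw [hch, Nat.cast_smul_eq_nsmul]
  · intro E hE σ hσ
    have hex : ∃ τ : Equiv.Perm (Fin n), Des n τ = E := ⟨σ, hσ⟩
    beta_reduce
    rw [dif_pos hex]
    have hch : SolomonAux.fCnt n C D hex.choose = SolomonAux.fCnt n C D σ :=
      SolomonAux.fdep n _ C D rfl _ σ (hex.choose_spec.trans hσ.symm)
    rw [hch]
    norm_cast
end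

section
/- The span of the elements p°_c = Σ_{P°(σ)=c} σ, over all interior peak compositions c of n, is a (non-unital) subalgebra of the descent algebra of S_n. -/
/-- The (0-based) interior peak set of a permutation. -/
def IPeak (n : ℕ) (σ : Equiv.Perm (Fin n)) : Finset ℕ :=
  (Finset.Ioo 0 (n - 1)).filter fun i =>
    pval n σ (i - 1) < pval n σ i ∧ pval n σ (i + 1) < pval n σ i

/-- The peak element `p°_I = Σ_{Peak°(σ) = I} σ`. -/
noncomputable def pElt (n : ℕ) (I : Finset ℕ) : MonoidAlgebra ℤ (Equiv.Perm (Fin n)) :=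
  ∑ σ ∈ Finset.univ.filter (fun σ : Equiv.Perm (Fin n) => IPeak n σ = I),
    MonoidAlgebra.of ℤ (Equiv.Perm (Fin n)) σ

namespace Peaks

variable {n : ℕ}

theorem _root_.Equiv.Perm.inv_apply_self {α : Type*} (f : Equiv.Perm α) (x : α) : f⁻¹ (f x) = x :=
  f.symm_apply_apply x

theorem _root_.Equiv.Perm.apply_inv_self {α : Type*} (f : Equiv.Perm α) (x : α) : f (f⁻¹ x) = x :=
  f.apply_symm_apply x

/-- swap of the values `j`, `j+1` on ℕ. -/
def swapN (j v : ℕ) : ℕ := if v = j then j + 1 else if v = j + 1 then j else v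

lemma pval_lt (σ : Equiv.Perm (Fin n)) {i : ℕ} (hi : i < n) :
    pval n σ i = (σ ⟨i, hi⟩ : ℕ) := by simp [pval, hi]

lemma pval_injOn (σ : Equiv.Perm (Fin n)) {i k : ℕ} (hi : i < n) (hk : k < n)
    (hik : i ≠ k) : pval n σ i ≠ pval n σ k := by
  rw [pval_lt σ hi, pval_lt σ hk]
  intro h
  exact hik (by simpa [Fin.ext_iff] using σ.injective (Fin.val_injective h))

lemma mem_Des {σ : Equiv.Perm (Fin n)} {i : ℕ} :
    i ∈ Des n σ ↔ i + 1 < n ∧ pval n σ (i + 1) < pval n σ i := by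
  simp only [Des, Finset.mem_filter, Finset.mem_range]
  constructor
  · rintro ⟨h1, h2⟩; exact ⟨by omega, h2⟩
  · rintro ⟨h1, h2⟩; exact ⟨by omega, h2⟩

lemma mem_IPeak {σ : Equiv.Perm (Fin n)} {i : ℕ} :
    i ∈ IPeak n σ ↔ 0 < i ∧ i + 1 < n ∧
      pval n σ (i - 1) < pval n σ i ∧ pval n σ (i + 1) < pval n σ i := by
  simp only [IPeak, Finset.mem_filter, Finset.mem_Ioo]
  constructor
  · rintro ⟨⟨h0, h1⟩, h2⟩; exact ⟨h0, by omega, h2⟩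
  · rintro ⟨h0, h1, h2⟩; exact ⟨⟨h0, by omega⟩, h2⟩

lemma pval_sT_mul (τ : Equiv.Perm (Fin n)) {j : ℕ} (h : j + 1 < n) {i : ℕ} (hi : i < n) :
    pval n (sT n j h * τ) i = swapN j (pval n τ i) := by
  rw [pval_lt _ hi, pval_lt _ hi]
  rw [sT, Equiv.Perm.mul_apply, Equiv.swap_apply_def, swapN]
  by_cases h1 : τ ⟨i, hi⟩ = ⟨j, Nat.lt_of_succ_lt h⟩
  · simp [h1, Fin.ext_iff]
  · by_cases h2 : τ ⟨i, hi⟩ = ⟨j + 1, h⟩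
    · have : (τ ⟨i, hi⟩ : ℕ) ≠ j := by simp [h2]
      simp [h1, h2, Fin.ext_iff, this]
    · have e1 : (τ ⟨i, hi⟩ : ℕ) ≠ j := fun hh => h1 (Fin.ext hh)
      have e2 : (τ ⟨i, hi⟩ : ℕ) ≠ j + 1 := fun hh => h2 (Fin.ext hh)
      simp [h1, h2, e1, e2]

/-- positions of the values j, j+1 in σ -/
def posOf (σ : Equiv.Perm (Fin n)) {j : ℕ} (hj : j < n) : ℕ := (σ⁻¹ ⟨j, hj⟩ : ℕ)

lemma pval_eq_iff_pos {σ : Equiv.Perm (Fin n)} {i j : ℕ} (hi : i < n) (hj : j < n) :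
    pval n σ i = j ↔ i = posOf σ hj := by
  rw [pval_lt σ hi, posOf]
  constructor
  · intro hh
    have : σ ⟨i, hi⟩ = ⟨j, hj⟩ := Fin.ext hh
    rw [← this, Equiv.Perm.inv_apply_self]
  · intro hh
    have : (⟨i, hi⟩ : Fin n) = σ⁻¹ ⟨j, hj⟩ := Fin.ext hh
    rw [this, Equiv.Perm.apply_inv_self]

lemma des_eq_of_cmp {σ σ' : Equiv.Perm (Fin n)}
    (H : ∀ i, i + 1 < n → (pval n σ' (i + 1) < pval n σ' i ↔ pval n σ (i + 1) < pval n σ i)) :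
    Des n σ' = Des n σ := by
  ext i
  rw [mem_Des, mem_Des]
  constructor
  · rintro ⟨h1, h2⟩; exact ⟨h1, (H i h1).1 h2⟩
  · rintro ⟨h1, h2⟩; exact ⟨h1, (H i h1).2 h2⟩

lemma ipeak_eq_of_cmp {σ σ' : Equiv.Perm (Fin n)}
    (H : ∀ i, i + 1 < n → (pval n σ' (i + 1) < pval n σ' i ↔ pval n σ (i + 1) < pval n σ i))
    (H' : ∀ i, i + 1 < n → (pval n σ' i < pval n σ' (i + 1) ↔ pval n σ i < pval n σ (i + 1))) :
    IPeak n σ' = IPeak n σ := by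
  ext i
  rw [mem_IPeak, mem_IPeak]
  constructor
  · rintro ⟨h0, h1, h2, h3⟩
    refine ⟨h0, h1, ?_, (H i h1).1 h3⟩
    have hi : i - 1 + 1 = i := by omega
    have := (H' (i - 1) (by omega)).1 (by rwa [hi])
    rwa [hi] at this
  · rintro ⟨h0, h1, h2, h3⟩
    refine ⟨h0, h1, ?_, (H i h1).2 h3⟩
    have hi : i - 1 + 1 = i := by omega
    have := (H' (i - 1) (by omega)).2 (by rwa [hi])
    rwa [hi] at this

lemma swapN_lt_iff {j x y : ℕ} (hxy : x ≠ y)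
    (hb : ¬((x = j ∨ x = j + 1) ∧ (y = j ∨ y = j + 1))) :
    (swapN j x < swapN j y ↔ x < y) := by
  unfold swapN; split_ifs <;> omega

lemma notboth (τ : Equiv.Perm (Fin n)) {j : ℕ} (h : j + 1 < n)
    (hna : ¬(posOf τ (Nat.lt_of_succ_lt h) = posOf τ h + 1 ∨
             posOf τ h = posOf τ (Nat.lt_of_succ_lt h) + 1))
    {i : ℕ} (hi : i + 1 < n) :
    ¬((pval n τ i = j ∨ pval n τ i = j + 1) ∧
      (pval n τ (i + 1) = j ∨ pval n τ (i + 1) = j + 1)) := by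
  rintro ⟨hx, hy⟩
  have hin : i < n := by omega
  rcases hx with hx | hx <;> rcases hy with hy | hy
  · exact pval_injOn τ hin hi (by omega) (hx.trans hy.symm)
  · -- i = pos j, i+1 = pos (j+1) : adjacent
    rw [pval_eq_iff_pos hin (Nat.lt_of_succ_lt h)] at hx
    rw [pval_eq_iff_pos hi h] at hy
    exact hna (Or.inr (by omega))
  · rw [pval_eq_iff_pos hin h] at hx
    rw [pval_eq_iff_pos hi (Nat.lt_of_succ_lt h)] at hy
    exact hna (Or.inl (by omega))
  · exact pval_injOn τ hin hi (by omega) (hx.trans hy.symm)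

lemma des_sT_of_nonadj (τ : Equiv.Perm (Fin n)) {j : ℕ} (h : j + 1 < n)
    (hna : ¬(posOf τ (Nat.lt_of_succ_lt h) = posOf τ h + 1 ∨
             posOf τ h = posOf τ (Nat.lt_of_succ_lt h) + 1)) :
    Des n (sT n j h * τ) = Des n τ := by
  apply des_eq_of_cmp
  intro i hi
  rw [pval_sT_mul τ h (show i < n by omega), pval_sT_mul τ h hi]
  exact swapN_lt_iff (pval_injOn τ hi (by omega) (by omega))
    (fun hh => notboth τ h hna hi ⟨hh.2, hh.1⟩)

lemma ipeak_sT_of_nonadj (τ : Equiv.Perm (Fin n)) {j : ℕ} (h : j + 1 < n)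
    (hna : ¬(posOf τ (Nat.lt_of_succ_lt h) = posOf τ h + 1 ∨
             posOf τ h = posOf τ (Nat.lt_of_succ_lt h) + 1)) :
    IPeak n (sT n j h * τ) = IPeak n τ := by
  apply ipeak_eq_of_cmp
  · intro i hi
    rw [pval_sT_mul τ h (show i < n by omega), pval_sT_mul τ h hi]
    exact swapN_lt_iff (pval_injOn τ hi (by omega) (by omega))
      (fun hh => notboth τ h hna hi ⟨hh.2, hh.1⟩)
  · intro i hi
    rw [pval_sT_mul τ h (show i < n by omega), pval_sT_mul τ h hi]
    exact swapN_lt_iff (pval_injOn τ (by omega) hi (by omega))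
      (fun hh => notboth τ h hna hi hh)

lemma swap01_peak {x y m : ℕ} (hxm : x ≠ m) (hym : y ≠ m) (hxy : x ≠ y) :
    (swapN 0 x < swapN 0 m ∧ swapN 0 y < swapN 0 m) ↔ (x < m ∧ y < m) := by
  unfold swapN; split_ifs <;> omega

lemma ipeak_sT_zero (τ : Equiv.Perm (Fin n)) (h : 0 + 1 < n) :
    IPeak n (sT n 0 h * τ) = IPeak n τ := by
  ext i
  rw [mem_IPeak, mem_IPeak]
  constructor
  · rintro ⟨h0, h1, h2, h3⟩
    refine ⟨h0, h1, ?_⟩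
    rw [pval_sT_mul τ h (show i - 1 < n by omega)] at h2
    rw [pval_sT_mul τ h (show i < n by omega)] at h2 h3
    rw [pval_sT_mul τ h (show i + 1 < n by omega)] at h3
    exact (swap01_peak (pval_injOn τ (by omega) (by omega) (by omega))
      (pval_injOn τ (by omega) (by omega) (by omega))
      (pval_injOn τ (by omega) (by omega) (by omega))).1 ⟨h2, h3⟩
  · rintro ⟨h0, h1, h2, h3⟩
    refine ⟨h0, h1, ?_, ?_⟩
    · rw [pval_sT_mul τ h (show i - 1 < n by omega), pval_sT_mul τ h (show i < n by omega)]
      exact ((swap01_peak (pval_injOn τ (by omega) (by omega) (by omega))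
        (pval_injOn τ (by omega) (by omega) (by omega))
        (pval_injOn τ (by omega) (by omega) (by omega))).2 ⟨h2, h3⟩).1
    · rw [pval_sT_mul τ h (show i + 1 < n by omega), pval_sT_mul τ h (show i < n by omega)]
      exact ((swap01_peak (pval_injOn τ (by omega) (by omega) (by omega))
        (pval_injOn τ (by omega) (by omega) (by omega))
        (pval_injOn τ (by omega) (by omega) (by omega))).2 ⟨h2, h3⟩).2

lemma des_sT_zero_toggle (w : Equiv.Perm (Fin n)) (h : 0 + 1 < n) {r : ℕ}
    (hr1 : r + 1 < n) (hw1 : pval n w r = 1) (hw0 : pval n w (r + 1) = 0) :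
    Des n (sT n 0 h * w) = Des n w \ {r} := by
  have h0n : (0:ℕ) < n := by omega
  have h1n : (1:ℕ) < n := by omega
  ext i
  rw [Finset.mem_sdiff, Finset.mem_singleton, mem_Des, mem_Des]
  by_cases hir : i = r
  · subst hir
    rw [pval_sT_mul w h hr1, pval_sT_mul w h (show i < n by omega), hw0, hw1]
    simp [swapN]
  · constructor
    · rintro ⟨h1, h2⟩
      rw [pval_sT_mul w h h1, pval_sT_mul w h (show i < n by omega)] at h2
      refine ⟨⟨h1, ?_⟩, hir⟩
      rwa [swapN_lt_iff (pval_injOn w h1 (by omega) (by omega)) ?_] at h2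
      rintro ⟨hx, hy⟩
      have e0 := (pval_eq_iff_pos hr1 h0n).1 hw0
      have e1 := (pval_eq_iff_pos (show r < n by omega) h1n).1 hw1
      rcases hx with hx | hx <;> rcases hy with hy | hy
      · exact pval_injOn w h1 (by omega) (by omega) (hx.trans hy.symm)
      · have := (pval_eq_iff_pos h1 h0n).1 hx
        have := (pval_eq_iff_pos (show i < n by omega) h1n).1 hy
        omega
      · have := (pval_eq_iff_pos h1 h1n).1 hx
        have := (pval_eq_iff_pos (show i < n by omega) h0n).1 hy
        omega
      · exact pval_injOn w h1 (by omega) (by omega) (hx.trans hy.symm)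
    · rintro ⟨⟨h1, h2⟩, hir'⟩
      refine ⟨h1, ?_⟩
      rw [pval_sT_mul w h h1, pval_sT_mul w h (show i < n by omega)]
      rwa [swapN_lt_iff (pval_injOn w h1 (by omega) (by omega)) ?_]
      rintro ⟨hx, hy⟩
      have e0 := (pval_eq_iff_pos hr1 h0n).1 hw0
      have e1 := (pval_eq_iff_pos (show r < n by omega) h1n).1 hw1
      rcases hx with hx | hx <;> rcases hy with hy | hy
      · exact pval_injOn w h1 (by omega) (by omega) (hx.trans hy.symm)
      · have := (pval_eq_iff_pos h1 h0n).1 hx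
        have := (pval_eq_iff_pos (show i < n by omega) h1n).1 hy
        omega
      · have := (pval_eq_iff_pos h1 h1n).1 hx
        have := (pval_eq_iff_pos (show i < n by omega) h0n).1 hy
        omega
      · exact pval_injOn w h1 (by omega) (by omega) (hx.trans hy.symm)

lemma r_mem_des (w : Equiv.Perm (Fin n)) {r : ℕ}
    (hr1 : r + 1 < n) (hw1 : pval n w r = 1) (hw0 : pval n w (r + 1) = 0) :
    r ∈ Des n w := mem_Des.2 ⟨hr1, by rw [hw0, hw1]; omega⟩

lemma sT_mul_self {j : ℕ} (h : j + 1 < n) : sT n j h * sT n j h = 1 :=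
  Equiv.swap_mul_self _ _

def Allowed (τ : Equiv.Perm (Fin n)) (j : ℕ) (h : j + 1 < n) : Prop :=
  j = 0 ∨ ¬(posOf τ (Nat.lt_of_succ_lt h) = posOf τ h + 1 ∨
            posOf τ h = posOf τ (Nat.lt_of_succ_lt h) + 1)

lemma posOf_sT_mul (τ : Equiv.Perm (Fin n)) {j : ℕ} (h : j + 1 < n) :
    posOf (sT n j h * τ) (Nat.lt_of_succ_lt h) = posOf τ h ∧
    posOf (sT n j h * τ) h = posOf τ (Nat.lt_of_succ_lt h) := by
  have hs : (sT n j h)⁻¹ = sT n j h := by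
    rw [sT]; exact Equiv.swap_inv _ _
  constructor <;>
  · simp only [posOf, mul_inv_rev, hs, Equiv.Perm.mul_apply]
    congr 2
    rw [sT]
    first
      | exact Equiv.swap_apply_left _ _
      | exact Equiv.swap_apply_right _ _

lemma allowed_symm {τ : Equiv.Perm (Fin n)} {j : ℕ} {h : j + 1 < n}
    (hal : Allowed τ j h) : Allowed (sT n j h * τ) j h := by
  rcases hal with hal | hal
  · exact Or.inl hal
  · right
    rw [(posOf_sT_mul τ h).1, (posOf_sT_mul τ h).2]
    tauto

lemma ipeak_move {τ : Equiv.Perm (Fin n)} {j : ℕ} {h : j + 1 < n}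
    (hal : Allowed τ j h) : IPeak n (sT n j h * τ) = IPeak n τ := by
  rcases hal with rfl | hal
  · exact ipeak_sT_zero τ h
  · exact ipeak_sT_of_nonadj τ h hal

/-- the conjugate swap -/
lemma conj_swap (σ1 : Equiv.Perm (Fin n)) {j : ℕ} (h : j + 1 < n) :
    σ1⁻¹ * sT n j h * σ1 =
      Equiv.swap (σ1⁻¹ ⟨j, Nat.lt_of_succ_lt h⟩) (σ1⁻¹ ⟨j + 1, h⟩) := by
  rw [Equiv.swap_apply_apply, sT]
  group

lemma key2 (σ1 σ2 : Equiv.Perm (Fin n)) {j : ℕ} (h : j + 1 < n)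
    (hal : Allowed (σ1 * σ2) j h)
    (hbad : IPeak n (sT n j h * σ1) ≠ IPeak n σ1) :
    IPeak n ((σ1⁻¹ * sT n j h * σ1) * σ2) = IPeak n σ2 := by
  have hj : j < n := Nat.lt_of_succ_lt h
  -- j ≠ 0
  have hj0 : j ≠ 0 := by
    rintro rfl
    exact hbad (ipeak_sT_zero σ1 h)
  have hna : ¬(posOf (σ1 * σ2) hj = posOf (σ1 * σ2) h + 1 ∨
               posOf (σ1 * σ2) h = posOf (σ1 * σ2) hj + 1) := by
    rcases hal with hal | hal
    · exact absurd hal hj0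
    · exact hal
  -- positions of j, j+1 in σ1 are adjacent
  have hadj : posOf σ1 hj = posOf σ1 h + 1 ∨ posOf σ1 h = posOf σ1 hj + 1 := by
    by_contra hc
    exact hbad (ipeak_sT_of_nonadj σ1 h hc)
  set Pf : Fin n := σ1⁻¹ ⟨j, hj⟩ with hPf
  set Qf : Fin n := σ1⁻¹ ⟨j + 1, h⟩ with hQf
  have hPQ : Pf ≠ Qf := by
    simp only [hPf, hQf, ne_eq, EmbeddingLike.apply_eq_iff_eq, Fin.mk.injEq]
    omega
  have hposP : posOf σ1 hj = (Pf : ℕ) := rfl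
  have hposQ : posOf σ1 h = (Qf : ℕ) := rfl
  -- σ2⁻¹ of Pf, Qf are the τ-positions
  have hP2 : (σ2⁻¹ Pf : ℕ) = posOf (σ1 * σ2) hj := by
    simp only [posOf, mul_inv_rev, Equiv.Perm.mul_apply, hPf]
  have hQ2 : (σ2⁻¹ Qf : ℕ) = posOf (σ1 * σ2) h := by
    simp only [posOf, mul_inv_rev, Equiv.Perm.mul_apply, hQf]
  rw [conj_swap σ1 h, ← hPf, ← hQf]
  rcases hadj with hc | hc
  · -- (Pf:ℕ) = (Qf:ℕ) + 1 : swap Pf Qf = sT n (Qf:ℕ) _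
    rw [hposP, hposQ] at hc
    have h2 : (Qf : ℕ) + 1 < n := by
      have h3 := Pf.isLt; omega
    have e1 : (⟨(Qf : ℕ), Nat.lt_of_succ_lt h2⟩ : Fin n) = Qf := by
      exact Fin.eta _ _
    have e2 : (⟨(Qf : ℕ) + 1, h2⟩ : Fin n) = Pf := by
      apply Fin.ext; simp only []; omega
    have hswap : Equiv.swap Pf Qf = sT n (Qf : ℕ) h2 := by
      rw [sT, e1, e2, Equiv.swap_comm]
    rw [hswap]
    apply ipeak_sT_of_nonadj σ2 h2
    have eq1 : posOf σ2 (Nat.lt_of_succ_lt h2) = posOf (σ1 * σ2) h := by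
      rw [posOf, e1]; exact hQ2
    have eq2 : posOf σ2 h2 = posOf (σ1 * σ2) hj := by
      rw [posOf, e2]; exact hP2
    rw [eq1, eq2]; tauto
  · -- (Qf:ℕ) = (Pf:ℕ) + 1 : swap Pf Qf = sT n (Pf:ℕ) _
    rw [hposP, hposQ] at hc
    have h2 : (Pf : ℕ) + 1 < n := by
      have h3 := Qf.isLt; omega
    have e1 : (⟨(Pf : ℕ), Nat.lt_of_succ_lt h2⟩ : Fin n) = Pf := Fin.eta _ _
    have e2 : (⟨(Pf : ℕ) + 1, h2⟩ : Fin n) = Qf := by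
      apply Fin.ext; simp only []; omega
    have hswap : Equiv.swap Pf Qf = sT n (Pf : ℕ) h2 := by
      rw [sT, e1, e2]
    rw [hswap]
    apply ipeak_sT_of_nonadj σ2 h2
    have eq1 : posOf σ2 (Nat.lt_of_succ_lt h2) = posOf (σ1 * σ2) hj := by
      rw [posOf, e1]; exact hP2
    have eq2 : posOf σ2 h2 = posOf (σ1 * σ2) h := by
      rw [posOf, e2]; exact hQ2
    rw [eq1, eq2]; tauto

/-- number of factorizations with prescribed peak sets -/
noncomputable def Ncnt (n : ℕ) (I J : Finset ℕ) (τ : Equiv.Perm (Fin n)) : ℕ :=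
  (Finset.univ.filter
    (fun q : Equiv.Perm (Fin n) × Equiv.Perm (Fin n) =>
      IPeak n q.1 = I ∧ IPeak n q.2 = J ∧ q.1 * q.2 = τ)).card

/-- the involution -/
noncomputable def Phi (n : ℕ) (j : ℕ) (h : j + 1 < n)
    (q : Equiv.Perm (Fin n) × Equiv.Perm (Fin n)) :
    Equiv.Perm (Fin n) × Equiv.Perm (Fin n) :=
  if IPeak n (sT n j h * q.1) = IPeak n q.1 then (sT n j h * q.1, q.2)
  else (q.1, (q.1⁻¹ * sT n j h * q.1) * q.2)

lemma phi_invol {j : ℕ} (h : j + 1 < n)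
    (q : Equiv.Perm (Fin n) × Equiv.Perm (Fin n)) :
    Phi n j h (Phi n j h q) = q := by
  by_cases hc : IPeak n (sT n j h * q.1) = IPeak n q.1
  · have e1 : Phi n j h q = (sT n j h * q.1, q.2) := if_pos hc
    rw [e1, Phi]
    have e2 : sT n j h * (sT n j h * q.1) = q.1 := by
      rw [← mul_assoc, sT_mul_self, one_mul]
    rw [if_pos (by rw [e2, hc]), e2]
  · have e1 : Phi n j h q = (q.1, (q.1⁻¹ * sT n j h * q.1) * q.2) := if_neg hc
    rw [e1, Phi]
    rw [if_neg hc]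
    ext : 1
    · rfl
    · show (q.1⁻¹ * sT n j h * q.1) * ((q.1⁻¹ * sT n j h * q.1) * q.2) = q.2
      have : (q.1⁻¹ * sT n j h * q.1) * (q.1⁻¹ * sT n j h * q.1) = 1 := by
        rw [conj_swap q.1 h]
        exact Equiv.swap_mul_self _ _
      rw [← mul_assoc, this, one_mul]

lemma phi_mem {τ : Equiv.Perm (Fin n)} {j : ℕ} {h : j + 1 < n}
    (hal : Allowed τ j h) {I J : Finset ℕ}
    (q : Equiv.Perm (Fin n) × Equiv.Perm (Fin n))
    (hq : IPeak n q.1 = I ∧ IPeak n q.2 = J ∧ q.1 * q.2 = τ) :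
    IPeak n (Phi n j h q).1 = I ∧ IPeak n (Phi n j h q).2 = J ∧
      (Phi n j h q).1 * (Phi n j h q).2 = sT n j h * τ := by
  obtain ⟨hI, hJ, hprod⟩ := hq
  by_cases hc : IPeak n (sT n j h * q.1) = IPeak n q.1
  · rw [Phi, if_pos hc]
    exact ⟨by rw [hc, hI], hJ, by rw [mul_assoc, hprod]⟩
  · rw [Phi, if_neg hc]
    refine ⟨hI, ?_, ?_⟩
    · rw [key2 q.1 q.2 h (by rw [hprod]; exact hal) hc]
      exact hJ
    · show q.1 * (q.1⁻¹ * sT n j h * q.1 * q.2) = sT n j h * τ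
      rw [← hprod]; group

lemma ncnt_move {τ : Equiv.Perm (Fin n)} {j : ℕ} {h : j + 1 < n}
    (hal : Allowed τ j h) (I J : Finset ℕ) :
    Ncnt n I J τ = Ncnt n I J (sT n j h * τ) := by
  rw [Ncnt, Ncnt]
  apply Finset.card_bij' (fun q _ => Phi n j h q) (fun q _ => Phi n j h q)
  · intro q hq
    simp only [Finset.mem_filter, Finset.mem_univ, true_and] at hq ⊢
    exact phi_mem hal q hq
  · intro q hq
    simp only [Finset.mem_filter, Finset.mem_univ, true_and] at hq ⊢
    have := phi_mem (allowed_symm hal) q hq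
    rwa [← mul_assoc, sT_mul_self, one_mul] at this
  · intro q _; exact phi_invol h q
  · intro q _; exact phi_invol h q

def MoveR (n : ℕ) (τ τ' : Equiv.Perm (Fin n)) : Prop :=
  ∃ j, ∃ h : j + 1 < n, Allowed τ j h ∧ τ' = sT n j h * τ

lemma moveR_symm {τ τ' : Equiv.Perm (Fin n)} (hm : MoveR n τ τ') : MoveR n τ' τ := by
  obtain ⟨j, h, hal, rfl⟩ := hm
  exact ⟨j, h, allowed_symm hal, by rw [← mul_assoc, sT_mul_self, one_mul]⟩

lemma ncnt_chain {τ τ' : Equiv.Perm (Fin n)}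
    (hc : Relation.ReflTransGen (MoveR n) τ τ') (I J : Finset ℕ) :
    Ncnt n I J τ = Ncnt n I J τ' := by
  induction hc with
  | refl => rfl
  | tail _ hbc ih =>
      obtain ⟨j, h, hal, rfl⟩ := hbc
      rw [ih, ncnt_move hal]

lemma ipeak_chain {τ τ' : Equiv.Perm (Fin n)}
    (hc : Relation.ReflTransGen (MoveR n) τ τ') :
    IPeak n τ = IPeak n τ' := by
  induction hc with
  | refl => rfl
  | tail _ hbc ih =>
      obtain ⟨j, h, hal, rfl⟩ := hbc
      rw [ih, ipeak_move hal]

lemma rank_perm (K : Fin n → ℕ) (hK : Function.Injective K) :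
    ∃ w : Equiv.Perm (Fin n),
      (∀ (a b : ℕ) (ha : a < n) (hb : b < n),
        (pval n w a < pval n w b ↔ K ⟨a, ha⟩ < K ⟨b, hb⟩)) ∧
      (∀ i : Fin n, (w i : ℕ) = (Finset.univ.filter fun k => K k < K i).card) := by
  have hcard : ∀ i : Fin n, (Finset.univ.filter fun k => K k < K i).card < n := by
    intro i
    by_contra hcon
    push_neg at hcon
    have hle : (Finset.univ.filter fun k => K k < K i).card ≤ n := by
      simpa using Finset.card_le_univ (Finset.univ.filter fun k => K k < K i)
    have heq : (Finset.univ.filter fun k => K k < K i).card = Fintype.card (Fin n) := by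
      simp only [Fintype.card_fin]; omega
    have := Finset.eq_univ_of_card _ heq
    have : i ∈ Finset.univ.filter fun k => K k < K i := by rw [this]; exact Finset.mem_univ i
    simp at this
  set f : Fin n → Fin n := fun i => ⟨_, hcard i⟩ with hf
  have hmono : ∀ {i k : Fin n}, K i < K k → f i < f k := by
    intro i k hik
    show (_ : ℕ) < (_ : ℕ)
    simp only [hf]
    apply Finset.card_lt_card
    rw [Finset.ssubset_def]
    constructor
    · intro m hm
      simp only [Finset.mem_filter, Finset.mem_univ, true_and] at hm ⊢
      exact lt_trans hm hik
    · intro hcon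
      have hi : i ∈ Finset.univ.filter fun m => K m < K k := by
        simp [hik]
      have := hcon hi
      simp at this
  have hinj : Function.Injective f := by
    intro i k he
    by_contra hne
    rcases lt_or_gt_of_ne (fun hc => hne (hK hc)) with hlt | hlt
    · exact absurd he (ne_of_lt (hmono hlt))
    · exact absurd he.symm (ne_of_lt (hmono hlt))
  refine ⟨Equiv.ofBijective f (Finite.injective_iff_bijective.mp hinj), ?_, fun i => rfl⟩
  intro a b ha hb
  rw [pval_lt _ ha, pval_lt _ hb]
  show (f ⟨a, ha⟩ : ℕ) < (f ⟨b, hb⟩ : ℕ) ↔ _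
  constructor
  · intro hlt
    rcases lt_trichotomy (K ⟨a, ha⟩) (K ⟨b, hb⟩) with hc | hc | hc
    · exact hc
    · exfalso
      have : (⟨a, ha⟩ : Fin n) = ⟨b, hb⟩ := hK hc
      rw [this] at hlt
      exact lt_irrefl _ hlt
    · exact absurd (hmono hc) (by intro hcon; have := Fin.lt_def.mp hcon; omega)
  · intro hlt; exact hmono hlt

/-- count of descents at or after i -/
def cD (D : Finset ℕ) (i : ℕ) : ℕ := (D.filter fun d => i ≤ d).card

lemma cD_step (D : Finset ℕ) (i : ℕ) :
    cD D i = cD D (i + 1) + if i ∈ D then 1 else 0 := by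
  rw [cD, cD]
  have h1 : (D.filter fun d => i ≤ d) = (D.filter fun d => i + 1 ≤ d) ∪ (D.filter fun d => d = i) := by
    rw [← Finset.filter_or]
    apply Finset.filter_congr
    intro d _
    constructor
    · intro hd; omega
    · intro hd; omega
  rw [h1, Finset.card_union_of_disjoint]
  · congr 1
    rw [Finset.filter_eq']
    split_ifs <;> simp
  · rw [Finset.disjoint_filter]
    intro d _ hd hd2
    omega

lemma exists_word_des (D : Finset ℕ) (hD : D ⊆ Finset.range (n - 1)) :
    ∃ w : Equiv.Perm (Fin n), Des n w = D := by
  set K : Fin n → ℕ := fun i => cD D (i : ℕ) * (2 * n) + ((i : ℕ) + 2) with hKdef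
  have hKinj : Function.Injective K := by
    intro a b he
    apply Fin.ext
    have ha := a.isLt; have hb := b.isLt
    by_cases hn : n ≤ 1
    · omega
    · push_neg at hn
      have := congrArg (fun t => t % (2 * n)) he
      simp only [hKdef, Nat.mul_add_mod'] at this
      rw [Nat.mod_eq_of_lt (show (a : ℕ) + 2 < 2 * n by omega),
          Nat.mod_eq_of_lt (show (b : ℕ) + 2 < 2 * n by omega)] at this
      omega
  obtain ⟨w, hcmp, _⟩ := rank_perm K hKinj
  refine ⟨w, ?_⟩
  ext i
  rw [mem_Des]
  constructor
  · rintro ⟨h1, h2⟩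
    rw [hcmp (i + 1) i h1 (by omega)] at h2
    by_contra hiD
    have hstep := cD_step D i
    rw [if_neg hiD, add_zero] at hstep
    simp only [hKdef] at h2
    rw [hstep] at h2
    omega
  · intro hiD
    have h1 : i + 1 < n := by
      have := hD hiD; simp only [Finset.mem_range] at this; omega
    refine ⟨h1, ?_⟩
    rw [hcmp (i + 1) i h1 (by omega)]
    have hstep := cD_step D i
    rw [if_pos hiD] at hstep
    simp only [hKdef]
    rw [hstep, add_mul, one_mul]
    omega

lemma exists_word (D : Finset ℕ) (hD : D ⊆ Finset.range (n - 1)) {r : ℕ}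
    (hr1 : r + 1 < n) (hrD : r ∈ D) (hr1D : r + 1 ∉ D) (hr0 : r = 0 ∨ r - 1 ∈ D) :
    ∃ w : Equiv.Perm (Fin n), Des n w = D ∧ pval n w r = 1 ∧ pval n w (r + 1) = 0 := by
  have hn2 : 2 ≤ n := by omega
  set K : Fin n → ℕ := fun i =>
    if (i : ℕ) = r + 1 then 0 else if (i : ℕ) = r then 1
    else cD D (i : ℕ) * (2 * n) + ((i : ℕ) + 2) with hKdef
  have hother : ∀ i : Fin n, (i : ℕ) ≠ r + 1 → (i : ℕ) ≠ r →
      K i = cD D (i : ℕ) * (2 * n) + ((i : ℕ) + 2) := by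
    intro i h1 h2; simp only [hKdef, if_neg h1, if_neg h2]
  have hKr1 : K ⟨r + 1, hr1⟩ = 0 := by simp [hKdef]
  have hKr : K ⟨r, by omega⟩ = 1 := by simp only [hKdef]; norm_num
  have hKform : ∀ i : Fin n, ((i : ℕ) = r + 1 ∧ K i = 0) ∨ ((i : ℕ) = r ∧ K i = 1) ∨
      ((i : ℕ) ≠ r + 1 ∧ (i : ℕ) ≠ r ∧ K i = cD D (i : ℕ) * (2 * n) + ((i : ℕ) + 2)) := by
    intro i
    by_cases e1 : (i : ℕ) = r + 1
    · exact Or.inl ⟨e1, by simp only [hKdef, if_pos e1]⟩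
    by_cases e2 : (i : ℕ) = r
    · exact Or.inr (Or.inl ⟨e2, by simp only [hKdef, if_neg e1, if_pos e2]⟩)
    · exact Or.inr (Or.inr ⟨e1, e2, hother i e1 e2⟩)
  have hKinj : Function.Injective K := by
    intro a b he
    apply Fin.ext
    have ha := a.isLt; have hb := b.isLt
    rcases hKform a with ⟨ea, va⟩ | ⟨ea, va⟩ | ⟨ea1, ea2, va⟩ <;>
      rcases hKform b with ⟨eb, vb⟩ | ⟨eb, vb⟩ | ⟨eb1, eb2, vb⟩ <;>
      rw [va, vb] at he <;> try omega
    have := congrArg (fun t => t % (2 * n)) he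
    simp only [Nat.mul_add_mod'] at this
    rw [Nat.mod_eq_of_lt (show (a : ℕ) + 2 < 2 * n by omega),
        Nat.mod_eq_of_lt (show (b : ℕ) + 2 < 2 * n by omega)] at this
    omega
  obtain ⟨w, hcmp, hval⟩ := rank_perm K hKinj
  have hfilter1 : (Finset.univ.filter fun k => K k < K ⟨r, by omega⟩) = {⟨r + 1, hr1⟩} := by
    ext k
    simp only [Finset.mem_filter, Finset.mem_univ, true_and, Finset.mem_singleton, hKr]
    constructor
    · intro hk
      have hk0 : K k = 0 := by omega
      exact hKinj (by rw [hk0, hKr1])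
    · rintro rfl; rw [hKr1]; omega
  have hfilter0 : (Finset.univ.filter fun k => K k < K ⟨r + 1, hr1⟩) = ∅ := by
    rw [hKr1]; simp
  refine ⟨w, ?_, ?_, ?_⟩
  · ext i
    rw [mem_Des]
    constructor
    · rintro ⟨h1, h2⟩
      rw [hcmp (i + 1) i h1 (by omega)] at h2
      by_cases e1 : i = r
      · rwa [e1]
      by_cases e2 : i = r + 1
      · exfalso
        subst e2
        rw [hKr1] at h2  -- wrong index: K ⟨i+1⟩ < K ⟨i⟩ = K ⟨r+1+1⟩ < K ⟨r+1⟩ = 0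
        omega
      by_cases e3 : i + 1 = r
      · -- i = r - 1 : i ∈ D from hr0
        rcases hr0 with h0 | h0
        · omega
        · have : i = r - 1 := by omega
          rwa [this]
      · -- generic step
        rw [hother ⟨i + 1, h1⟩ (by simpa using fun hh => e2 (by omega)) (by simpa using e3)] at h2
        rw [hother ⟨i, by omega⟩ (by simpa using e2) (by simpa using e1)] at h2
        by_contra hiD
        have hstep := cD_step D i
        rw [if_neg hiD, add_zero] at hstep
        rw [hstep] at h2
        simp only at h2
        omega
    · intro hiD
      have h1 : i + 1 < n := by
        have := hD hiD; simp only [Finset.mem_range] at this; omega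
      refine ⟨h1, ?_⟩
      rw [hcmp (i + 1) i h1 (by omega)]
      by_cases e1 : i = r
      · subst e1; rw [hKr1, hKr]; omega
      by_cases e2 : i = r + 1
      · exact absurd (e2 ▸ hiD) hr1D
      by_cases e3 : i + 1 = r
      · -- K ⟨i+1⟩ = K ⟨r⟩ = 1 < K ⟨i⟩ (other, ≥ 2)
        have er : (⟨i + 1, h1⟩ : Fin n) = ⟨r, by omega⟩ := by apply Fin.ext; simpa using e3
        rw [er, hKr, hother ⟨i, by omega⟩ (by simpa using e2) (by simpa using e1)]
        omega
      · rw [hother ⟨i + 1, h1⟩ (by simpa using fun hh => e2 (by omega)) (by simpa using e3)]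
        rw [hother ⟨i, by omega⟩ (by simpa using e2) (by simpa using e1)]
        have hstep := cD_step D i
        rw [if_pos hiD] at hstep
        rw [hstep, add_mul, one_mul]
        simp only
        omega
  · rw [pval_lt _ (by omega : r < n), hval, hfilter1, Finset.card_singleton]
  · rw [pval_lt _ hr1, hval, hfilter0, Finset.card_empty]

lemma bubble (σ' : Equiv.Perm (Fin n)) (k : ℕ) (hk : k < n) :
    ∀ (V : ℕ) (ρ : Equiv.Perm (Fin n)), Des n ρ = Des n σ' →
    (∀ (v : ℕ) (hv : v < k) (hvn : v < n), ρ⁻¹ ⟨v, hvn⟩ = σ'⁻¹ ⟨v, hvn⟩) →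
    ((ρ (σ'⁻¹ ⟨k, hk⟩) : ℕ) ≤ k + V) →
    ∃ ρ2, Relation.ReflTransGen (MoveR n) ρ ρ2 ∧ Des n ρ2 = Des n σ' ∧
      (∀ (v : ℕ) (hv : v < k + 1) (hvn : v < n), ρ2⁻¹ ⟨v, hvn⟩ = σ'⁻¹ ⟨v, hvn⟩) := by
  intro V
  induction V with
  | zero =>
      intro ρ hdes hagr hbound
      have hge : k ≤ (ρ (σ'⁻¹ ⟨k, hk⟩) : ℕ) := by
        by_contra hcon
        push_neg at hcon
        have h1 := hagr _ hcon (by omega)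
        have h2 : ρ⁻¹ ⟨(ρ (σ'⁻¹ ⟨k, hk⟩) : ℕ), by omega⟩ = σ'⁻¹ ⟨k, hk⟩ :=
          Equiv.Perm.inv_apply_self ρ _
        rw [h2] at h1
        have := σ'⁻¹.injective h1
        simp only [Fin.mk.injEq] at this
        omega
      have hky : ρ (σ'⁻¹ ⟨k, hk⟩) = ⟨k, hk⟩ := by
        apply Fin.ext
        have := (ρ (σ'⁻¹ ⟨k, hk⟩)).isLt
        simp only []
        omega
      refine ⟨ρ, Relation.ReflTransGen.refl, hdes, ?_⟩
      intro v hv hvn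
      rcases Nat.lt_or_ge v k with hvk | hvk
      · exact hagr v hvk hvn
      · have hvk' : v = k := by omega
        subst hvk'
        have : ρ⁻¹ ⟨v, hk⟩ = σ'⁻¹ ⟨v, hk⟩ := by
          conv_lhs => rw [← hky]
          rw [Equiv.Perm.inv_apply_self]
        exact this
      | succ V ih =>
      intro ρ hdes hagr hbound
      obtain ⟨y, hy⟩ : ∃ y, σ'⁻¹ ⟨k, hk⟩ = y := ⟨_, rfl⟩
      rw [hy] at hbound
      rcases Nat.lt_or_ge k (ρ y : ℕ) with hgt | hle
      swap
      · exact ih ρ hdes hagr (by rw [hy]; omega)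
      obtain ⟨v0, hv0⟩ : ∃ m, (ρ y : ℕ) = m := ⟨_, rfl⟩
      have hv0n : v0 < n := by rw [← hv0]; exact (ρ y).isLt
      have hgt' : k < v0 := by omega
      have hjh : (v0 - 1) + 1 < n := by omega
      have hρy : ρ y = ⟨(v0 - 1) + 1, hjh⟩ := by apply Fin.ext; simp only []; omega
      have hpos1 : ρ⁻¹ ⟨(v0 - 1) + 1, hjh⟩ = y := by rw [← hρy, Equiv.Perm.inv_apply_self]
      obtain ⟨z, hz⟩ : ∃ z, ρ⁻¹ ⟨v0 - 1, by omega⟩ = z := ⟨_, rfl⟩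
      have hρz : ρ z = ⟨v0 - 1, by omega⟩ := by rw [← hz, Equiv.Perm.apply_inv_self]
      have hzy : z ≠ y := by
        intro hc
        rw [hc, hρy] at hρz
        simp only [Fin.mk.injEq] at hρz
        omega
      obtain ⟨m, hmn, hm⟩ : ∃ (m : ℕ) (hmn : m < n), σ' z = ⟨m, hmn⟩ :=
        ⟨(σ' z : ℕ), (σ' z).isLt, by apply Fin.ext; rfl⟩
      have hσz : k < (σ' z : ℕ) := by
        rw [hm]
        simp only []
        rcases Nat.lt_trichotomy m k with hc | hc | hc
        · exfalso
          have h1 := hagr m hc hmn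
          have h2 : σ'⁻¹ ⟨m, hmn⟩ = z := by rw [← hm, Equiv.Perm.inv_apply_self]
          rw [h2] at h1
          have h4 := congrArg ρ h1
          rw [Equiv.Perm.apply_inv_self, hρz] at h4
          simp only [Fin.mk.injEq] at h4
          omega
        · exfalso
          apply hzy
          have h3 : σ' z = ⟨k, hk⟩ := by rw [hm]; apply Fin.ext; simp only []; omega
          rw [← hy, ← h3, Equiv.Perm.inv_apply_self]
        · exact hc
      have hval_y : pval n σ' (y : ℕ) = k := by
        rw [pval_lt _ y.isLt]
        have : σ' y = ⟨k, hk⟩ := by rw [← hy, Equiv.Perm.apply_inv_self]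
        rw [show (⟨(y : ℕ), y.isLt⟩ : Fin n) = y from rfl, this]
      have hval_z : pval n σ' (z : ℕ) = (σ' z : ℕ) := by
        rw [pval_lt _ z.isLt, show (⟨(z : ℕ), z.isLt⟩ : Fin n) = z from rfl]
      have hval_ry : pval n ρ (y : ℕ) = (v0 - 1) + 1 := by
        rw [pval_lt _ y.isLt, show (⟨(y : ℕ), y.isLt⟩ : Fin n) = y from rfl, hρy]
      have hval_rz : pval n ρ (z : ℕ) = v0 - 1 := by
        rw [pval_lt _ z.isLt, show (⟨(z : ℕ), z.isLt⟩ : Fin n) = z from rfl, hρz]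
      have hna : ¬(posOf ρ (Nat.lt_of_succ_lt hjh) = posOf ρ hjh + 1 ∨
                   posOf ρ hjh = posOf ρ (Nat.lt_of_succ_lt hjh) + 1) := by
        have hpz : posOf ρ (Nat.lt_of_succ_lt hjh) = (z : ℕ) := by rw [posOf, hz]
        have hpy : posOf ρ hjh = (y : ℕ) := by rw [posOf, hpos1]
        rw [hpz, hpy]
        rintro (hadj | hadj)
        · have hdρ : (y : ℕ) ∈ Des n ρ := by
            rw [mem_Des]
            refine ⟨by omega, ?_⟩
            rw [show (y:ℕ) + 1 = (z:ℕ) from by omega, hval_rz, hval_ry]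
            omega
          have hdσ : (y : ℕ) ∉ Des n σ' := by
            rw [mem_Des]
            rintro ⟨h1, h2⟩
            rw [show (y:ℕ) + 1 = (z:ℕ) from by omega, hval_z, hval_y] at h2
            omega
          rw [hdes] at hdρ
          exact hdσ hdρ
        · have hdρ : (z : ℕ) ∉ Des n ρ := by
            rw [mem_Des]
            rintro ⟨h1, h2⟩
            rw [show (z:ℕ) + 1 = (y:ℕ) from by omega, hval_ry, hval_rz] at h2
            omega
          have hdσ : (z : ℕ) ∈ Des n σ' := by
            rw [mem_Des]
            refine ⟨by omega, ?_⟩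
            rw [show (z:ℕ) + 1 = (y:ℕ) from by omega, hval_z, hval_y]
            omega
          rw [← hdes] at hdσ
          exact hdρ hdσ
      have hmv : MoveR n ρ (sT n (v0 - 1) hjh * ρ) := ⟨v0 - 1, hjh, Or.inr hna, rfl⟩
      have hdes3 : Des n (sT n (v0 - 1) hjh * ρ) = Des n σ' := by
        rw [des_sT_of_nonadj ρ hjh hna, hdes]
      have hsinv : (sT n (v0 - 1) hjh)⁻¹ = sT n (v0 - 1) hjh := by
        rw [sT]; exact Equiv.swap_inv _ _
      have hagr3 : ∀ (v : ℕ) (hv : v < k) (hvn : v < n),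
          (sT n (v0 - 1) hjh * ρ)⁻¹ ⟨v, hvn⟩ = σ'⁻¹ ⟨v, hvn⟩ := by
        intro v hv hvn
        rw [mul_inv_rev, Equiv.Perm.mul_apply, hsinv]
        have hfix : sT n (v0 - 1) hjh ⟨v, hvn⟩ = ⟨v, hvn⟩ := by
          rw [sT]
          apply Equiv.swap_apply_of_ne_of_ne
          · intro hc; simp only [Fin.mk.injEq] at hc; omega
          · intro hc; simp only [Fin.mk.injEq] at hc; omega
        rw [hfix]
        exact hagr v hv hvn
      have hbound3 : ((sT n (v0 - 1) hjh * ρ) (σ'⁻¹ ⟨k, hk⟩) : ℕ) ≤ k + V := by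
        rw [hy, Equiv.Perm.mul_apply, hρy, sT, Equiv.swap_apply_right]
        simp only []
        omega
      obtain ⟨ρ2, hchain, hd2, hag2⟩ := ih (sT n (v0 - 1) hjh * ρ) hdes3 hagr3 hbound3
      exact ⟨ρ2, Relation.ReflTransGen.head hmv hchain, hd2, hag2⟩

lemma stepA {σ σ' : Equiv.Perm (Fin n)} (hd : Des n σ = Des n σ') :
    Relation.ReflTransGen (MoveR n) σ σ' := by
  have main : ∀ k, k ≤ n → ∃ ρ, Relation.ReflTransGen (MoveR n) σ ρ ∧ Des n ρ = Des n σ' ∧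
      (∀ (v : ℕ) (hv : v < k) (hvn : v < n), ρ⁻¹ ⟨v, hvn⟩ = σ'⁻¹ ⟨v, hvn⟩) := by
    intro k
    induction k with
    | zero => exact fun _ => ⟨σ, Relation.ReflTransGen.refl, hd, fun v hv hvn => by omega⟩
    | succ k ihk =>
        intro hk1
        obtain ⟨ρ, hchain, hdes, hagr⟩ := ihk (by omega)
        obtain ⟨ρ2, hchain2, hd2, hag2⟩ :=
          bubble σ' k (by omega) n ρ hdes hagr
            (by have := (ρ (σ'⁻¹ ⟨k, by omega⟩)).isLt; omega)
        exact ⟨ρ2, hchain.trans hchain2, hd2, hag2⟩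
  obtain ⟨ρ, hchain, _, hagr⟩ := main n (le_refl n)
  have : ρ = σ' := by
    have hinv : ρ⁻¹ = σ'⁻¹ := by
      apply Equiv.ext
      intro x
      exact hagr (x : ℕ) x.isLt x.isLt
    calc ρ = (ρ⁻¹)⁻¹ := by rw [inv_inv]
    _ = (σ'⁻¹)⁻¹ := by rw [hinv]
    _ = σ' := by rw [inv_inv]
  rwa [this] at hchain

def Lam (n : ℕ) (D : Finset ℕ) : Finset ℕ :=
  (Finset.Ioo 0 (n - 1)).filter fun i => i ∈ D ∧ i - 1 ∉ D

lemma mem_Lam {D : Finset ℕ} {i : ℕ} :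
    i ∈ Lam n D ↔ (0 < i ∧ i < n - 1) ∧ i ∈ D ∧ i - 1 ∉ D := by
  simp only [Lam, Finset.mem_filter, Finset.mem_Ioo]

lemma lam_subset (D : Finset ℕ) : Lam n D ⊆ D := fun i hi => (mem_Lam.1 hi).2.1

lemma des_subset (σ : Equiv.Perm (Fin n)) : Des n σ ⊆ Finset.range (n - 1) :=
  Finset.filter_subset _ _

lemma ipeak_eq_lam_des (σ : Equiv.Perm (Fin n)) : IPeak n σ = Lam n (Des n σ) := by
  ext i
  rw [mem_IPeak, mem_Lam, mem_Des, mem_Des]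
  constructor
  · rintro ⟨h0, h1, h2, h3⟩
    refine ⟨⟨h0, by omega⟩, ⟨h1, h3⟩, ?_⟩
    rintro ⟨h4, h5⟩
    rw [show i - 1 + 1 = i from by omega] at h5
    omega
  · rintro ⟨⟨h0, h1⟩, ⟨h2, h3⟩, h4⟩
    refine ⟨h0, h2, ?_, h3⟩
    rw [show i - 1 + 1 = i from by omega] at h4
    have hne := pval_injOn σ (show i - 1 < n by omega) (show i < n by omega) (by omega)
    push_neg at h4
    rcases Nat.lt_or_ge (pval n σ (i - 1)) (pval n σ i) with hc | hc
    · exact hc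
    · exfalso
      have := h4 (by omega)
      omega

lemma lam_sdiff {D : Finset ℕ} {r : ℕ} (hrD : r ∈ D) (hr1D : r + 1 ∉ D)
    (hr0 : r = 0 ∨ r - 1 ∈ D) : Lam n (D \ {r}) = Lam n D := by
  ext i
  rw [mem_Lam, mem_Lam]
  simp only [Finset.mem_sdiff, Finset.mem_singleton]
  constructor
  · rintro ⟨hIoo, ⟨hiD, hir⟩, h3⟩
    refine ⟨hIoo, hiD, fun hc => h3 ⟨hc, ?_⟩⟩
    intro he
    -- i - 1 = r, i ∈ Ioo, i ≠ r ⇒ i = r + 1 ⇒ i ∉ D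
    have : i = r + 1 := by omega
    exact hr1D (this ▸ hiD)
  · rintro ⟨hIoo, hiD, h3⟩
    have hir : i ≠ r := by
      rintro rfl
      rcases hr0 with h | h
      · omega
      · exact h3 h
    exact ⟨hIoo, ⟨hiD, hir⟩, fun hc => h3 hc.1⟩

lemma reduce : ∀ (c : ℕ) (τ : Equiv.Perm (Fin n)), (Des n τ).card = c →
    ∃ w, Relation.ReflTransGen (MoveR n) τ w ∧ Des n w = Lam n (Des n τ) := by
  intro c
  induction c using Nat.strong_induction_on with
  | _ c ih =>
    intro τ hc
    by_cases hD : Des n τ = Lam n (Des n τ)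
    · exact ⟨τ, Relation.ReflTransGen.refl, hD⟩
    · have hne : (Des n τ \ Lam n (Des n τ)).Nonempty := by
        rw [Finset.sdiff_nonempty]
        intro hsub
        exact hD (Finset.Subset.antisymm hsub (lam_subset _))
      obtain ⟨r, hrmem, hrmax⟩ :=
        Finset.exists_max_image (Des n τ \ Lam n (Des n τ)) id hne
      rw [Finset.mem_sdiff] at hrmem
      obtain ⟨hrD, hrL⟩ := hrmem
      have hrange := des_subset τ hrD
      rw [Finset.mem_range] at hrange
      have hr1n : r + 1 < n := by omega
      have hr0 : r = 0 ∨ r - 1 ∈ Des n τ := by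
        rw [mem_Lam] at hrL
        push_neg at hrL
        rcases Nat.eq_zero_or_pos r with h | h
        · exact Or.inl h
        · right
          by_contra hcon
          exact hcon (hrL ⟨h, by omega⟩ hrD)
      have hr1D : r + 1 ∉ Des n τ := by
        intro hc
        have hmem : r + 1 ∈ Des n τ \ Lam n (Des n τ) := by
          rw [Finset.mem_sdiff]
          refine ⟨hc, ?_⟩
          rw [mem_Lam]
          rintro ⟨_, _, hnot⟩
          exact hnot (by simpa using hrD)
        have := hrmax _ hmem
        simp only [id] at this
        omega
      obtain ⟨w0, hw0des, hw0v1, hw0v0⟩ :=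
        exists_word (Des n τ) (des_subset τ) hr1n hrD hr1D hr0
      have hchain1 : Relation.ReflTransGen (MoveR n) τ w0 := stepA hw0des.symm
      have h01 : 0 + 1 < n := by omega
      have hmv : MoveR n w0 (sT n 0 h01 * w0) := ⟨0, h01, Or.inl rfl, rfl⟩
      have hdesm : Des n (sT n 0 h01 * w0) = Des n τ \ {r} := by
        rw [des_sT_zero_toggle w0 h01 hr1n hw0v1 hw0v0, hw0des]
      have hcard : (Des n (sT n 0 h01 * w0)).card < c := by
        rw [hdesm, ← hc]
        exact Finset.card_lt_card (Finset.sdiff_ssubset (by simpa using hrD) (by simp))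
      obtain ⟨w, hchain2, hwdes⟩ := ih _ hcard (sT n 0 h01 * w0) rfl
      refine ⟨w, (hchain1.tail hmv).trans hchain2, ?_⟩
      rw [hwdes, hdesm]
      exact lam_sdiff hrD hr1D hr0

lemma conn_main {τ τ' : Equiv.Perm (Fin n)} (hip : IPeak n τ = IPeak n τ') :
    Relation.ReflTransGen (MoveR n) τ τ' := by
  have hsymm : ∀ {a b : Equiv.Perm (Fin n)}, Relation.ReflTransGen (MoveR n) a b →
      Relation.ReflTransGen (MoveR n) b a := by
    intro a b hab
    induction hab with
    | refl => exact Relation.ReflTransGen.refl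
    | tail _ hbc ih => exact (Relation.ReflTransGen.single (moveR_symm hbc)).trans ih
  obtain ⟨w, hchain, hwdes⟩ := reduce (Des n τ).card τ rfl
  obtain ⟨w', hchain', hwdes'⟩ := reduce (Des n τ').card τ' rfl
  have hdd : Des n w = Des n w' := by
    rw [hwdes, hwdes', ← ipeak_eq_lam_des, ← ipeak_eq_lam_des, hip]
  exact (hchain.trans (stepA hdd)).trans (hsymm hchain')

lemma ncnt_eq_of_ipeak_eq {τ τ' : Equiv.Perm (Fin n)} (hip : IPeak n τ = IPeak n τ')
    (I J : Finset ℕ) : Ncnt n I J τ = Ncnt n I J τ' :=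
  ncnt_chain (conn_main hip) I J


lemma pElt_eq_sum_dElt (I : Finset ℕ) :
    pElt n I = ∑ C ∈ (Finset.range (n - 1)).powerset.filter (fun C => Lam n C = I),
      dElt n C := by
  rw [pElt]
  rw [← Finset.sum_fiberwise_of_maps_to (g := Des n)
    (t := (Finset.range (n - 1)).powerset.filter (fun C => Lam n C = I)) ?_ _]
  · apply Finset.sum_congr rfl
    intro C hC
    rw [dElt]
    apply Finset.sum_congr ?_ (fun _ _ => rfl)
    ext σ
    simp only [Finset.mem_filter, Finset.mem_univ, true_and] at hC ⊢
    constructor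
    · rintro ⟨h1, h2⟩; exact h2
    · intro h2
      refine ⟨?_, h2⟩
      rw [ipeak_eq_lam_des, h2]
      exact hC.2
  · intro σ hσ
    simp only [Finset.mem_filter, Finset.mem_univ, true_and, Finset.mem_powerset] at hσ ⊢
    exact ⟨des_subset σ, by rw [← ipeak_eq_lam_des, hσ]⟩

lemma part1 (I : Finset ℕ) :
    pElt n I ∈ Submodule.span ℤ (Set.range (dElt n)) := by
  rw [pElt_eq_sum_dElt]
  apply Submodule.sum_mem
  intro C _
  exact Submodule.subset_span (Set.mem_range_self C)

lemma pElt_mul_expand (I J : Finset ℕ) :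
    pElt n I * pElt n J =
      ∑ τ ∈ Finset.univ, (Ncnt n I J τ) • MonoidAlgebra.of ℤ (Equiv.Perm (Fin n)) τ := by
  rw [pElt, pElt, Finset.sum_mul_sum]
  rw [← Finset.sum_product']
  rw [← Finset.sum_fiberwise_of_maps_to (g := fun q : Equiv.Perm (Fin n) × Equiv.Perm (Fin n) => q.1 * q.2)
    (t := Finset.univ) (fun q _ => Finset.mem_univ _) _]
  apply Finset.sum_congr rfl
  intro τ _
  have step1 : ∀ q ∈ ((Finset.univ.filter (fun σ : Equiv.Perm (Fin n) => IPeak n σ = I)) ×ˢ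
      (Finset.univ.filter (fun σ : Equiv.Perm (Fin n) => IPeak n σ = J))).filter
        (fun q : Equiv.Perm (Fin n) × Equiv.Perm (Fin n) => q.1 * q.2 = τ),
      MonoidAlgebra.of ℤ (Equiv.Perm (Fin n)) q.1 * MonoidAlgebra.of ℤ (Equiv.Perm (Fin n)) q.2 =
        MonoidAlgebra.of ℤ (Equiv.Perm (Fin n)) τ := by
    intro q hq
    simp only [Finset.mem_filter] at hq
    rw [← map_mul, hq.2]
  rw [Finset.sum_congr rfl step1, Finset.sum_const]
  congr 1
  rw [Ncnt]
  congr 1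
  ext q
  simp only [Finset.mem_filter, Finset.mem_product, Finset.mem_univ, true_and]
  tauto

lemma part2 (I J : Finset ℕ) :
    pElt n I * pElt n J ∈ Submodule.span ℤ (Set.range (pElt n)) := by
  classical
  set NC : Finset ℕ → ℕ := fun K =>
    if h : ∃ τ0 : Equiv.Perm (Fin n), IPeak n τ0 = K then Ncnt n I J h.choose else 0 with hNC
  have hNCval : ∀ τ : Equiv.Perm (Fin n), Ncnt n I J τ = NC (IPeak n τ) := by
    intro τ
    have hex : ∃ τ0 : Equiv.Perm (Fin n), IPeak n τ0 = IPeak n τ := ⟨τ, rfl⟩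
    rw [hNC]
    simp only [dif_pos hex]
    exact (ncnt_eq_of_ipeak_eq hex.choose_spec I J).symm
  rw [pElt_mul_expand]
  have hre : ∑ τ ∈ Finset.univ, (Ncnt n I J τ) • MonoidAlgebra.of ℤ (Equiv.Perm (Fin n)) τ =
      ∑ K ∈ Finset.univ.image (IPeak n), (NC K) • pElt n K := by
    rw [← Finset.sum_fiberwise_of_maps_to (g := IPeak n)
      (t := Finset.univ.image (IPeak n)) (fun τ _ => Finset.mem_image_of_mem _ (Finset.mem_univ τ)) _]
    apply Finset.sum_congr rfl
    intro K _
    rw [pElt, Finset.smul_sum]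
    apply Finset.sum_congr rfl
    intro τ hτ
    simp only [Finset.mem_filter] at hτ
    rw [hNCval, hτ.2]
  rw [hre]
  apply Submodule.sum_mem
  intro K _
  have : (NC K) • pElt n K = ((NC K : ℤ)) • pElt n K := by
    rw [Nat.cast_smul_eq_nsmul]
  rw [this]
  exact Submodule.smul_mem _ _ (Submodule.subset_span (Set.mem_range_self K))

end Peaks

/-- Nyman's theorem: the span of the interior peak elements is a (non-unital)
subalgebra of the descent algebra of `S_n`. -/
theorem peak_algebra_in_descent_algebra (n : ℕ) :
    (∀ I : Finset ℕ, pElt n I ∈ Submodule.span ℤ (Set.range (dElt n))) ∧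
      ∀ I J : Finset ℕ,
        pElt n I * pElt n J ∈ Submodule.span ℤ (Set.range (pElt n)) := by
  exact ⟨fun I => Peaks.part1 I, fun I J => Peaks.part2 I J⟩
end

section
/- A subset I of {1,...,n-1} is the exterior peak set of some permutation in S_n if and only if every i ∈ I with i ≠ 1 satisfies i-1 ∉ I. Equivalently, the exterior peak compositions of n are exactly the compositions (c_1,...,c_k) with c_i > 1 for all 2 ≤ i ≤ k-1. -/
/-- The (0-based) exterior peak set, with the convention that the value just before
position `0` is smaller than every value:
`{i ∈ [0,n-2] : σ(i-1) < σ(i) > σ(i+1)}`. -/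
def EPeak (n : ℕ) (σ : Equiv.Perm (Fin n)) : Finset ℕ :=
  (Finset.range (n - 1)).filter fun i =>
    (i = 0 ∨ pval n σ (i - 1) < pval n σ i) ∧ pval n σ (i + 1) < pval n σ i

open Finset

/-- number of elements of `I` below `j` -/
def cnt (I : Finset ℕ) (j : ℕ) : ℕ := ((Finset.range j).filter (· ∈ I)).card

/-- number of non-elements of `I` below `j` -/
def dnt (I : Finset ℕ) (j : ℕ) : ℕ := ((Finset.range j).filter (· ∉ I)).card

def fval (n : ℕ) (I : Finset ℕ) (j : ℕ) : ℕ :=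
  if j ∈ I then (n - I.card) + cnt I j else dnt I j

lemma cnt_succ_mem (I : Finset ℕ) {j : ℕ} (h : j ∈ I) : cnt I (j+1) = cnt I j + 1 := by
  unfold cnt
  rw [Finset.range_add_one, Finset.filter_insert, if_pos h,
    Finset.card_insert_of_notMem (by simp)]

lemma cnt_succ_notMem (I : Finset ℕ) {j : ℕ} (h : j ∉ I) : cnt I (j+1) = cnt I j := by
  unfold cnt
  rw [Finset.range_add_one, Finset.filter_insert, if_neg h]

lemma dnt_succ_notMem (I : Finset ℕ) {j : ℕ} (h : j ∉ I) : dnt I (j+1) = dnt I j + 1 := by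
  unfold dnt
  rw [Finset.range_add_one, Finset.filter_insert, if_pos h,
    Finset.card_insert_of_notMem (by simp)]

lemma dnt_succ_mem (I : Finset ℕ) {j : ℕ} (h : j ∈ I) : dnt I (j+1) = dnt I j := by
  unfold dnt
  rw [Finset.range_add_one, Finset.filter_insert, if_neg (by simpa using h)]

lemma cnt_mono (I : Finset ℕ) {j j' : ℕ} (h : j ≤ j') : cnt I j ≤ cnt I j' :=
  Finset.card_le_card (Finset.filter_subset_filter _ (by simpa using Finset.range_subset_range.2 h))

lemma dnt_mono (I : Finset ℕ) {j j' : ℕ} (h : j ≤ j') : dnt I j ≤ dnt I j' :=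
  Finset.card_le_card (Finset.filter_subset_filter _ (by simpa using Finset.range_subset_range.2 h))

lemma cnt_add_dnt (I : Finset ℕ) (j : ℕ) : cnt I j + dnt I j = j := by
  unfold cnt dnt
  rw [Finset.card_filter_add_card_filter_not, Finset.card_range]

lemma cnt_le_card (I : Finset ℕ) (j : ℕ) : cnt I j ≤ I.card :=
  Finset.card_le_card (fun x hx => (Finset.mem_filter.1 hx).2)

variable {n : ℕ} {I : Finset ℕ}

lemma cnt_lt_card (hj : j ∈ I) : cnt I j < I.card := by
  have := cnt_succ_mem I hj
  have := cnt_le_card I (j+1)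
  omega

lemma cnt_n (hI : I ⊆ Finset.range (n - 1)) : cnt I n = I.card := by
  unfold cnt
  congr 1
  apply Finset.Subset.antisymm (fun x hx => (Finset.mem_filter.1 hx).2)
  intro x hx
  have := Finset.mem_range.1 (hI hx)
  exact Finset.mem_filter.2 ⟨Finset.mem_range.2 (by omega), hx⟩

lemma dnt_lt (hI : I ⊆ Finset.range (n - 1)) {j : ℕ} (hj : j < n) (hjI : j ∉ I) :
    dnt I j < n - I.card := by
  have h1 := dnt_succ_notMem I hjI
  have h2 := dnt_mono I (show j + 1 ≤ n by omega)
  have h3 := cnt_add_dnt I n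
  have h4 := cnt_n hI
  omega

lemma card_le (hI : I ⊆ Finset.range (n - 1)) : I.card ≤ n - 1 := by
  calc I.card ≤ (Finset.range (n-1)).card := Finset.card_le_card hI
  _ = n - 1 := Finset.card_range _

lemma fval_lt (hI : I ⊆ Finset.range (n - 1)) {j : ℕ} (hj : j < n) : fval n I j < n := by
  unfold fval
  split
  · have h1 := cnt_lt_card ‹j ∈ I›
    have h2 := card_le hI
    omega
  · have := dnt_lt hI hj ‹j ∉ I›
    omega

lemma cnt_strict (hj : j ∈ I) (h : j < j') : cnt I j < cnt I j' := by
  have := cnt_succ_mem I hj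
  have := cnt_mono I (show j + 1 ≤ j' from h)
  omega

lemma dnt_strict (hj : j ∉ I) (h : j < j') : dnt I j < dnt I j' := by
  have := dnt_succ_notMem I hj
  have := dnt_mono I (show j + 1 ≤ j' from h)
  omega

lemma fval_inj (hI : I ⊆ Finset.range (n - 1)) {j j' : ℕ} (hj : j < n) (hj' : j' < n)
    (h : fval n I j = fval n I j') : j = j' := by
  by_contra hne
  unfold fval at h
  by_cases h1 : j ∈ I <;> by_cases h2 : j' ∈ I
  · rw [if_pos h1, if_pos h2] at h
    rcases Nat.lt_or_ge j j' with hlt | hge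
    · have := cnt_strict h1 hlt; omega
    · have : j' < j := by omega
      have := cnt_strict h2 this; omega
  · rw [if_pos h1, if_neg h2] at h
    have := dnt_lt hI hj' h2
    have := cnt_lt_card h1
    omega
  · rw [if_neg h1, if_pos h2] at h
    have := dnt_lt hI hj h1
    have := cnt_lt_card h2
    omega
  · rw [if_neg h1, if_neg h2] at h
    rcases Nat.lt_or_ge j j' with hlt | hge
    · have := dnt_strict h1 hlt; omega
    · have : j' < j := by omega
      have := dnt_strict h2 this; omega

/-- ascent at a non-peak position -/
lemma fval_ascent (hI : I ⊆ Finset.range (n - 1)) {j : ℕ} (hj : j < n) (hjI : j ∉ I) :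
    fval n I j < fval n I (j+1) := by
  unfold fval
  rw [if_neg hjI]
  by_cases h : j + 1 ∈ I
  · rw [if_pos h]
    have := dnt_lt hI hj hjI
    omega
  · rw [if_neg h, dnt_succ_notMem I hjI]
    omega

/-- A subset `I` of the possible descent positions is the exterior peak set of some
permutation iff every `i ∈ I` other than the first position satisfies `i - 1 ∉ I`. -/
theorem exists_perm_ePeak_iff (n : ℕ) (I : Finset ℕ) (hI : I ⊆ Finset.range (n - 1)) :
    (∃ σ : Equiv.Perm (Fin n), EPeak n σ = I) ↔ ∀ i ∈ I, i ≠ 0 → i - 1 ∉ I := by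
  constructor
  · rintro ⟨σ, rfl⟩ i hi hi0 hi1
    rw [EPeak, Finset.mem_filter] at hi hi1
    obtain ⟨-, hL, hR⟩ := hi
    obtain ⟨-, -, hR'⟩ := hi1
    rw [show i - 1 + 1 = i by omega] at hR'
    rcases hL with h | h
    · exact hi0 h
    · omega
  · intro hadj
    -- the permutation
    have hbound : ∀ j : Fin n, fval n I j < n := fun j => fval_lt hI j.2
    let f : Fin n → Fin n := fun j => ⟨fval n I j, hbound j⟩
    have hinj : Function.Injective f := by
      intro a b hab
      have : fval n I a = fval n I b := congrArg Fin.val hab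
      exact Fin.ext (fval_inj hI a.2 b.2 this)
    let σ : Equiv.Perm (Fin n) := Equiv.ofBijective f (Finite.injective_iff_bijective.1 hinj)
    have hpval : ∀ i (h : i < n), pval n σ i = fval n I i := by
      intro i h
      rw [pval, dif_pos h]
      rfl
    refine ⟨σ, ?_⟩
    ext i
    rw [EPeak, Finset.mem_filter]
    constructor
    · rintro ⟨hr, -, hdesc⟩
      have hr' := Finset.mem_range.1 hr
      by_contra hiI
      have h1 : i < n := by omega
      have := fval_ascent hI h1 hiI
      rw [hpval i h1, hpval (i+1) (by omega)] at hdesc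
      omega
    · intro hiI
      have hr' := Finset.mem_range.1 (hI hiI)
      have h1 : i < n := by omega
      have h2 : i + 1 < n := by omega
      have hsuccI : i + 1 ∉ I := fun h => hadj (i+1) h (by omega) (by simpa using hiI)
      refine ⟨hI hiI, ?_, ?_⟩
      · -- left condition
        by_cases hi0 : i = 0
        · exact Or.inl hi0
        · right
          have hpredI : i - 1 ∉ I := hadj i hiI hi0
          have := fval_ascent hI (show i - 1 < n by omega) hpredI
          rw [show i - 1 + 1 = i by omega] at this
          rw [hpval (i-1) (by omega), hpval i h1]
          exact this
      · -- descent
        rw [hpval (i+1) h2, hpval i h1]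
        unfold fval
        rw [if_pos hiI, if_neg hsuccI]
        have := dnt_lt hI h2 hsuccI
        omega
end

section
/- Two permutations σ, τ ∈ S_n have the same exterior peak set if and only if they are connected by a chain of moves σ ↦ s_i σ where at each step either |σ^{-1}(i) - σ^{-1}(i+1)| > 1, or i = 1 and {σ(1), σ(2)} ≠ {1,2}. In particular, the set of permutations with a fixed exterior peak set is left-connected under multiplication by simple transpositions. -/
/-- One step of the exterior peak equivalence. -/
def PStep (n : ℕ) (σ τ : Equiv.Perm (Fin n)) : Prop :=
  ∃ i, ∃ h : i + 1 < n, τ = sT n i h * σ ∧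
    (1 < Nat.dist (pval n σ⁻¹ i) (pval n σ⁻¹ (i + 1)) ∨
      (i = 0 ∧ ({pval n σ 0, pval n σ 1} : Set ℕ) ≠ {0, 1}))

namespace EPC
open Finset Equiv Relation

variable {n : ℕ}

lemma pval_def (σ : Perm (Fin n)) {i : ℕ} (h : i < n) : pval n σ i = (σ ⟨i, h⟩ : ℕ) :=
  dif_pos h

lemma pval_lt_n (σ : Perm (Fin n)) {i : ℕ} (h : i < n) : pval n σ i < n := by
  rw [pval_def σ h]; exact (σ ⟨i, h⟩).isLt

lemma pval_inj (σ : Perm (Fin n)) {i j : ℕ} (hi : i < n) (hj : j < n) (hij : i ≠ j) :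
    pval n σ i ≠ pval n σ j := by
  rw [pval_def σ hi, pval_def σ hj]
  intro h
  exact hij (Fin.mk.inj_iff.1 (σ.injective (Fin.ext h)))

lemma pval_inv_pval (σ : Perm (Fin n)) {v : ℕ} (hv : v < n) :
    pval n σ (pval n σ⁻¹ v) = v := by
  have h1 : pval n σ⁻¹ v < n := pval_lt_n _ hv
  rw [pval_def σ h1]
  have h2 : (⟨pval n σ⁻¹ v, h1⟩ : Fin n) = σ⁻¹ ⟨v, hv⟩ := Fin.ext (pval_def σ⁻¹ hv)
  rw [h2]; exact congrArg Fin.val (σ.apply_symm_apply _)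

/-- position/value correspondence -/
lemma pval_ne_of_pos_ne (σ : Perm (Fin n)) {k v : ℕ} (hk : k < n) (hv : v < n)
    (h : pval n σ⁻¹ v ≠ k) : pval n σ k ≠ v := by
  intro hkv
  apply h
  rw [pval_def σ hk] at hkv
  rw [pval_def σ⁻¹ hv]
  have : σ ⟨k, hk⟩ = ⟨v, hv⟩ := Fin.ext hkv
  rw [← this]; exact congrArg Fin.val (σ.symm_apply_apply _)

lemma mem_Des {σ : Perm (Fin n)} {i : ℕ} :
    i ∈ Des n σ ↔ i + 1 < n ∧ pval n σ (i + 1) < pval n σ i := by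
  unfold Des
  simp only [mem_filter, mem_range]
  constructor
  · rintro ⟨h1, h2⟩; exact ⟨by omega, h2⟩
  · rintro ⟨h1, h2⟩; exact ⟨by omega, h2⟩

lemma mem_EPeak {σ : Perm (Fin n)} {i : ℕ} :
    i ∈ EPeak n σ ↔ i + 1 < n ∧ (i = 0 ∨ pval n σ (i - 1) < pval n σ i) ∧
      pval n σ (i + 1) < pval n σ i := by
  unfold EPeak
  simp only [mem_filter, mem_range]
  constructor
  · rintro ⟨h1, h2⟩; exact ⟨by omega, h2⟩
  · rintro ⟨h1, h2⟩; exact ⟨by omega, h2⟩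

lemma Des_eq_of_cmp {σ τ : Perm (Fin n)}
    (H : ∀ k, k + 1 < n → (pval n σ (k + 1) < pval n σ k ↔ pval n τ (k + 1) < pval n τ k)) :
    Des n σ = Des n τ := by
  ext i
  rw [mem_Des, mem_Des]
  constructor
  · rintro ⟨h1, h2⟩; exact ⟨h1, (H i h1).1 h2⟩
  · rintro ⟨h1, h2⟩; exact ⟨h1, (H i h1).2 h2⟩

lemma EPeak_eq_of_cmp {σ τ : Perm (Fin n)}
    (H : ∀ k, k + 1 < n → (pval n σ (k + 1) < pval n σ k ↔ pval n τ (k + 1) < pval n τ k)) :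
    EPeak n σ = EPeak n τ := by
  ext i
  rw [mem_EPeak, mem_EPeak]
  constructor
  · rintro ⟨h1, h2, h3⟩
    refine ⟨h1, ?_, (H i h1).1 h3⟩
    rcases h2 with h2 | h2
    · exact Or.inl h2
    · right
      rcases Nat.eq_zero_or_pos i with h0 | h0
      · subst h0; simpa using h2
      · have hi : i - 1 + 1 = i := by omega
        have hlt : i - 1 + 1 < n := by omega
        have := H (i - 1) hlt
        rw [hi] at this
        have hne : pval n τ (i - 1) ≠ pval n τ i :=
          pval_inj τ (by omega) (by omega) (by omega)
        have hne' : pval n σ (i - 1) ≠ pval n σ i :=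
          pval_inj σ (by omega) (by omega) (by omega)
        omega
  · rintro ⟨h1, h2, h3⟩
    refine ⟨h1, ?_, (H i h1).2 h3⟩
    rcases h2 with h2 | h2
    · exact Or.inl h2
    · right
      rcases Nat.eq_zero_or_pos i with h0 | h0
      · subst h0; simpa using h2
      · have hi : i - 1 + 1 = i := by omega
        have hlt : i - 1 + 1 < n := by omega
        have := H (i - 1) hlt
        rw [hi] at this
        have hne : pval n τ (i - 1) ≠ pval n τ i :=
          pval_inj τ (by omega) (by omega) (by omega)
        have hne' : pval n σ (i - 1) ≠ pval n σ i :=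
          pval_inj σ (by omega) (by omega) (by omega)
        omega

/-- value of `sT * σ` -/
def svalN (i v : ℕ) : ℕ := if v = i then i + 1 else if v = i + 1 then i else v

lemma pval_sT_mul (σ : Perm (Fin n)) {i : ℕ} (h : i + 1 < n) {k : ℕ} (hk : k < n) :
    pval n (sT n i h * σ) k = svalN i (pval n σ k) := by
  rw [pval_def _ hk, pval_def σ hk]
  have hmul : (sT n i h * σ) ⟨k, hk⟩ =
      Equiv.swap ⟨i, Nat.lt_of_succ_lt h⟩ ⟨i + 1, h⟩ (σ ⟨k, hk⟩) := rfl
  rw [hmul, Equiv.swap_apply_def]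
  unfold svalN
  rcases eq_or_ne ((σ ⟨k, hk⟩ : ℕ)) i with h1 | h1
  · rw [if_pos (Fin.ext h1), if_pos h1]
  · rcases eq_or_ne ((σ ⟨k, hk⟩ : ℕ)) (i + 1) with h2 | h2
    · rw [if_neg (fun he => h1 (by rw [he])), if_pos (Fin.ext h2), if_neg h1, if_pos h2]
    · rw [if_neg (fun he => h1 (by rw [he])), if_neg (fun he => h2 (by rw [he])),
        if_neg h1, if_neg h2]

lemma svalN_lt_iff {i x y : ℕ} (h1 : ¬(x = i ∧ y = i + 1)) (h2 : ¬(x = i + 1 ∧ y = i)) :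
    svalN i x < svalN i y ↔ x < y := by
  unfold svalN
  split_ifs <;> omega

/-- comparisons are preserved by `sT i` at any pair of positions that is not
exactly the pair of positions of the values `i`, `i+1`. -/
lemma cmp_pair {σ : Perm (Fin n)} {i : ℕ} (h : i + 1 < n) {m m' : ℕ} (hm : m < n) (hm' : m' < n)
    (h1 : ¬(pval n σ m = i ∧ pval n σ m' = i + 1))
    (h2 : ¬(pval n σ m = i + 1 ∧ pval n σ m' = i)) :
    (pval n (sT n i h * σ) m' < pval n (sT n i h * σ) m ↔ pval n σ m' < pval n σ m) := by
  rw [pval_sT_mul σ h hm, pval_sT_mul σ h hm']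
  exact svalN_lt_iff (fun hc => h2 ⟨hc.2, hc.1⟩) (fun hc => h1 ⟨hc.2, hc.1⟩)

lemma cmp_of_far {σ : Perm (Fin n)} {i : ℕ} (h : i + 1 < n)
    (hfar : 1 < Nat.dist (pval n σ⁻¹ i) (pval n σ⁻¹ (i + 1))) :
    ∀ k, k + 1 < n →
      (pval n (sT n i h * σ) (k + 1) < pval n (sT n i h * σ) k ↔
        pval n σ (k + 1) < pval n σ k) := by
  intro k hk
  have hkn : k < n := by omega
  have hin : i < n := by omega
  have hain : i + 1 < n := h
  apply cmp_pair h hkn hk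
  · rintro ⟨ha, hb⟩
    have e1 : pval n σ⁻¹ i = k := by
      by_contra hc; exact pval_ne_of_pos_ne σ hkn hin hc ha
    have e2 : pval n σ⁻¹ (i + 1) = k + 1 := by
      by_contra hc; exact pval_ne_of_pos_ne σ hk hain hc hb
    rw [e1, e2] at hfar
    unfold Nat.dist at hfar
    omega
  · rintro ⟨ha, hb⟩
    have e1 : pval n σ⁻¹ (i + 1) = k := by
      by_contra hc; exact pval_ne_of_pos_ne σ hkn hain hc ha
    have e2 : pval n σ⁻¹ i = k + 1 := by
      by_contra hc; exact pval_ne_of_pos_ne σ hk hin hc hb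
    rw [e1, e2] at hfar
    unfold Nat.dist at hfar
    omega

lemma sT_mul_sT_mul {i : ℕ} (h : i + 1 < n) (σ : Perm (Fin n)) :
    sT n i h * (sT n i h * σ) = σ := by
  rw [← mul_assoc]
  unfold sT
  rw [Equiv.swap_mul_self, one_mul]

/-- the set-pair characterization -/
lemma pair_eq_01 {x y : ℕ} : ({x, y} : Set ℕ) = {0, 1} ↔ (x = 0 ∧ y = 1) ∨ (x = 1 ∧ y = 0) := by
  constructor
  · intro hs
    have hx : x ∈ ({0, 1} : Set ℕ) := by rw [← hs]; exact Set.mem_insert _ _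
    have hy : y ∈ ({0, 1} : Set ℕ) := by rw [← hs]; exact Set.mem_insert_of_mem _ rfl
    have h0 : (0 : ℕ) ∈ ({x, y} : Set ℕ) := by rw [hs]; exact Set.mem_insert _ _
    have h1 : (1 : ℕ) ∈ ({x, y} : Set ℕ) := by rw [hs]; exact Set.mem_insert_of_mem _ rfl
    simp only [Set.mem_insert_iff, Set.mem_singleton_iff] at hx hy h0 h1
    omega
  · rintro (⟨hx, hy⟩ | ⟨hx, hy⟩) <;> subst hx <;> subst hy
    · rfl
    · exact Set.pair_comm 1 0

/-- Key adjacent-case lemma: if `σ(a) = 0`, `σ(a+1) = 1` with `a ≥ 1`, then swapping the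
values `0` and `1` does not change the exterior peak set. -/
lemma epeak_adj01 {σ : Perm (Fin n)} {a : ℕ} (ha : 1 ≤ a) (h2 : a + 1 < n)
    (h0 : pval n σ a = 0) (h1 : pval n σ (a + 1) = 1) (hT : 0 + 1 < n) :
    EPeak n (sT n 0 hT * σ) = EPeak n σ := by
  set τ := sT n 0 hT * σ with hτ
  have han : a < n := by omega
  -- values away from a, a+1 are ≥ 2
  have hval : ∀ m, m < n → m ≠ a → m ≠ a + 1 → 2 ≤ pval n σ m := by
    intro m hmn hma hma1
    have hne0 : pval n σ m ≠ 0 := by rw [← h0]; exact pval_inj σ hmn han hma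
    have hne1 : pval n σ m ≠ 1 := by rw [← h1]; exact pval_inj σ hmn h2 hma1
    omega
  have hτval : ∀ m, m < n → pval n τ m = svalN 0 (pval n σ m) := fun m hm =>
    pval_sT_mul σ hT hm
  have hτa : pval n τ a = 1 := by rw [hτval a han, h0]; rfl
  have hτa1 : pval n τ (a + 1) = 0 := by rw [hτval (a + 1) h2, h1]; rfl
  have hτfix : ∀ m, m < n → m ≠ a → m ≠ a + 1 → pval n τ m = pval n σ m := by
    intro m hmn hma hma1
    rw [hτval m hmn]
    have := hval m hmn hma hma1
    unfold svalN
    rw [if_neg (by omega), if_neg (by omega)]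
  -- comparisons away from the pair (a, a+1) agree
  have hcmp : ∀ k, k + 1 < n → k ≠ a →
      (pval n τ (k + 1) < pval n τ k ↔ pval n σ (k + 1) < pval n σ k) := by
    intro k hk hka
    rw [hτ]
    apply cmp_pair hT (by omega) hk
    · rintro ⟨hxa, hxb⟩
      have e1 : k = a := by
        by_contra hc
        have : pval n σ⁻¹ 0 = a := by
          by_contra hcc; exact (pval_ne_of_pos_ne σ han (by omega) hcc) h0
        have : pval n σ⁻¹ 0 ≠ k := by omega
        exact (pval_ne_of_pos_ne σ (by omega) (by omega) this) hxa
      exact hka e1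
    · rintro ⟨hxa, hxb⟩
      -- σ k = 1 means k = a+1, σ (k+1) = 0 means k+1 = a, impossible
      have e1 : k = a + 1 := by
        by_contra hc
        have hp1 : pval n σ⁻¹ 1 = a + 1 := by
          by_contra hcc; exact (pval_ne_of_pos_ne σ h2 (by omega) hcc) h1
        have : pval n σ⁻¹ 1 ≠ k := by omega
        exact (pval_ne_of_pos_ne σ (by omega) (by omega) this) hxa
      have e2 : k + 1 = a := by
        by_contra hc
        have hp0 : pval n σ⁻¹ 0 = a := by
          by_contra hcc; exact (pval_ne_of_pos_ne σ han (by omega) hcc) h0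
        have : pval n σ⁻¹ 0 ≠ k + 1 := by omega
        exact (pval_ne_of_pos_ne σ hk (by omega) this) hxb
      omega
  ext k
  rw [mem_EPeak, mem_EPeak]
  constructor
  · rintro ⟨hk1, hk2, hk3⟩
    refine ⟨hk1, ?_, ?_⟩
    · -- left condition for σ
      rcases hk2 with hk2 | hk2
      · exact Or.inl hk2
      · rcases Nat.eq_zero_or_pos k with hk0 | hk0
        · exact Or.inl hk0
        right
        -- k ≥ 1; τ(k-1) < τ(k).  Transfer to σ.
        by_cases hk1a : k - 1 = a
        · -- τ(a) = 1 < τ(a+1)?? τ(a+1) = 0, so k = a+1 gives τ(k-1) = 1 > 0 = τ(k): contradiction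
          have hkval : k = a + 1 := by omega
          have hzero : pval n τ k = 0 := by rw [hkval]; exact hτa1
          omega
        · by_cases hkaa : k = a
          · -- k = a : τ(a-1) < τ(a) = 1 → τ(a-1) = 0 but values away are ≥ 2
            exfalso
            have hfix : pval n τ (k - 1) = pval n σ (k - 1) := by
              apply hτfix (k - 1) (by omega) (by omega) (by omega)
            have hge : 2 ≤ pval n σ (k - 1) := hval (k - 1) (by omega) (by omega) (by omega)
            have hone : pval n τ k = 1 := by rw [hkaa]; exact hτa
            omega
          · -- generic : use hcmp at (k-1, k)
            have hik : k - 1 + 1 = k := by omega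
            have := hcmp (k - 1) (by omega) hk1a
            rw [hik] at this
            have hneτ : pval n τ (k - 1) ≠ pval n τ k :=
              pval_inj τ (by omega) (by omega) (by omega)
            have hneσ : pval n σ (k - 1) ≠ pval n σ k :=
              pval_inj σ (by omega) (by omega) (by omega)
            omega
    · -- right condition for σ
      by_cases hka : k = a
      · -- τ(a+1) = 0 < 1 = τ(a) true; but σ side: σ(a+1)=1 > 0 = σ(a); need contradiction
        -- from left condition of τ : k = a ≥ 1, so τ(k-1) < τ(k) = 1 → impossible
        exfalso
        rcases hk2 with hk2 | hk2
        · omega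
        · have hfix : pval n τ (k - 1) = pval n σ (k - 1) := by
            apply hτfix (k - 1) (by omega) (by omega) (by omega)
          have hge : 2 ≤ pval n σ (k - 1) := hval (k - 1) (by omega) (by omega) (by omega)
          have hone : pval n τ k = 1 := by rw [hka]; exact hτa
          omega
      · exact (hcmp k hk1 hka).1 hk3
  · rintro ⟨hk1, hk2, hk3⟩
    refine ⟨hk1, ?_, ?_⟩
    · rcases hk2 with hk2 | hk2
      · exact Or.inl hk2
      · rcases Nat.eq_zero_or_pos k with hk0 | hk0
        · exact Or.inl hk0
        right
        by_cases hk1a : k - 1 = a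
        · -- k = a+1 : σ(a) = 0 < σ(a+1) = 1 ✓... but σ side peak needs σ(k+1)<σ(k)=1
          -- this branch just needs τ(k-1) < τ(k): but k=a+1: τ(a)=1, τ(a+1)=0: 1<0 false.
          -- hk3 : σ(k+1) < σ(k); k = a+1 : σ(k) = 1 so σ(k+1) = 0, but 0 is at a ≠ k+1. contradiction.
          exfalso
          have hkval : k = a + 1 := by omega
          have hone : pval n σ k = 1 := by rw [hkval]; exact h1
          have : pval n σ (k + 1) = 0 := by omega
          have hp0 : pval n σ⁻¹ 0 = a := by
            by_contra hcc; exact (pval_ne_of_pos_ne σ han (by omega) hcc) h0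
          have hne : pval n σ⁻¹ 0 ≠ k + 1 := by omega
          exact (pval_ne_of_pos_ne σ (by omega) (by omega) hne) this
        · by_cases hkaa : k = a
          · -- k = a : σ(a-1) < σ(a) = 0 impossible
            exfalso
            have hzero : pval n σ k = 0 := by rw [hkaa]; exact h0
            omega
          · have hik : k - 1 + 1 = k := by omega
            have := hcmp (k - 1) (by omega) hk1a
            rw [hik] at this
            have hneτ : pval n τ (k - 1) ≠ pval n τ k :=
              pval_inj τ (by omega) (by omega) (by omega)
            have hneσ : pval n σ (k - 1) ≠ pval n σ k :=
              pval_inj σ (by omega) (by omega) (by omega)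
            omega
    · by_cases hka : k = a
      · exfalso
        have hzero : pval n σ k = 0 := by rw [hka]; exact h0
        omega
      · exact (hcmp k hk1 hka).2 hk3

/-- A `PStep` preserves the exterior peak set. -/
lemma step_epeak {σ τ : Perm (Fin n)} (h : PStep n σ τ) : EPeak n σ = EPeak n τ := by
  obtain ⟨i, hi, hτ, hcond⟩ := h
  rcases hcond with hfar | ⟨hi0, hne⟩
  · exact (EPeak_eq_of_cmp (by rw [hτ] at *; exact cmp_of_far hi hfar)).symm
  · subst hi0
    -- near or far case for values 0 and 1
    by_cases hfar : 1 < Nat.dist (pval n σ⁻¹ 0) (pval n σ⁻¹ (0 + 1))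
    · exact (EPeak_eq_of_cmp (by rw [hτ] at *; exact cmp_of_far hi hfar)).symm
    · -- adjacent positions
      set a := pval n σ⁻¹ 0 with hadef
      set b := pval n σ⁻¹ 1 with hbdef
      have h0n : (0 : ℕ) < n := by omega
      have h1n : (1 : ℕ) < n := hi
      have hav : pval n σ a = 0 := pval_inv_pval σ h0n
      have hbv : pval n σ b = 1 := pval_inv_pval σ h1n
      have haln : a < n := pval_lt_n σ⁻¹ h0n
      have hbln : b < n := pval_lt_n σ⁻¹ h1n
      have hab : a ≠ b := by
        intro hc; rw [hc, hbv] at hav; omega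
      have hcase : b = a + 1 ∨ a = b + 1 := by
        unfold Nat.dist at hfar
        omega
      rcases hcase with hcase | hcase
      · -- σ(a) = 0, σ(a+1) = 1
        have ha1 : 1 ≤ a := by
          rcases Nat.eq_zero_or_pos a with h | h
          · exfalso
            apply hne
            rw [pair_eq_01]
            left
            refine ⟨?_, ?_⟩
            · rw [h] at hav; exact hav
            · have hb1' : b = 1 := by omega
              rw [hb1'] at hbv; exact hbv
          · exact h
        rw [hτ]
        exact (epeak_adj01 ha1 (by omega) hav (by rw [← hcase]; exact hbv) hi).symm
      · -- σ(b) = 1, σ(b+1) = 0 : apply the lemma to τ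
        have hτb : pval n τ b = 0 := by
          rw [hτ, pval_sT_mul σ hi hbln, hbv]; rfl
        have hτb1 : pval n τ (b + 1) = 1 := by
          rw [hτ, pval_sT_mul σ hi (by omega : b + 1 < n), ← hcase, hav]; rfl
        have hb1 : 1 ≤ b := by
          rcases Nat.eq_zero_or_pos b with h | h
          · exfalso
            apply hne
            rw [pair_eq_01]
            right
            refine ⟨?_, ?_⟩
            · rw [h] at hbv; exact hbv
            · have ha1' : a = 1 := by omega
              rw [ha1'] at hav; exact hav
          · exact h
        have := epeak_adj01 (σ := τ) hb1 (by omega) hτb hτb1 hi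
        rw [hτ, sT_mul_sT_mul] at this
        rw [hτ]
        exact this

/-! ### Inversion counting and descent-class connectivity -/

/-- Number of inversions of a permutation. -/
def invCount (π : Perm (Fin n)) : ℕ :=
  ((Finset.univ : Finset (Fin n × Fin n)).filter fun p => p.1 < p.2 ∧ π p.2 < π p.1).card

lemma swap_val (a b x : Fin n) (hab : (a : ℕ) + 1 = (b : ℕ)) :
    (Equiv.swap a b x : ℕ) =
      if (x : ℕ) = (a : ℕ) then (b : ℕ) else if (x : ℕ) = (b : ℕ) then (a : ℕ) else (x : ℕ) := by
  rcases eq_or_ne x a with rfl | hxa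
  · rw [Equiv.swap_apply_left, if_pos rfl]
  · rcases eq_or_ne x b with rfl | hxb
    · rw [Equiv.swap_apply_right, if_neg (by omega), if_pos rfl]
    · rw [Equiv.swap_apply_of_ne_of_ne hxa hxb,
        if_neg (fun h => hxa (Fin.ext h)), if_neg (fun h => hxb (Fin.ext h))]

lemma swap_lt_swap {a b p q : Fin n} (hab : (a : ℕ) + 1 = (b : ℕ)) (hpq : p < q)
    (hne : ¬(p = a ∧ q = b)) : Equiv.swap a b p < Equiv.swap a b q := by
  have hne' : ¬((p : ℕ) = (a : ℕ) ∧ (q : ℕ) = (b : ℕ)) := fun h =>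
    hne ⟨Fin.ext h.1, Fin.ext h.2⟩
  rw [Fin.lt_def] at hpq
  rw [Fin.lt_def, swap_val a b p hab, swap_val a b q hab]
  split_ifs <;> omega

lemma invCount_swap_lt {π : Perm (Fin n)} {a b : Fin n} (hab : (a : ℕ) + 1 = (b : ℕ))
    (hd : π b < π a) : invCount (π * Equiv.swap a b) < invCount π := by
  classical
  set s := Equiv.swap a b with hs
  set S1 := ((Finset.univ : Finset (Fin n × Fin n)).filter
    fun p => p.1 < p.2 ∧ (π * s) p.2 < (π * s) p.1) with hS1
  set S2 := ((Finset.univ : Finset (Fin n × Fin n)).filter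
    fun p => p.1 < p.2 ∧ π p.2 < π p.1) with hS2
  have hF : ∀ p : Fin n × Fin n, p ∈ S1 → (s p.1, s p.2) ∈ S2 := by
    rintro ⟨p, q⟩ hp
    rw [hS1, mem_filter] at hp
    obtain ⟨-, hpq, hinv⟩ := hp
    rw [hS2, mem_filter]
    refine ⟨mem_univ _, ?_, ?_⟩
    · apply swap_lt_swap hab hpq
      rintro ⟨rfl, rfl⟩
      have e1 : (π * s) p = π q := by
        simp only [Equiv.Perm.mul_apply, hs, Equiv.swap_apply_left]
      have e2 : (π * s) q = π p := by
        simp only [Equiv.Perm.mul_apply, hs, Equiv.swap_apply_right]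
      rw [e1, e2] at hinv
      exact absurd hd (not_lt.2 (le_of_lt hinv))
    · simpa only [Equiv.Perm.mul_apply] using hinv
  have hinj : ∀ p ∈ S1, ∀ q ∈ S1, (s p.1, s p.2) = (s q.1, s q.2) → p = q := by
    rintro ⟨p1, p2⟩ - ⟨q1, q2⟩ - h
    simp only [Prod.mk.injEq] at h ⊢
    exact ⟨s.injective h.1, s.injective h.2⟩
  have hcard : S1.card = (S1.image fun p => (s p.1, s p.2)).card :=
    (Finset.card_image_of_injOn fun p hp q hq h => hinj p hp q hq h).symm
  have hsub : S1.image (fun p => (s p.1, s p.2)) ⊂ S2 := by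
    rw [Finset.ssubset_iff_of_subset]
    · refine ⟨(a, b), ?_, ?_⟩
      · rw [hS2, mem_filter]
        refine ⟨mem_univ _, ?_, hd⟩
        show a < b
        rw [Fin.lt_def]; omega
      · intro hmem
        rw [Finset.mem_image] at hmem
        obtain ⟨⟨p, q⟩, hp, heq⟩ := hmem
        simp only [Prod.mk.injEq] at heq
        have hp1 : p = b := by
          have := heq.1
          rw [hs] at this
          have : s.symm (s p) = s.symm a := by rw [this]
          simpa [hs, Equiv.swap_apply_left] using this
        have hq1 : q = a := by
          have := heq.2
          have : s.symm (s q) = s.symm b := by rw [this]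
          simpa [hs, Equiv.swap_apply_right] using this
        rw [hS1, mem_filter] at hp
        obtain ⟨-, hpq, -⟩ := hp
        have hpq' : p < q := hpq
        rw [hp1, hq1, Fin.lt_def] at hpq'
        omega
    · intro x hx
      rw [Finset.mem_image] at hx
      obtain ⟨p, hp, rfl⟩ := hx
      exact hF p hp
  calc invCount (π * s) = S1.card := rfl
    _ = (S1.image fun p => (s p.1, s p.2)).card := hcard
    _ < S2.card := Finset.card_lt_card hsub
    _ = invCount π := rfl

lemma exists_descent {π : Perm (Fin n)} (h : π ≠ 1) :
    ∃ i, ∃ hi : i + 1 < n, (π ⟨i + 1, hi⟩ : ℕ) < (π ⟨i, Nat.lt_of_succ_lt hi⟩ : ℕ) := by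
  by_contra hc
  push_neg at hc
  apply h
  rcases n with - | m
  · exact Subsingleton.elim _ _
  have hmono : StrictMono π := by
    rw [Fin.strictMono_iff_lt_succ]
    intro i
    have hi : (i : ℕ) + 1 < m + 1 := by omega
    have hle := hc (i : ℕ) hi
    have hne : (π ⟨(i : ℕ), Nat.lt_of_succ_lt hi⟩ : ℕ) ≠ (π ⟨(i : ℕ) + 1, hi⟩ : ℕ) := by
      intro hcc
      have := π.injective (Fin.ext hcc)
      simp only [Fin.mk.injEq] at this
      omega
    have hcast : i.castSucc = (⟨(i : ℕ), Nat.lt_of_succ_lt hi⟩ : Fin (m + 1)) := rfl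
    have hsucc : i.succ = (⟨(i : ℕ) + 1, hi⟩ : Fin (m + 1)) := rfl
    rw [hcast, hsucc, Fin.lt_def]
    exact lt_of_le_of_ne hle hne
  have hrange : Set.range (π : Fin (m + 1) → Fin (m + 1)) =
      Set.range (id : Fin (m + 1) → Fin (m + 1)) := by
    rw [Set.range_id]
    exact Set.range_eq_univ.2 π.surjective
  have hfun := (hmono.range_inj strictMono_id).1 hrange
  exact Equiv.ext fun x => by
    rw [show π x = (π : Fin (m + 1) → Fin (m + 1)) x from rfl, hfun]; rfl

/-- Permutations with equal descent sets are connected by type-1 steps. -/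
lemma chain_of_des_eq : ∀ (m : ℕ) (σ τ : Perm (Fin n)), invCount (τ * σ⁻¹) = m →
    Des n σ = Des n τ → ReflTransGen (PStep n) σ τ := by
  intro m
  induction m using Nat.strong_induction_on with
  | _ m IH =>
    intro σ τ hm hdes
    by_cases hst : σ = τ
    · exact hst ▸ ReflTransGen.refl
    have hρ : τ * σ⁻¹ ≠ 1 := by
      intro hcc
      exact hst (by rw [← one_mul σ, ← hcc, mul_assoc, inv_mul_cancel, mul_one])
    obtain ⟨i, hi, hdesc⟩ := exists_descent hρ
    have hin : i < n := by omega
    -- abbreviations for the positions of the values i and i+1 under σ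
    have hpi : pval n σ⁻¹ i < n := pval_lt_n σ⁻¹ hin
    have hpi1 : pval n σ⁻¹ (i + 1) < n := pval_lt_n σ⁻¹ hi
    have hvv : pval n σ (pval n σ⁻¹ i) = i := pval_inv_pval σ hin
    have hvv1 : pval n σ (pval n σ⁻¹ (i + 1)) = i + 1 := pval_inv_pval σ hi
    have hρval : ∀ (v : ℕ) (hv : v < n),
        ((τ * σ⁻¹) ⟨v, hv⟩ : ℕ) = pval n τ (pval n σ⁻¹ v) := by
      intro v hv
      have h1 : pval n σ⁻¹ v < n := pval_lt_n σ⁻¹ hv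
      have h2 : (⟨pval n σ⁻¹ v, h1⟩ : Fin n) = σ⁻¹ ⟨v, hv⟩ := Fin.ext (pval_def σ⁻¹ hv)
      rw [pval_def τ h1, h2]
      rfl
    have hdesc' : pval n τ (pval n σ⁻¹ (i + 1)) < pval n τ (pval n σ⁻¹ i) := by
      rw [← hρval i hin, ← hρval (i + 1) hi]
      exact hdesc
    have hne : pval n σ⁻¹ i ≠ pval n σ⁻¹ (i + 1) := by
      intro hcc
      rw [hcc, hvv1] at hvv
      omega
    have hfar : 1 < Nat.dist (pval n σ⁻¹ i) (pval n σ⁻¹ (i + 1)) := by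
      by_contra hcc
      have hd1 : pval n σ⁻¹ (i + 1) = pval n σ⁻¹ i + 1 ∨
          pval n σ⁻¹ i = pval n σ⁻¹ (i + 1) + 1 := by
        unfold Nat.dist at hcc
        omega
      rcases hd1 with hd1 | hd1
      · -- ascent at position p := σ⁻¹ i in σ, so also in τ: contradiction
        set p := pval n σ⁻¹ i with hp
        have hnd : p ∉ Des n σ := by
          rw [mem_Des]
          rintro ⟨-, hlt⟩
          rw [← hd1] at hlt
          rw [hvv, hvv1] at hlt
          omega
        rw [hdes] at hnd
        rw [mem_Des] at hnd
        push_neg at hnd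
        have hle := hnd (by omega)
        rw [← hd1] at hle
        omega
      · -- descent at position q := σ⁻¹ (i+1) in σ, so also in τ: contradiction
        set q := pval n σ⁻¹ (i + 1) with hq
        have hnd : q ∈ Des n σ := by
          rw [mem_Des]
          constructor
          · omega
          · rw [← hd1, hvv, hvv1]
            omega
        rw [hdes] at hnd
        rw [mem_Des] at hnd
        rw [← hd1] at hnd
        omega
    set σ' := sT n i hi * σ with hσ'
    have hstep : PStep n σ σ' := ⟨i, hi, rfl, Or.inl hfar⟩
    have hdes' : Des n σ' = Des n σ := Des_eq_of_cmp (cmp_of_far hi hfar)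
    have hmeas : invCount (τ * σ'⁻¹) < m := by
      have hexp : τ * σ'⁻¹ = (τ * σ⁻¹) * Equiv.swap ⟨i, Nat.lt_of_succ_lt hi⟩ ⟨i + 1, hi⟩ := by
        rw [hσ']
        unfold sT
        rw [mul_inv_rev, Equiv.swap_inv, ← mul_assoc]
      rw [hexp, ← hm]
      exact invCount_swap_lt rfl hdesc
    exact ReflTransGen.head hstep (IH _ hmeas σ' τ rfl (hdes'.trans hdes))

/-- `PStep` is symmetric. -/
lemma pstep_symm : Symmetric (PStep n) := by
  rintro σ τ ⟨i, hi, hτ, hcond⟩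
  refine ⟨i, hi, by rw [hτ, sT_mul_sT_mul], ?_⟩
  rcases hcond with hfar | ⟨hi0, hne⟩
  · left
    have hin : i < n := by omega
    have hpi : pval n σ⁻¹ i < n := pval_lt_n σ⁻¹ hin
    have hpi1 : pval n σ⁻¹ (i + 1) < n := pval_lt_n σ⁻¹ hi
    have hvv : pval n σ (pval n σ⁻¹ i) = i := pval_inv_pval σ hin
    have hvv1 : pval n σ (pval n σ⁻¹ (i + 1)) = i + 1 := pval_inv_pval σ hi
    have hτv : ∀ m, m < n → pval n τ m = svalN i (pval n σ m) := by
      intro m hm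
      rw [hτ]
      exact pval_sT_mul σ hi hm
    have hτ1 : pval n τ (pval n σ⁻¹ (i + 1)) = i := by
      rw [hτv _ hpi1, hvv1]
      unfold svalN
      rw [if_neg (by omega), if_pos rfl]
    have hτ2 : pval n τ (pval n σ⁻¹ i) = i + 1 := by
      rw [hτv _ hpi, hvv]
      unfold svalN
      rw [if_pos rfl]
    have e1 : pval n τ⁻¹ i = pval n σ⁻¹ (i + 1) := by
      by_contra hc
      exact pval_ne_of_pos_ne τ hpi1 hin hc hτ1
    have e2 : pval n τ⁻¹ (i + 1) = pval n σ⁻¹ i := by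
      by_contra hc
      exact pval_ne_of_pos_ne τ hpi hi hc hτ2
    rw [e1, e2, Nat.dist_comm]
    exact hfar
  · subst hi0
    right
    refine ⟨rfl, ?_⟩
    intro hset
    apply hne
    rw [pair_eq_01] at hset ⊢
    have h0n : (0 : ℕ) < n := by omega
    have h1n : (1 : ℕ) < n := hi
    have e0 : pval n τ 0 = svalN 0 (pval n σ 0) := by rw [hτ]; exact pval_sT_mul σ hi h0n
    have e1 : pval n τ 1 = svalN 0 (pval n σ 1) := by rw [hτ]; exact pval_sT_mul σ hi h1n
    unfold svalN at e0 e1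
    rcases hset with ⟨ha, hb⟩ | ⟨ha, hb⟩ <;>
      · rw [ha] at e0; rw [hb] at e1
        split_ifs at e0 e1 <;> omega

/-- Chains preserve the exterior peak set. -/
lemma chain_epeak {σ τ : Perm (Fin n)} (h : ReflTransGen (PStep n) σ τ) :
    EPeak n σ = EPeak n τ := by
  induction h with
  | refl => rfl
  | tail _ hstep ih => exact ih.trans (step_epeak hstep)

/-! ### Constructing permutations with a given descent set -/

/-- Auxiliary walk function realizing descent set `D`. -/
def gD (n : ℕ) (D : Finset ℕ) : ℕ → ℤ
  | 0 => 0
  | k + 1 => if k ∈ D then gD n D k - 1 else gD n D k + n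

lemma gD_ge (D : Finset ℕ) : ∀ k : ℕ, -(k : ℤ) ≤ gD n D k := by
  intro k
  induction k with
  | zero => simp [gD]
  | succ k ih =>
    show -((k : ℤ) + 1) ≤ gD n D (k + 1)
    unfold gD
    split_ifs <;> push_cast <;> omega

lemma gD_formula (D : Finset ℕ) (k : ℕ) :
    gD n D k = ((n : ℤ) + 1) * (((Finset.range k).filter fun j => j ∉ D).card : ℤ) - k := by
  induction k with
  | zero => simp [gD]
  | succ k ih =>
    unfold gD
    rw [Finset.range_add_one, Finset.filter_insert]
    by_cases h : k ∈ D
    · rw [if_pos h, if_neg (by simp [h]), ih]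
      push_cast
      ring
    · rw [if_neg h, if_pos (by simp [h])]
      rw [Finset.card_insert_of_notMem (by simp), ih]
      push_cast
      ring

lemma gD_inj (D : Finset ℕ) {j k : ℕ} (hjk : j < k) (hk : k ≤ n) : gD n D j ≠ gD n D k := by
  intro hc
  rw [gD_formula, gD_formula] at hc
  set cj := ((Finset.range j).filter fun x => x ∉ D).card with hcj
  set ck := ((Finset.range k).filter fun x => x ∉ D).card with hck
  have hmono : cj ≤ ck :=
    Finset.card_le_card (Finset.filter_subset_filter _ (Finset.range_subset_range.2 hjk.le))
  have heq : ((n : ℤ) + 1) * ((ck : ℤ) - cj) = (k : ℤ) - j := by linarith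
  have hd : 1 ≤ (ck : ℤ) - cj := by
    rcases lt_or_eq_of_le hmono with h | h
    · exact_mod_cast by omega
    · exfalso
      rw [h] at heq
      simp at heq
      omega
  have : (n : ℤ) + 1 ≤ ((n : ℤ) + 1) * ((ck : ℤ) - cj) :=
    le_mul_of_one_le_right (by positivity) hd
  rw [heq] at this
  have h1 : (k : ℤ) ≤ n := by exact_mod_cast hk
  have h2 : (0 : ℤ) ≤ j := by positivity
  linarith

lemma gD_lt_of_mem (D : Finset ℕ) {k : ℕ} (h : k ∈ D) : gD n D (k + 1) < gD n D k := by
  show (if k ∈ D then gD n D k - 1 else gD n D k + n) < gD n D k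
  rw [if_pos h]
  omega

lemma gD_gt_of_not_mem (D : Finset ℕ) {k : ℕ} (h : k ∉ D) (hn : 1 ≤ n) :
    gD n D k < gD n D (k + 1) := by
  show gD n D k < (if k ∈ D then gD n D k - 1 else gD n D k + n)
  rw [if_neg h]
  have : (1 : ℤ) ≤ n := by exact_mod_cast hn
  omega

/-- There exists a permutation with descent set `D` and values `1, 0` at
positions `e, e+1`, for a run tail `e`. -/
lemma exists_perm_des (hn : 2 ≤ n) (D : Finset ℕ) (hD : ∀ j ∈ D, j + 1 < n) (e : ℕ)
    (he : e ∈ D) (he0 : e ≠ 0) (he1 : e - 1 ∈ D) (he2 : e + 1 ∉ D) :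
    ∃ σ' : Perm (Fin n), Des n σ' = D ∧ pval n σ' e = 1 ∧ pval n σ' (e + 1) = 0 := by
  classical
  have hen : e + 1 < n := hD e he
  have hen0 : e < n := by omega
  -- the twisted walk function
  set h : Fin n → ℤ := fun j =>
    if (j : ℕ) = e then -(n : ℤ) - 1 else if (j : ℕ) = e + 1 then -(n : ℤ) - 2 else gD n D j
    with hh
  have hgen : ∀ j : Fin n, (j : ℕ) ≠ e → (j : ℕ) ≠ e + 1 → h j = gD n D j := by
    intro j h1 h2
    rw [hh]
    simp only [if_neg h1, if_neg h2]
  have hgenbd : ∀ j : Fin n, (j : ℕ) ≠ e → (j : ℕ) ≠ e + 1 → -(n : ℤ) < h j := by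
    intro j h1 h2
    rw [hgen j h1 h2]
    have := gD_ge (n := n) D (j : ℕ)
    have hj : (j : ℕ) < n := j.isLt
    have : ((j : ℕ) : ℤ) < n := by exact_mod_cast hj
    omega
  have hHe : h ⟨e, hen0⟩ = -(n : ℤ) - 1 := by rw [hh]; simp
  have hHe1 : h ⟨e + 1, hen⟩ = -(n : ℤ) - 2 := by
    rw [hh]
    simp
  have hcases : ∀ x : Fin n, ((x : ℕ) = e ∧ h x = -(n : ℤ) - 1) ∨
      ((x : ℕ) = e + 1 ∧ h x = -(n : ℤ) - 2) ∨
      ((x : ℕ) ≠ e ∧ (x : ℕ) ≠ e + 1 ∧ h x = gD n D (x : ℕ) ∧ -(n : ℤ) < h x) := by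
    intro x
    by_cases h1 : (x : ℕ) = e
    · exact Or.inl ⟨h1, by rw [hh]; simp only [if_pos h1]⟩
    · by_cases h2 : (x : ℕ) = e + 1
      · exact Or.inr (Or.inl ⟨h2, by rw [hh]; simp only [if_neg h1, if_pos h2]⟩)
      · exact Or.inr (Or.inr ⟨h1, h2, hgen x h1 h2, hgenbd x h1 h2⟩)
  have hinj : Function.Injective h := by
    intro j k hjk
    by_contra hne
    have hne' : (j : ℕ) ≠ (k : ℕ) := fun hc => hne (Fin.ext hc)
    rcases hcases j with ⟨ja, jb⟩ | ⟨ja, jb⟩ | ⟨ja, jb, jc, jd⟩ <;>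
      rcases hcases k with ⟨ka, kb⟩ | ⟨ka, kb⟩ | ⟨ka, kb, kc, kd⟩ <;> try omega
    -- generic vs generic
    rw [jc, kc] at hjk
    rcases Nat.lt_or_ge (j : ℕ) (k : ℕ) with hlt | hge
    · exact gD_inj D hlt (le_of_lt k.isLt) hjk
    · exact gD_inj D (by omega) (le_of_lt j.isLt) hjk.symm
  set H : ℕ → ℤ := fun m => if hm : m < n then h ⟨m, hm⟩ else 0 with hH0
  have hH : ∀ (m : ℕ) (hm : m < n), H m = h ⟨m, hm⟩ := fun m hm => dif_pos hm
  have hHe' : H e = -(n : ℤ) - 1 := by rw [hH e (by omega)]; exact hHe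
  have hHe1' : H (e + 1) = -(n : ℤ) - 2 := by rw [hH (e + 1) hen]; exact hHe1
  have hHgen : ∀ m : ℕ, m < n → m ≠ e → m ≠ e + 1 → H m = gD n D m ∧ -(n : ℤ) < H m := by
    intro m hm h1 h2
    rw [hH m hm]
    exact ⟨hgen ⟨m, hm⟩ h1 h2, hgenbd ⟨m, hm⟩ h1 h2⟩
  have hcmp : ∀ k : ℕ, k + 1 < n → (k ∈ D ↔ H (k + 1) < H k) := by
    intro k hk
    by_cases h1 : k = e
    · subst h1
      rw [hHe', hHe1']
      constructor
      · intro _; omega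
      · intro _; exact he
    · by_cases h2 : k + 1 = e
      · have hb := hHgen k (by omega) h1 (by omega)
        have hke : H (k + 1) = -(n : ℤ) - 1 := by rw [h2]; exact hHe'
        constructor
        · intro _; omega
        · rintro -
          have hk1 : k = e - 1 := by omega
          rw [hk1]; exact he1
      · by_cases h3 : k = e + 1
        · have hke : H k = -(n : ℤ) - 2 := by rw [h3]; exact hHe1'
          have hb1 := hHgen (k + 1) hk (by omega) (by omega)
          constructor
          · intro hc
            exfalso
            rw [h3] at hc
            exact he2 hc
          · intro hc
            exfalso
            omega
        · have hbk := hHgen k (by omega) h1 h3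
          have hbk1 := hHgen (k + 1) hk h2 (by omega)
          rw [hbk.1, hbk1.1]
          constructor
          · exact fun hc => gD_lt_of_mem D hc
          · intro hc
            by_contra hcc
            have := gD_gt_of_not_mem (n := n) D hcc (by omega)
            omega
  -- standardization
  set f : Fin n → Fin n := fun k =>
    ⟨((Finset.univ : Finset (Fin n)).filter fun j => h j < h k).card, by
      have hsub : ((Finset.univ : Finset (Fin n)).filter fun j => h j < h k) ⊆
          Finset.univ.erase k := by
        intro x hx
        rw [Finset.mem_filter] at hx
        rw [Finset.mem_erase]
        exact ⟨fun hc => by rw [hc] at hx; exact lt_irrefl _ hx.2, Finset.mem_univ _⟩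
      have := Finset.card_le_card hsub
      rw [Finset.card_erase_of_mem (Finset.mem_univ _), Finset.card_univ, Fintype.card_fin] at this
      omega⟩ with hf
  have hmono : ∀ j k : Fin n, h j < h k → f j < f k := by
    intro j k hjk
    rw [hf, Fin.lt_def]
    simp only
    apply Finset.card_lt_card
    rw [Finset.ssubset_iff_of_subset]
    · exact ⟨j, by rw [Finset.mem_filter]; exact ⟨Finset.mem_univ _, hjk⟩,
        by rw [Finset.mem_filter]; rintro ⟨-, hc⟩; exact lt_irrefl _ hc⟩
    · intro x hx
      rw [Finset.mem_filter] at hx ⊢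
      exact ⟨Finset.mem_univ _, hx.2.trans hjk⟩
  have hmono' : ∀ j k : Fin n, f j < f k ↔ h j < h k := by
    intro j k
    constructor
    · intro hc
      rcases lt_trichotomy (h j) (h k) with h' | h' | h'
      · exact h'
      · exfalso
        rw [hinj (a₁ := j) (a₂ := k) h'] at hc
        exact lt_irrefl _ hc
      · exact absurd (hmono _ _ h') (by omega)
    · exact hmono j k
  have hfinj : Function.Injective f := by
    intro j k hjk
    by_contra hne
    rcases lt_trichotomy (h j) (h k) with h' | h' | h'
    · have := hmono _ _ h'
      rw [hjk] at this
      exact lt_irrefl _ this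
    · exact hne (hinj h')
    · have := hmono _ _ h'
      rw [hjk] at this
      exact lt_irrefl _ this
  set σ' : Perm (Fin n) := Equiv.ofBijective f (Finite.injective_iff_bijective.1 hfinj)
    with hσ'
  have hσval : ∀ k : Fin n, σ' k = f k := fun k => rfl
  have hpval : ∀ k : ℕ, ∀ hk : k < n, pval n σ' k = ((f ⟨k, hk⟩ : Fin n) : ℕ) := by
    intro k hk
    rw [pval_def σ' hk, hσval]
  refine ⟨σ', ?_, ?_, ?_⟩
  · ext i
    rw [mem_Des]
    constructor
    · rintro ⟨h1, h2⟩
      rw [hpval i (by omega), hpval (i + 1) h1] at h2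
      have hflt : f ⟨i + 1, h1⟩ < f ⟨i, by omega⟩ := Fin.lt_def.2 h2
      rw [hmono'] at hflt
      have hHlt : H (i + 1) < H i := by
        rw [hH (i + 1) h1, hH i (by omega)]
        exact hflt
      exact (hcmp i h1).2 hHlt
    · intro hi
      have h1 : i + 1 < n := hD i hi
      refine ⟨h1, ?_⟩
      rw [hpval i (by omega), hpval (i + 1) h1]
      have hHlt := (hcmp i h1).1 hi
      have hhlt : h ⟨i + 1, h1⟩ < h ⟨i, by omega⟩ := by
        rw [← hH (i + 1) h1, ← hH i (by omega)]
        exact hHlt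
      exact Fin.lt_def.1 (hmono _ _ hhlt)
  · -- value at e is 1
    rw [hpval e hen0]
    have hone : ((Finset.univ : Finset (Fin n)).filter fun j => h j < h ⟨e, hen0⟩) =
        {⟨e + 1, hen⟩} := by
      ext x
      rw [Finset.mem_filter, Finset.mem_singleton]
      constructor
      · rintro ⟨-, hx⟩
        rw [hHe] at hx
        by_contra hc
        have hc' : (x : ℕ) ≠ e + 1 := fun hcc => hc (Fin.ext hcc)
        rcases hcases x with ⟨ha, hb⟩ | ⟨ha, hb⟩ | ⟨-, -, -, hb⟩ <;> omega
      · rintro rfl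
        refine ⟨Finset.mem_univ _, ?_⟩
        calc h (⟨e + 1, hen⟩ : Fin n) = -(n : ℤ) - 2 := hHe1
          _ < -(n : ℤ) - 1 := by omega
          _ = h ⟨e, hen0⟩ := hHe.symm
    rw [hf]
    simp only
    rw [hone, Finset.card_singleton]
  · -- value at e+1 is 0
    rw [hpval (e + 1) hen]
    have hempty : ((Finset.univ : Finset (Fin n)).filter fun j => h j < h ⟨e + 1, hen⟩) = ∅ := by
      rw [Finset.eq_empty_iff_forall_notMem]
      intro x hx
      rw [Finset.mem_filter] at hx
      obtain ⟨-, hx⟩ := hx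
      rw [hHe1] at hx
      rcases hcases x with ⟨ha, hb⟩ | ⟨ha, hb⟩ | ⟨-, -, -, hb⟩ <;> omega
    rw [hf]
    simp only
    rw [hempty, Finset.card_empty]

lemma epeak_eq_des_filter (σ : Perm (Fin n)) :
    EPeak n σ = (Des n σ).filter fun i => i = 0 ∨ i - 1 ∉ Des n σ := by
  classical
  ext i
  rw [mem_EPeak, Finset.mem_filter, mem_Des]
  constructor
  · rintro ⟨h1, h2, h3⟩
    refine ⟨⟨h1, h3⟩, ?_⟩
    rcases h2 with h2 | h2
    · exact Or.inl h2
    · right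
      rw [mem_Des]
      rintro ⟨h4, h5⟩
      rcases Nat.eq_zero_or_pos i with h0 | h0
      · subst h0
        simp at h2
      · have hi : i - 1 + 1 = i := by omega
        rw [hi] at h5
        omega
  · rintro ⟨⟨h1, h3⟩, h2⟩
    refine ⟨h1, ?_, h3⟩
    rcases h2 with h2 | h2
    · exact Or.inl h2
    · rcases Nat.eq_zero_or_pos i with h0 | h0
      · exact Or.inl h0
      right
      rw [mem_Des] at h2
      push_neg at h2
      have h4 : i - 1 + 1 < n := by omega
      have h5 := h2 h4
      have hi : i - 1 + 1 = i := by omega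
      rw [hi] at h5
      have hne : pval n σ (i - 1) ≠ pval n σ i := pval_inj σ (by omega) (by omega) (by omega)
      omega

lemma des_card_reduce {σ : Perm (Fin n)} (hne : Des n σ ≠ EPeak n σ) :
    ∃ τ' : Perm (Fin n), ReflTransGen (PStep n) σ τ' ∧ (Des n τ').card < (Des n σ).card := by
  classical
  set D := Des n σ with hD0
  have hfilter : EPeak n σ = D.filter fun i => i = 0 ∨ i - 1 ∉ D := epeak_eq_des_filter σ
  have hSne : (D.filter fun j => j ≠ 0 ∧ j - 1 ∈ D).Nonempty := by
    rw [Finset.filter_nonempty_iff]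
    by_contra hc
    push_neg at hc
    apply hne
    rw [hfilter]
    symm
    rw [Finset.filter_eq_self]
    intro j hj
    rcases Nat.eq_zero_or_pos j with h0 | h0
    · exact Or.inl h0
    · exact Or.inr (hc j hj (by omega))
  set e := (D.filter fun j => j ≠ 0 ∧ j - 1 ∈ D).max' hSne with he0
  have heS : e ∈ D.filter fun j => j ≠ 0 ∧ j - 1 ∈ D := Finset.max'_mem _ _
  rw [Finset.mem_filter] at heS
  obtain ⟨heD, hne0, he1⟩ := heS
  have he2 : e + 1 ∉ D := by
    intro hmem
    have hmem2 : e + 1 ∈ D.filter fun j => j ≠ 0 ∧ j - 1 ∈ D := by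
      rw [Finset.mem_filter]
      refine ⟨hmem, by omega, ?_⟩
      have : e + 1 - 1 = e := by omega
      rw [this]
      exact heD
    have := Finset.le_max' _ _ hmem2
    omega
  have hD : ∀ j ∈ D, j + 1 < n := fun j hj => (mem_Des.1 hj).1
  have hn2 : 2 ≤ n := by
    have := hD e heD
    omega
  obtain ⟨σ', hdes', hv1, hv0⟩ := exists_perm_des hn2 D hD e heD hne0 he1 he2
  have hen : e + 1 < n := hD e heD
  have hchain1 : ReflTransGen (PStep n) σ σ' :=
    chain_of_des_eq _ σ σ' rfl (by rw [hdes', hD0])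
  have h01 : 0 + 1 < n := by omega
  have hpos1 : pval n σ'⁻¹ 1 = e := by
    by_contra hc
    exact pval_ne_of_pos_ne σ' (by omega) (by omega) hc hv1
  have hpos0 : pval n σ'⁻¹ 0 = e + 1 := by
    by_contra hc
    exact pval_ne_of_pos_ne σ' hen (by omega) hc hv0
  have hne00 : pval n σ' 0 ≠ 0 := pval_ne_of_pos_ne σ' (by omega) (by omega) (by omega)
  have hne01 : pval n σ' 0 ≠ 1 := pval_ne_of_pos_ne σ' (by omega) (by omega) (by omega)
  have hset : ({pval n σ' 0, pval n σ' 1} : Set ℕ) ≠ {0, 1} := by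
    intro hset0
    rw [pair_eq_01] at hset0
    rcases hset0 with ⟨ha, -⟩ | ⟨ha, -⟩
    · exact hne00 ha
    · exact hne01 ha
  set τ' := sT n 0 h01 * σ' with hτ'
  have hstep : PStep n σ' τ' := ⟨0, h01, rfl, Or.inr ⟨rfl, hset⟩⟩
  have hτval : ∀ m, m < n → pval n τ' m = svalN 0 (pval n σ' m) := fun m hm =>
    pval_sT_mul σ' h01 hm
  have hfixval : ∀ m, m < n → m ≠ e → m ≠ e + 1 →
      2 ≤ pval n σ' m ∧ pval n τ' m = pval n σ' m := by
    intro m hm hma hmb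
    have hne0' : pval n σ' m ≠ 0 := by rw [← hv0]; exact pval_inj σ' hm hen hmb
    have hne1' : pval n σ' m ≠ 1 := by rw [← hv1]; exact pval_inj σ' hm (by omega) hma
    refine ⟨by omega, ?_⟩
    rw [hτval m hm]
    unfold svalN
    rw [if_neg (by omega), if_neg (by omega)]
  have hτe : pval n τ' e = 0 := by rw [hτval e (by omega), hv1]; rfl
  have hτe1 : pval n τ' (e + 1) = 1 := by rw [hτval (e + 1) hen, hv0]; rfl
  have hdesτ : Des n τ' = D.erase e := by
    ext i
    rw [mem_Des, Finset.mem_erase]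
    constructor
    · rintro ⟨h1, h2⟩
      by_cases hie : i = e
      · exfalso
        subst hie
        rw [hτe, hτe1] at h2
        omega
      · refine ⟨hie, ?_⟩
        rw [← hdes', mem_Des]
        refine ⟨h1, ?_⟩
        by_cases hie1 : i + 1 = e
        · -- i = e - 1 : both sides are descents
          have hfa := hfixval i (by omega) (by omega) (by omega)
          have hfb : pval n σ' (i + 1) = 1 := by rw [hie1]; exact hv1
          omega
        · by_cases hie2 : i = e + 1
          · exfalso
            have hfa := hfixval (i + 1) h1 (by omega) (by omega)
            have hfb : pval n τ' i = 1 := by rw [hie2]; exact hτe1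
            omega
          · have hfa := hfixval i (by omega) hie hie2
            have hfb := hfixval (i + 1) h1 hie1 (by omega)
            omega
    · rintro ⟨hie, hiD⟩
      have hiD' := hiD
      rw [← hdes', mem_Des] at hiD'
      obtain ⟨h1, h2⟩ := hiD'
      refine ⟨h1, ?_⟩
      by_cases hie1 : i + 1 = e
      · have hfa := hfixval i (by omega) (by omega) (by omega)
        have hfb : pval n τ' (i + 1) = 0 := by rw [hie1]; exact hτe
        omega
      · by_cases hie2 : i = e + 1
        · exfalso
          apply he2
          rw [← hie2]
          exact hiD
        · have hfa := hfixval i (by omega) hie hie2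
          have hfb := hfixval (i + 1) h1 hie1 (by omega)
          omega
  refine ⟨τ', hchain1.tail hstep, ?_⟩
  rw [hdesτ]
  exact Finset.card_erase_lt_of_mem heD

lemma reduce : ∀ (m : ℕ) (σ : Perm (Fin n)), (Des n σ).card = m →
    ∃ σ₀, ReflTransGen (PStep n) σ σ₀ ∧ Des n σ₀ = EPeak n σ₀ := by
  intro m
  induction m using Nat.strong_induction_on with
  | _ m IH =>
    intro σ hm
    by_cases hc : Des n σ = EPeak n σ
    · exact ⟨σ, ReflTransGen.refl, hc⟩
    · obtain ⟨τ', hchain, hcard⟩ := des_card_reduce hc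
      obtain ⟨σ₀, hchain2, h0⟩ := IH _ (by omega) τ' rfl
      exact ⟨σ₀, hchain.trans hchain2, h0⟩

end EPC


/-- Two permutations have the same exterior peak set iff they are connected by a
chain of moves `σ ↦ s_i σ` where at each step either `|σ⁻¹(i) - σ⁻¹(i+1)| > 1`, or
`i` is the first position and the first two values of `σ` are not the two smallest
values; in particular the classes are left-connected. -/
theorem ePeak_eq_iff_chain (n : ℕ) (σ τ : Equiv.Perm (Fin n)) :
    EPeak n σ = EPeak n τ ↔ Relation.ReflTransGen (PStep n) σ τ := by
  constructor
  · intro h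
    obtain ⟨σ₀, hc1, hd1⟩ := EPC.reduce _ σ rfl
    obtain ⟨τ₀, hc2, hd2⟩ := EPC.reduce _ τ rfl
    have he1 : EPeak n σ₀ = EPeak n σ := (EPC.chain_epeak hc1).symm
    have he2 : EPeak n τ₀ = EPeak n τ := (EPC.chain_epeak hc2).symm
    have hdes : Des n σ₀ = Des n τ₀ := by rw [hd1, hd2, he1, he2, h]
    have hmid := EPC.chain_of_des_eq _ σ₀ τ₀ rfl hdes
    exact (hc1.trans hmid).trans ((@Relation.ReflTransGen.stdSymm _ (PStep n) ⟨fun _ _ h => EPC.pstep_symm h⟩).symm _ _ hc2)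
  · exact EPC.chain_epeak
end
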